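/- arXiv:0910.5343 — 7 statements merged into one kernel-verified Lean document; each statement's English description precedes it below -/
import Mathlib

section
/- Let x, y ∈ C_ℝ \ {0} be linearly independent. Then δ_C(x + i·y, x) ≤ δ_C(x, y). -/
open Complex

/-- Logarithm on `[0,∞]` with values in `[-∞,∞]`. -/
noncomputable def elog (x : ENNReal) : EReal :=
  if x = 0 then ⊥ else if x = ⊤ then ⊤ else (Real.log x.toReal : EReal)

/-- The complex cone `ℂ*·(C_ℝ + i·C_ℝ) \ {0}` generated by a real cone `Cr`. -/
def complexCone {V : Type*} [AddCommGroup V] [Module ℂ V] (Cr : Set V) : Set V :=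
  {x | x ≠ 0 ∧ ∃ c : ℂ, c ≠ 0 ∧ ∃ u ∈ Cr, ∃ v ∈ Cr, x = c • (u + Complex.I • v)}

/-- `E_C(x,y) = {z ∈ ℂ : z•x − y ∉ C}`. -/
def ECset {V : Type*} [AddCommGroup V] [Module ℂ V] (Cc : Set V) (x y : V) : Set ℂ :=
  {z | z • x - y ∉ Cc}

/-- The projective metric `δ_C(x,y) = log(b/a)` of a complex cone. -/
noncomputable def deltaC {V : Type*} [AddCommGroup V] [Module ℂ V]
    (Cc : Set V) (x y : V) : EReal :=
  elog ((⨆ z ∈ ECset Cc x y, (‖z‖₊ : ENNReal)) / (⨅ z ∈ ECset Cc x y, (‖z‖₊ : ENNReal)))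

/-- The Hilbert metric `h_{C_ℝ}(u,v) = log(β/α)` of a real cone. -/
noncomputable def hilbertMetric {V : Type*} [AddCommGroup V] [Module ℝ V]
    (Cr : Set V) (u v : V) : EReal :=
  elog ((sInf {t : ENNReal | ∃ s : ℝ, 0 < s ∧ t = ENNReal.ofReal s ∧ s • u - v ∈ Cr}) /
        (sSup {t : ENNReal | ∃ s : ℝ, 0 ≤ s ∧ t = ENNReal.ofReal s ∧ v - s • u ∈ Cr}))

/-- The dual cone `C_ℝ'`: complex-linear extensions of the continuous real-linear
functionals on `V_ℝ` that are nonnegative on `C_ℝ`. -/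
noncomputable def dualCone {V : Type*} [NormedAddCommGroup V] [NormedSpace ℂ V]
    (Vr : Submodule ℝ V) (Cr : Set V) : Set (V →L[ℂ] ℂ) :=
  {l | (∀ u ∈ Vr, (l u).im = 0) ∧ ∀ u ∈ Cr, 0 ≤ (l u).re}

section AuxLemmas

open ComplexConjugate

private lemma elog_mono' {a b : ENNReal} (hab : a ≤ b) : elog a ≤ elog b := by
  rcases eq_or_ne a 0 with rfl | ha0
  · simp [elog]
  rcases eq_or_ne b ⊤ with rfl | hbt
  · simp only [elog, if_pos rfl, if_neg (by simp : (⊤:ENNReal) ≠ 0)]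
    split_ifs <;> simp
  have hb0 : b ≠ 0 := fun h => ha0 (le_antisymm (h ▸ hab) (zero_le))
  have hat : a ≠ ⊤ := fun h => hbt (top_le_iff.mp (h ▸ hab))
  simp only [elog, if_neg ha0, if_neg hb0, if_neg hat, if_neg hbt]
  have : Real.log a.toReal ≤ Real.log b.toReal :=
    Real.log_le_log (ENNReal.toReal_pos ha0 hat) (ENNReal.toReal_le_toReal hat hbt |>.mpr hab)
  exact_mod_cast this

private lemma smul_decomp' {V : Type*} [AddCommGroup V] [Module ℂ V]
    (t : ℂ) (f : V) : t • f = t.re • f + Complex.I • (t.im • f) := by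
  have h1 : (t.re : ℝ) • f = (t.re : ℂ) • f := rfl
  have h2 : (t.im : ℝ) • f = (t.im : ℂ) • f := rfl
  rw [h1, h2, smul_smul, ← add_smul]
  congr 1
  rw [mul_comm]
  exact (Complex.re_add_im t).symm

private lemma rot_key (n₁ n₂ P Q : ℝ) (hn₁ : 0 < n₁) (hn₂ : 0 < n₂) (hP : 0 ≤ P)
    (hPQ : P ^ 2 + Q ^ 2 = (n₁ * n₂) ^ 2) : 0 ≤ n₂ * n₁ ^ 2 + n₁ * P - n₁ * Q := by
  have hQ : Q ≤ n₁ * n₂ := by nlinarith [mul_pos hn₁ hn₂, sq_nonneg P]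
  nlinarith [mul_nonneg hn₁.le hP]

private lemma rotationx (ζ₁ ζ₂ : ℂ) (h0 : ζ₁ ≠ 0 ∨ ζ₂ ≠ 0)
    (hK : 0 ≤ (ζ₁ * conj ζ₂).re) :
    ∃ c w₁ w₂ : ℂ, c ≠ 0 ∧ 0 ≤ w₁.re ∧ 0 ≤ w₁.im ∧ 0 ≤ w₂.re ∧ 0 ≤ w₂.im ∧
      ζ₁ = c * w₁ ∧ ζ₂ = c * w₂ := by
  rcases eq_or_ne ζ₁ 0 with rfl | h1
  · exact ⟨ζ₂, 0, 1, h0.resolve_left (by simp), le_refl _, le_refl _, by simp, by simp,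
      by simp, by simp⟩
  rcases eq_or_ne ζ₂ 0 with rfl | h2
  · exact ⟨ζ₁, 1, 0, h1, by simp, by simp, le_refl _, le_refl _, by simp, by simp⟩
  have hn₁ : 0 < ‖ζ₁‖ := norm_pos_iff.mpr h1
  have hn₂ : 0 < ‖ζ₂‖ := norm_pos_iff.mpr h2
  have e2 : Complex.normSq ζ₁ = ‖ζ₁‖ ^ 2 := by
    rw [Complex.normSq_eq_norm_sq]
  have e3 : Complex.normSq ζ₂ = ‖ζ₂‖ ^ 2 := by
    rw [Complex.normSq_eq_norm_sq]
  have hPQ : (ζ₁ * conj ζ₂).re ^ 2 + (ζ₁ * conj ζ₂).im ^ 2 = (‖ζ₁‖ * ‖ζ₂‖) ^ 2 := by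
    have h := Complex.normSq_mul ζ₁ (conj ζ₂)
    rw [Complex.normSq_conj, e2, e3] at h
    have e1 : Complex.normSq (ζ₁ * conj ζ₂)
        = (ζ₁ * conj ζ₂).re ^ 2 + (ζ₁ * conj ζ₂).im ^ 2 := by
      rw [Complex.normSq_apply]; ring
    rw [e1] at h; rw [h]; ring
  set s : ℂ := (‖ζ₂‖ : ℂ) * ζ₁ + (‖ζ₁‖ : ℂ) * ζ₂ with hsdef
  have hcs : conj s = (‖ζ₂‖ : ℂ) * conj ζ₁ + (‖ζ₁‖ : ℂ) * conj ζ₂ := by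
    simp [hsdef, map_add, map_mul, Complex.conj_ofReal]
  have hK₁ : ζ₁ * conj s
      = (‖ζ₂‖ : ℂ) * ((Complex.normSq ζ₁ : ℝ) : ℂ) + (‖ζ₁‖ : ℂ) * (ζ₁ * conj ζ₂) := by
    rw [hcs, ← Complex.mul_conj]; ring
  have hK₂ : ζ₂ * conj s
      = (‖ζ₁‖ : ℂ) * ((Complex.normSq ζ₂ : ℝ) : ℂ) + (‖ζ₂‖ : ℂ) * (ζ₂ * conj ζ₁) := by
    rw [hcs, ← Complex.mul_conj]; ring
  have hconjswap : ζ₂ * conj ζ₁ = conj (ζ₁ * conj ζ₂) := by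
    rw [map_mul, Complex.conj_conj]; ring
  have hK₁re : (ζ₁ * conj s).re = ‖ζ₂‖ * ‖ζ₁‖ ^ 2 + ‖ζ₁‖ * (ζ₁ * conj ζ₂).re := by
    rw [hK₁]; simp [Complex.add_re, Complex.re_ofReal_mul, e2, Complex.ofReal_pow]
    exact Or.inl (by rw [← Complex.ofReal_pow, Complex.ofReal_re])
  have hK₁im : (ζ₁ * conj s).im = ‖ζ₁‖ * (ζ₁ * conj ζ₂).im := by
    rw [hK₁]; simp [Complex.add_im, Complex.im_ofReal_mul]
  have hK₂re : (ζ₂ * conj s).re = ‖ζ₁‖ * ‖ζ₂‖ ^ 2 + ‖ζ₂‖ * (ζ₁ * conj ζ₂).re := by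
    rw [hK₂, hconjswap]; simp [Complex.add_re, Complex.re_ofReal_mul, e3, Complex.ofReal_pow]
    exact Or.inl (by rw [← Complex.ofReal_pow, Complex.ofReal_re])
  have hK₂im : (ζ₂ * conj s).im = -(‖ζ₂‖ * (ζ₁ * conj ζ₂).im) := by
    rw [hK₂, hconjswap]; simp [Complex.add_im, Complex.im_ofReal_mul]; ring
  have hs0 : s ≠ 0 := by
    intro hs
    have h' : (ζ₁ * conj s).re = 0 := by rw [hs]; simp
    rw [hK₁re] at h'
    nlinarith [mul_pos hn₂ (mul_pos hn₁ hn₁), mul_nonneg hn₁.le hK]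
  have hns0 : Complex.normSq s ≠ 0 := by simpa [Complex.normSq_eq_zero] using hs0
  have hnsnn : 0 ≤ (Complex.normSq s)⁻¹ := inv_nonneg.mpr (Complex.normSq_nonneg s)
  have hIne : (1 + Complex.I) ≠ 0 := by
    intro h
    have := congrArg Complex.im h
    simp at this
  have hrec : ∀ ζ : ℂ, ζ = (s * (1 + Complex.I)⁻¹)
      * ((((Complex.normSq s)⁻¹ : ℝ) : ℂ) * (ζ * conj s * (1 + Complex.I))) := by
    intro ζ
    have h1 : ((1:ℂ) + Complex.I)⁻¹ * (1 + Complex.I) = 1 := inv_mul_cancel₀ hIne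
    have h2 : (((Complex.normSq s)⁻¹ : ℝ) : ℂ) * (s * conj s) = 1 := by
      rw [Complex.mul_conj, ← Complex.ofReal_mul, inv_mul_cancel₀ hns0]; simp
    calc ζ = ζ * (((((Complex.normSq s)⁻¹ : ℝ) : ℂ) * (s * conj s))
          * (((1:ℂ) + Complex.I)⁻¹ * (1 + Complex.I))) := by rw [h1, h2]; ring
      _ = _ := by ring
  refine ⟨s * (1 + Complex.I)⁻¹,
    (((Complex.normSq s)⁻¹ : ℝ) : ℂ) * (ζ₁ * conj s * (1 + Complex.I)),
    (((Complex.normSq s)⁻¹ : ℝ) : ℂ) * (ζ₂ * conj s * (1 + Complex.I)),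
    mul_ne_zero hs0 (inv_ne_zero hIne), ?_, ?_, ?_, ?_, hrec ζ₁, hrec ζ₂⟩
  · rw [Complex.re_ofReal_mul]
    refine mul_nonneg hnsnn ?_
    have h' : (ζ₁ * conj s * (1 + Complex.I)).re = (ζ₁ * conj s).re - (ζ₁ * conj s).im := by
      rw [Complex.mul_re]; simp
    rw [h', hK₁re, hK₁im]
    have := rot_key ‖ζ₁‖ ‖ζ₂‖ (ζ₁ * conj ζ₂).re (ζ₁ * conj ζ₂).im hn₁ hn₂ hK hPQ
    linarith
  · rw [Complex.im_ofReal_mul]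
    refine mul_nonneg hnsnn ?_
    have h' : (ζ₁ * conj s * (1 + Complex.I)).im = (ζ₁ * conj s).re + (ζ₁ * conj s).im := by
      rw [Complex.mul_im]; simp
    rw [h', hK₁re, hK₁im]
    have := rot_key ‖ζ₁‖ ‖ζ₂‖ (ζ₁ * conj ζ₂).re (-(ζ₁ * conj ζ₂).im) hn₁ hn₂ hK
      (by linear_combination hPQ)
    linarith
  · rw [Complex.re_ofReal_mul]
    refine mul_nonneg hnsnn ?_
    have h' : (ζ₂ * conj s * (1 + Complex.I)).re = (ζ₂ * conj s).re - (ζ₂ * conj s).im := by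
      rw [Complex.mul_re]; simp
    rw [h', hK₂re, hK₂im]
    have := rot_key ‖ζ₂‖ ‖ζ₁‖ (ζ₁ * conj ζ₂).re (-(ζ₁ * conj ζ₂).im) hn₂ hn₁ hK
      (by linear_combination hPQ)
    linarith
  · rw [Complex.im_ofReal_mul]
    refine mul_nonneg hnsnn ?_
    have h' : (ζ₂ * conj s * (1 + Complex.I)).im = (ζ₂ * conj s).re + (ζ₂ * conj s).im := by
      rw [Complex.mul_im]; simp
    rw [h', hK₂re, hK₂im]
    have := rot_key ‖ζ₂‖ ‖ζ₁‖ (ζ₁ * conj ζ₂).re (ζ₁ * conj ζ₂).im hn₂ hn₁ hK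
      (by linear_combination hPQ)
    linarith

private lemma disk_bound (α β : ℝ) (z : ℂ) (hαβ : α < β)
    (hQ : ((z.re - 1) - α * z.im) * ((z.re - 1) - β * z.im)
        + (z.im + α * z.re) * (z.im + β * z.re) < 0) :
    (Real.sqrt (1 + ((α + β) / 2) ^ 2) - (β - α) / 2) * ‖z‖ < 1 ∧
    1 < (Real.sqrt (1 + ((α + β) / 2) ^ 2) + (β - α) / 2) * ‖z‖ := by
  set d := Real.sqrt (1 + ((α + β) / 2) ^ 2) with hddef
  set t := ‖z‖ with htdef
  have ht0 : 0 ≤ t := norm_nonneg z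
  have ht2 : t ^ 2 = z.re ^ 2 + z.im ^ 2 := by
    rw [htdef, Complex.sq_norm, Complex.normSq_apply]; ring
  have hd2 : d ^ 2 = 1 + ((α + β) / 2) ^ 2 := Real.sq_sqrt (by positivity)
  have hd0 : 0 < d := Real.sqrt_pos.mpr (by positivity)
  have hρ : 0 ≤ (β - α) / 2 := by linarith
  have hsq : (z.re - ((α + β) / 2) * z.im) ^ 2 ≤ (d * t) ^ 2 := by
    nlinarith [sq_nonneg (z.im + ((α + β) / 2) * z.re)]
  have key : z.re - ((α + β) / 2) * z.im ≤ d * t := by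
    nlinarith [hsq, mul_nonneg hd0.le ht0]
  have hid : ((d - (β - α) / 2) * t - 1) * ((d + (β - α) / 2) * t - 1)
      = (((z.re - 1) - α * z.im) * ((z.re - 1) - β * z.im)
        + (z.im + α * z.re) * (z.im + β * z.re))
        - 2 * (d * t - (z.re - ((α + β) / 2) * z.im)) := by
    linear_combination t ^ 2 * hd2 + (1 + α * β) * ht2
  have hfact : ((d - (β - α) / 2) * t - 1) * ((d + (β - α) / 2) * t - 1) < 0 := by
    rw [hid]; linarith
  have h2f : (d - (β - α) / 2) * t - 1 ≤ (d + (β - α) / 2) * t - 1 := by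
    nlinarith [mul_nonneg hρ ht0]
  constructor
  · nlinarith [hfact, h2f]
  · nlinarith [hfact, h2f]

end AuxLemmas

set_option maxHeartbeats 1600000 in
/-- for independent x, y in the real cone, the projective distance from
x + i y to x is at most the projective distance from x to y. -/
theorem deltaC_add_I_smul_le
    {V : Type*} [NormedAddCommGroup V] [NormedSpace ℂ V]
    (Vr : Submodule ℝ V) (hVrClosed : IsClosed (Vr : Set V))
    (hSpan : ∀ x : V, ∃ u ∈ Vr, ∃ v ∈ Vr, x = u + Complex.I • v)
    (hUniq : ∀ u ∈ Vr, ∀ v ∈ Vr, u + Complex.I • v = 0 → u = 0 ∧ v = 0)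
    (Cr : Set V) (hCrSub : Cr ⊆ (Vr : Set V)) (hCrClosed : IsClosed Cr)
    (hCrAdd : ∀ u ∈ Cr, ∀ v ∈ Cr, u + v ∈ Cr)
    (hCrSmul : ∀ t : ℝ, 0 ≤ t → ∀ u ∈ Cr, t • u ∈ Cr)
    (hCrProper : ∀ u ∈ Cr, -u ∈ Cr → u = 0)
    (hCrNontriv : ∃ u ∈ Cr, ∃ v ∈ Cr, LinearIndependent ℝ ![u, v])
    (x y : V) (hx : x ∈ Cr) (hx0 : x ≠ 0) (hy : y ∈ Cr) (hy0 : y ≠ 0)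
    (hind : LinearIndependent ℝ ![x, y]) :
    deltaC (complexCone Cr) (x + Complex.I • y) x ≤ deltaC (complexCone Cr) x y := by
  classical
  have hrs : ∀ (r : ℝ) (f : V), (r : ℂ) • f = r • f := fun r f => rfl
  have hxVr : x ∈ Vr := hCrSub hx
  have hyVr : y ∈ Vr := hCrSub hy
  -- complex-linear independence of x and y
  have hindC : ∀ a b : ℂ, a • x + b • y = 0 → a = 0 ∧ b = 0 := by
    intro a b hab
    rw [smul_decomp' a x, smul_decomp' b y] at hab
    have h' : (a.re • x + b.re • y) + Complex.I • (a.im • x + b.im • y) = 0 := by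
      rw [smul_add]; rw [← hab]; abel
    obtain ⟨h1, h2⟩ := hUniq _ (Vr.add_mem (Vr.smul_mem _ hxVr) (Vr.smul_mem _ hyVr))
      _ (Vr.add_mem (Vr.smul_mem _ hxVr) (Vr.smul_mem _ hyVr)) h'
    obtain ⟨hre1, hre2⟩ := (LinearIndependent.pair_iff.mp hind) _ _ h1
    obtain ⟨him1, him2⟩ := (LinearIndependent.pair_iff.mp hind) _ _ h2
    exact ⟨Complex.ext hre1 him1, Complex.ext hre2 him2⟩
  -- the set A and its supremum α
  set A : Set ℝ := {t : ℝ | 0 ≤ t ∧ y - t • x ∈ Cr} with hAdef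
  have hA0 : (0:ℝ) ∈ A := ⟨le_rfl, by simpa using hy⟩
  have hAclosed : IsClosed A := by
    have : A = Set.Ici (0:ℝ) ∩ (fun t : ℝ => y - t • x) ⁻¹' Cr := by
      ext t; simp [hAdef, Set.mem_Ici, and_comm]
    rw [this]
    exact isClosed_Ici.inter
      (hCrClosed.preimage (continuous_const.sub (continuous_id.smul continuous_const)))
  have hAbdd : BddAbove A := by
    by_contra hbdd
    have hdc : ∀ s t : ℝ, s ∈ A → 0 ≤ t → t ≤ s → t ∈ A := by
      intro s t hs h0 hle
      refine ⟨h0, ?_⟩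
      have he : y - t • x = (y - s • x) + (s - t) • x := by module
      rw [he]
      exact hCrAdd _ hs.2 _ (hCrSmul _ (by linarith) x hx)
    have hall : ∀ n : ℕ, ((n:ℝ) + 1) ∈ A := by
      intro n
      rcases not_bddAbove_iff.mp hbdd ((n:ℝ) + 1) with ⟨t, ht, hlt⟩
      exact hdc t _ ht (by positivity) hlt.le
    have hmem : ∀ n : ℕ, ((n:ℝ) + 1)⁻¹ • y - x ∈ Cr := by
      intro n
      have h1 : (((n:ℝ) + 1)⁻¹) • (y - ((n:ℝ) + 1) • x) ∈ Cr :=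
        hCrSmul _ (by positivity) _ (hall n).2
      have h2 : (((n:ℝ) + 1)⁻¹) • (y - ((n:ℝ) + 1) • x) = ((n:ℝ) + 1)⁻¹ • y - x := by
        rw [smul_sub, smul_smul, inv_mul_cancel₀ (by positivity), one_smul]
      rwa [h2] at h1
    have hlim : Filter.Tendsto (fun n : ℕ => ((n:ℝ) + 1)⁻¹ • y - x)
        Filter.atTop (nhds (-x)) := by
      have h1 : Filter.Tendsto (fun n : ℕ => ((n:ℝ) + 1)⁻¹) Filter.atTop (nhds 0) := by
        simpa [one_div] using tendsto_one_div_add_atTop_nhds_zero_nat (𝕜 := ℝ)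
      have := (h1.smul_const y).sub_const x
      simpa using this
    have : -x ∈ Cr := hCrClosed.mem_of_tendsto hlim (Filter.Eventually.of_forall hmem)
    exact hx0 (hCrProper x hx this)
  set α := sSup A with hαdef
  have hαA : α ∈ A := hAclosed.csSup_mem ⟨0, hA0⟩ hAbdd
  have hα0 : 0 ≤ α := hαA.1
  -- the set T and basic facts
  set T : Set ℝ := {t : ℝ | t • x - y ∈ Cr} with hTdef
  have hTclosed : IsClosed T :=
    hCrClosed.preimage ((continuous_id.smul continuous_const).sub continuous_const)
  have hTlb : ∀ t ∈ T, α ≤ t := by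
    intro t ht
    by_contra hlt
    push_neg at hlt
    have hne : α - t ≠ 0 := by intro h; rw [sub_eq_zero] at h; exact absurd h (ne_of_gt hlt)
    have hsum : (t • x - y) + (y - α • x) = (t - α) • x := by module
    have h1 : (t - α) • x ∈ Cr := by
      rw [← hsum]; exact hCrAdd _ ht _ hαA.2
    have h2 : -x ∈ Cr := by
      have h3 : (α - t)⁻¹ • ((t - α) • x) ∈ Cr :=
        hCrSmul _ (inv_nonneg.mpr (by linarith)) _ h1
      have h4 : (α - t)⁻¹ • ((t - α) • x) = -x := by
        rw [smul_smul, show (t:ℝ) - α = -(α - t) by ring, mul_neg,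
          inv_mul_cancel₀ hne, neg_smul, one_smul]
      rwa [h4] at h3
    exact hx0 (hCrProper x hx h2)
  -- decomposition of elements of the complex cone that lie in Vr
  have hrealchar : ∀ r : V, r ∈ Vr → r ∈ complexCone Cr → r ∈ Cr ∨ -r ∈ Cr := by
    intro r hrVr hr
    obtain ⟨hr0, c, hc0, u, hu, v, hv, heq⟩ := hr
    have hc : c • (u + Complex.I • v)
        = (c.re • u - c.im • v) + Complex.I • (c.im • u + c.re • v) := by
      have h1 : c • u = c.re • u + Complex.I • (c.im • u) := smul_decomp' c u
      have h2 : c • (Complex.I • v) = (c * Complex.I) • v := smul_smul c Complex.I v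
      have h3 : (c * Complex.I) • v = (-(c.im)) • v + Complex.I • (c.re • v) := by
        have h4 := smul_decomp' (c * Complex.I) v
        simpa [Complex.mul_re, Complex.mul_im] using h4
      rw [smul_add, h1, h2, h3, neg_smul, smul_add]
      abel
    rw [hc] at heq
    have hU : c.re • u - c.im • v ∈ Vr :=
      Vr.sub_mem (Vr.smul_mem _ (hCrSub hu)) (Vr.smul_mem _ (hCrSub hv))
    have hV : c.im • u + c.re • v ∈ Vr :=
      Vr.add_mem (Vr.smul_mem _ (hCrSub hu)) (Vr.smul_mem _ (hCrSub hv))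
    have hz : (r - (c.re • u - c.im • v)) + Complex.I • (-(c.im • u + c.re • v)) = 0 := by
      rw [smul_neg, heq]; abel
    obtain ⟨e1, e2⟩ := hUniq _ (Vr.sub_mem hrVr hU) _ (Vr.neg_mem hV) hz
    have hrU : r = c.re • u - c.im • v := by rwa [sub_eq_zero] at e1
    have hV0 : c.im • u + c.re • v = 0 := by rwa [neg_eq_zero] at e2
    rcases eq_or_ne c.im 0 with him | him
    · have hcre : c.re ≠ 0 := by
        intro h; exact hc0 (Complex.ext (by simp [h]) (by simp [him]))
      have hv0 : v = 0 := by
        have h5 : c.re • v = 0 := by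
          have := hV0; rw [him, zero_smul, zero_add] at this; exact this
        exact (smul_eq_zero.mp h5).resolve_left hcre
      rcases le_or_gt 0 c.re with h | h
      · left; rw [hrU, hv0, smul_zero, sub_zero]; exact hCrSmul _ h u hu
      · right; rw [hrU, hv0, smul_zero, sub_zero, ← neg_smul]
        exact hCrSmul _ (by linarith) u hu
    · have hkey : c.im • r = -((c.re ^ 2 + c.im ^ 2) • v) := by
        rw [hrU]
        have h6 : c.im • (c.re • u - c.im • v)
            = c.re • (c.im • u + c.re • v) - (c.re ^ 2 + c.im ^ 2) • v := by module
        rw [h6, hV0, smul_zero, zero_sub]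
      have hr' : r = ((c.im)⁻¹ * (-(c.re ^ 2 + c.im ^ 2))) • v := by
        have h7 : r = (c.im)⁻¹ • (c.im • r) := by
          rw [smul_smul, inv_mul_cancel₀ him, one_smul]
        rw [h7, hkey, ← neg_smul, smul_smul]
      have hKpos : 0 < c.re ^ 2 + c.im ^ 2 := by positivity
      rcases lt_or_gt_of_ne him with h | h
      · left
        rw [hr']
        refine hCrSmul _ ?_ v hv
        have h1 : (c.im)⁻¹ < 0 := inv_lt_zero.mpr h
        nlinarith [mul_pos_of_neg_of_neg h1 (show -(c.re ^ 2 + c.im ^ 2) < 0 by linarith)]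
      · right
        rw [hr', ← neg_smul]
        refine hCrSmul _ ?_ v hv
        have h1 : 0 < (c.im)⁻¹ := inv_pos.mpr h
        nlinarith [mul_pos h1 hKpos]
  -- membership in E₂ for real parameters
  have hE2 : ∀ t : ℝ, α < t → t • x - y ∉ Cr →
      ((t:ℂ) • x - y ∉ complexCone Cr) := by
    intro t hαt hTnot hmem
    rw [hrs] at hmem
    have hVr' : t • x - y ∈ Vr := Vr.sub_mem (Vr.smul_mem t hxVr) hyVr
    rcases hrealchar _ hVr' hmem with h | h
    · exact hTnot h
    · have hA' : t ∈ A := ⟨by linarith, by simpa [neg_sub] using h⟩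
      exact absurd (le_csSup hAbdd hA') (not_le.mpr hαt)
  -- abbreviations for the two deltas
  rw [deltaC, deltaC]
  set S₂ := ⨆ z ∈ ECset (complexCone Cr) x y, (‖z‖₊ : ENNReal) with hS₂def
  set I₂ := ⨅ z ∈ ECset (complexCone Cr) x y, (‖z‖₊ : ENNReal) with hI₂def
  set S₁ := ⨆ z ∈ ECset (complexCone Cr) (x + Complex.I • y) x, (‖z‖₊ : ENNReal) with hS₁def
  set I₁ := ⨅ z ∈ ECset (complexCone Cr) (x + Complex.I • y) x, (‖z‖₊ : ENNReal) with hI₁def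
  have hmemE2 : ∀ t : ℝ, α < t → t • x - y ∉ Cr →
      (t:ℂ) ∈ ECset (complexCone Cr) x y := fun t h1 h2 => hE2 t h1 h2
  have hnormt : ∀ t : ℝ, 0 ≤ t → ((‖(t:ℂ)‖₊ : ENNReal)) = ENNReal.ofReal t := by
    intro t ht
    rw [show ((‖(t:ℂ)‖₊ : ENNReal)) = ENNReal.ofReal ‖(t:ℂ)‖ from (ofReal_norm _).symm, Complex.norm_real, Real.norm_of_nonneg ht]
  -- case: T empty
  rcases Set.eq_empty_or_nonempty T with hTe | hTne
  · -- the right-hand side is ⊤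
    have hnotT : ∀ t : ℝ, t • x - y ∉ Cr := by
      intro t ht
      exact Set.eq_empty_iff_forall_notMem.mp hTe t ht
    have hS₂top : S₂ = ⊤ := by
      by_contra hS
      set M := S₂.toReal with hMdef
      set t := max (α + 1) (M + 1) with htdef
      have ht1 : α < t := lt_of_lt_of_le (by linarith) (le_max_left _ _)
      have htmem : (t:ℂ) ∈ ECset (complexCone Cr) x y := hmemE2 t ht1 (hnotT t)
      have hle : (‖((t:ℝ):ℂ)‖₊ : ENNReal) ≤ S₂ :=
        le_iSup₂ (f := fun z (_ : z ∈ ECset (complexCone Cr) x y) => (‖z‖₊ : ENNReal))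
          ((t:ℝ):ℂ) htmem
      rw [hnormt t (by positivity)] at hle
      have := ENNReal.toReal_mono hS hle
      rw [ENNReal.toReal_ofReal (by positivity)] at this
      have : t ≤ M := this
      have : M + 1 ≤ M := le_trans (le_max_right (α+1) (M+1)) this
      linarith
    have hI₂ne : I₂ ≠ ⊤ := by
      have htmem : ((α+1 : ℝ):ℂ) ∈ ECset (complexCone Cr) x y :=
        hmemE2 (α+1) (by linarith) (hnotT _)
      have hle : I₂ ≤ (‖((α+1:ℝ):ℂ)‖₊ : ENNReal) :=
        iInf₂_le (f := fun z (_ : z ∈ ECset (complexCone Cr) x y) => (‖z‖₊ : ENNReal))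
          ((α+1:ℝ):ℂ) htmem
      rw [hnormt (α+1) (by positivity)] at hle
      exact ne_top_of_le_ne_top ENNReal.ofReal_ne_top hle
    have : S₂ / I₂ = ⊤ := ENNReal.div_eq_top.mpr (Or.inr ⟨hS₂top, hI₂ne⟩)
    rw [this]
    simp [elog]
  -- case: T nonempty; let β be its infimum
  have hTbdd : BddBelow T := ⟨α, fun t ht => hTlb t ht⟩
  set β := sInf T with hβdef
  have hβT : β ∈ T := hTclosed.csInf_mem hTne hTbdd
  have hαβle : α ≤ β := hTlb β hβT
  have hαβne : α ≠ β := by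
    intro h
    have h1 : β • x - y ∈ Cr := hβT
    have h2 : -(β • x - y) ∈ Cr := by
      have h3 : y - α • x ∈ Cr := hαA.2
      rw [h] at h3
      simpa [neg_sub] using h3
    have h4 := hCrProper _ h1 h2
    have h5 : β • x + (-1 : ℝ) • y = 0 := by
      rw [neg_smul, one_smul, ← sub_eq_add_neg]; exact h4
    obtain ⟨-, h6⟩ := (LinearIndependent.pair_iff.mp hind) _ _ h5
    norm_num at h6
  have hαβ : α < β := lt_of_le_of_ne hαβle hαβne
  have hβpos : 0 < β := lt_of_le_of_lt hα0 hαβ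
  have hβnotmem : ∀ t : ℝ, t < β → t • x - y ∉ Cr := by
    intro t htβ ht
    exact absurd (csInf_le hTbdd ht) (not_le.mpr htβ)
  -- case: α = 0, the right-hand side is again ⊤
  rcases eq_or_lt_of_le hα0 with hα0' | hαpos
  · have hI₂0 : I₂ = 0 := by
      by_contra hne
      have hmm : ∀ t : ℝ, 0 < t → t < β → I₂ ≤ ENNReal.ofReal t := by
        intro t h1 h2
        have htmem : (t:ℂ) ∈ ECset (complexCone Cr) x y :=
          hmemE2 t (by linarith [h1]) (hβnotmem t h2)
        have := iInf₂_le (f := fun z (_ : z ∈ ECset (complexCone Cr) x y) =>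
          (‖z‖₊ : ENNReal)) (t:ℂ) htmem
        rwa [hnormt t h1.le] at this
      rcases eq_or_ne I₂ ⊤ with htop | hntop
      · have := hmm (β/2) (by positivity) (by linarith)
        rw [htop] at this
        exact absurd this (by simp [ENNReal.ofReal_ne_top])
      · have hpos : 0 < I₂.toReal := ENNReal.toReal_pos hne hntop
        set t := min (β/2) (I₂.toReal/2) with htdef
        have h1 : 0 < t := lt_min (by positivity) (by positivity)
        have h2 : t < β := lt_of_le_of_lt (min_le_left _ _) (by linarith)
        have h3 := hmm t h1 h2
        have h4 : ENNReal.ofReal t < I₂ := by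
          have h5 : t < I₂.toReal := lt_of_le_of_lt (min_le_right _ _) (by linarith)
          rw [← ENNReal.ofReal_toReal hntop]
          exact ENNReal.ofReal_lt_ofReal_iff_of_nonneg h1.le |>.mpr h5
        exact absurd h3 (not_le.mpr h4)
    have hS₂ne : S₂ ≠ 0 := by
      have htmem : ((β/2 : ℝ):ℂ) ∈ ECset (complexCone Cr) x y :=
        hmemE2 (β/2) (by linarith [hβpos]) (hβnotmem _ (by linarith))
      have hle : (‖((β/2:ℝ):ℂ)‖₊ : ENNReal) ≤ S₂ :=
        le_iSup₂ (f := fun z (_ : z ∈ ECset (complexCone Cr) x y) => (‖z‖₊ : ENNReal))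
          ((β/2:ℝ):ℂ) htmem
      rw [hnormt (β/2) (by positivity)] at hle
      intro h0
      rw [h0] at hle
      have := le_antisymm hle (zero_le)
      rw [ENNReal.ofReal_eq_zero] at this
      linarith
    rw [hI₂0, ENNReal.div_zero hS₂ne]
    simp [elog]
  -- main case: 0 < α < β
  have hβα0 : 0 < β - α := by linarith
  set f₁ : V := (β - α)⁻¹ • (β • x - y) with hf₁def
  set f₂ : V := (β - α)⁻¹ • (y - α • x) with hf₂def
  have hf₁ : f₁ ∈ Cr := hCrSmul _ (inv_nonneg.mpr hβα0.le) _ hβT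
  have hf₂ : f₂ ∈ Cr := hCrSmul _ (inv_nonneg.mpr hβα0.le) _ hαA.2
  have hbane : ((β:ℂ) - (α:ℂ)) ≠ 0 := by
    intro h
    have h2 : (β:ℝ) - α = 0 := by exact_mod_cast congrArg Complex.re h
    linarith
  -- the construction: points with nonnegative quadratic form are in the cone
  have hcons : ∀ z : ℂ, 0 ≤ ((z.re - 1) - α * z.im) * ((z.re - 1) - β * z.im)
      + (z.im + α * z.re) * (z.im + β * z.re) →
      z • (x + Complex.I • y) - x ∈ complexCone Cr := by
    intro z hQ
    set ζ₁ : ℂ := (z - 1) + (α:ℂ) * (Complex.I * z) with hζ₁def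
    set ζ₂ : ℂ := (z - 1) + (β:ℂ) * (Complex.I * z) with hζ₂def
    have hζ₁re : ζ₁.re = (z.re - 1) - α * z.im := by
      simp [hζ₁def, Complex.add_re, Complex.sub_re, Complex.re_ofReal_mul,
        Complex.mul_re, Complex.mul_im]
      ring
    have hζ₁im : ζ₁.im = z.im + α * z.re := by
      simp [hζ₁def, Complex.add_im, Complex.sub_im, Complex.im_ofReal_mul,
        Complex.mul_re, Complex.mul_im]
    have hζ₂re : ζ₂.re = (z.re - 1) - β * z.im := by
      simp [hζ₂def, Complex.add_re, Complex.sub_re, Complex.re_ofReal_mul,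
        Complex.mul_re, Complex.mul_im]
      ring
    have hζ₂im : ζ₂.im = z.im + β * z.re := by
      simp [hζ₂def, Complex.add_im, Complex.sub_im, Complex.im_ofReal_mul,
        Complex.mul_re, Complex.mul_im]
    have hKre : 0 ≤ (ζ₁ * (starRingEnd ℂ) ζ₂).re := by
      rw [Complex.mul_re, Complex.conj_re, Complex.conj_im, hζ₁re, hζ₁im, hζ₂re, hζ₂im]
      nlinarith [hQ]
    have h00 : ζ₁ ≠ 0 ∨ ζ₂ ≠ 0 := by
      by_contra hcon
      push_neg at hcon
      obtain ⟨h1, h2⟩ := hcon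
      have h3 : ((β:ℂ) - (α:ℂ)) * (Complex.I * z) = 0 := by
        rw [hζ₁def] at h1
        rw [hζ₂def] at h2
        linear_combination h2 - h1
      have h4 : Complex.I * z = 0 := by
        rcases mul_eq_zero.mp h3 with h | h
        · exact absurd h hbane
        · exact h
      have hz0 : z = 0 := by
        rcases mul_eq_zero.mp h4 with h | h
        · exact absurd h Complex.I_ne_zero
        · exact h
      rw [hζ₁def, hz0] at h1
      simp at h1
    obtain ⟨c, w₁, w₂, hc0, hw₁re, hw₁im, hw₂re, hw₂im, hc1, hc2⟩ := rotationx ζ₁ ζ₂ h00 hKre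
    have hwid : z • (x + Complex.I • y) - x = (z - 1) • x + (Complex.I * z) • y := by
      module
    refine ⟨?_, c, hc0, w₁.re • f₁ + w₂.re • f₂,
      hCrAdd _ (hCrSmul _ hw₁re _ hf₁) _ (hCrSmul _ hw₂re _ hf₂),
      w₁.im • f₁ + w₂.im • f₂,
      hCrAdd _ (hCrSmul _ hw₁im _ hf₁) _ (hCrSmul _ hw₂im _ hf₂), ?_⟩
    · intro h0
      rw [hwid] at h0
      obtain ⟨ha, hb⟩ := hindC _ _ h0
      rw [sub_eq_zero] at ha
      rw [ha] at hb
      simp at hb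
    · have e1 : (w₁.re • f₁ + w₂.re • f₂) + Complex.I • (w₁.im • f₁ + w₂.im • f₂)
          = w₁ • f₁ + w₂ • f₂ := by
        rw [smul_decomp' w₁ f₁, smul_decomp' w₂ f₂, smul_add]
        abel
      have e2 : c • (w₁ • f₁ + w₂ • f₂) = ζ₁ • f₁ + ζ₂ • f₂ := by
        rw [smul_add, smul_smul, smul_smul, ← hc1, ← hc2]
      rw [e1, e2, hwid, hf₁def, hf₂def]
      simp only [← hrs]
      push_cast
      rw [hζ₁def, hζ₂def]
      match_scalars
      · field_simp
        ring
      · field_simp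
        ring
  -- geometric quantities
  set d := Real.sqrt (1 + ((α + β) / 2) ^ 2) with hddef
  have hd2 : d ^ 2 = 1 + ((α + β) / 2) ^ 2 := Real.sq_sqrt (by positivity)
  have hd0 : 0 < d := Real.sqrt_pos.mpr (by positivity)
  have hdm : (α + β) / 2 ≤ d := by nlinarith [hd2, hd0]
  have hρpos : 0 < (β - α) / 2 := by linarith
  have hdmρ : 0 < d - (β - α) / 2 := by linarith
  have hdpρ : 0 < d + (β - α) / 2 := by linarith
  set U := 1 / (d - (β - α) / 2) with hUdef
  set L := 1 / (d + (β - α) / 2) with hLdef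
  have hLpos : 0 < L := by positivity
  -- bounds on the E-set of the left-hand side
  have hS₁ : S₁ ≤ ENNReal.ofReal U := by
    rw [hS₁def]
    refine iSup₂_le ?_
    intro z hz
    have hQlt : ((z.re - 1) - α * z.im) * ((z.re - 1) - β * z.im)
        + (z.im + α * z.re) * (z.im + β * z.re) < 0 := by
      by_contra hge
      push_neg at hge
      exact hz (hcons z hge)
    obtain ⟨hb1, hb2⟩ := disk_bound α β z hαβ hQlt
    have hzb : ‖z‖ ≤ U := by
      rw [hUdef, le_div_iff₀ hdmρ, mul_comm]
      exact hb1.le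
    rw [show ((‖z‖₊ : ENNReal)) = ENNReal.ofReal ‖z‖ from (ofReal_norm _).symm]
    exact ENNReal.ofReal_le_ofReal hzb
  have hI₁ : ENNReal.ofReal L ≤ I₁ := by
    rw [hI₁def]
    refine le_iInf₂ ?_
    intro z hz
    have hQlt : ((z.re - 1) - α * z.im) * ((z.re - 1) - β * z.im)
        + (z.im + α * z.re) * (z.im + β * z.re) < 0 := by
      by_contra hge
      push_neg at hge
      exact hz (hcons z hge)
    obtain ⟨hb1, hb2⟩ := disk_bound α β z hαβ hQlt
    have hzb : L ≤ ‖z‖ := by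
      rw [hLdef, div_le_iff₀ hdpρ, mul_comm]
      exact hb2.le
    rw [show ((‖z‖₊ : ENNReal)) = ENNReal.ofReal ‖z‖ from (ofReal_norm _).symm]
    exact ENNReal.ofReal_le_ofReal hzb
  -- bounds on the E-set of the right-hand side
  have hS₂ : ENNReal.ofReal β ≤ S₂ := by
    by_contra hcon
    push_neg at hcon
    have hS₂ne : S₂ ≠ ⊤ := hcon.ne_top
    have hMlt : S₂.toReal < β := by
      have := (ENNReal.toReal_lt_toReal hS₂ne ENNReal.ofReal_ne_top).mpr hcon
      rwa [ENNReal.toReal_ofReal hβpos.le] at this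
    have hmaxβ : max α S₂.toReal < β := max_lt hαβ hMlt
    set t := (max α S₂.toReal + β) / 2 with htdef
    have ht1 : α < t := by
      have := le_max_left α S₂.toReal
      rw [htdef]; linarith
    have ht2 : t < β := by rw [htdef]; linarith
    have htmem := hmemE2 t ht1 (hβnotmem t ht2)
    have hle : ENNReal.ofReal t ≤ S₂ := by
      have h := le_iSup₂ (f := fun z (_ : z ∈ ECset (complexCone Cr) x y) =>
        (‖z‖₊ : ENNReal)) ((t:ℝ):ℂ) htmem
      rwa [hnormt t (by linarith)] at h
    have hcontr : t ≤ S₂.toReal := by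
      have h := ENNReal.toReal_mono hS₂ne hle
      rwa [ENNReal.toReal_ofReal (by linarith)] at h
    have := le_max_right α S₂.toReal
    linarith
  have hI₂le : I₂ ≤ ENNReal.ofReal α := by
    by_contra hcon
    push_neg at hcon
    rcases eq_or_ne I₂ ⊤ with htop | hntop
    · set t := (α + β) / 2 with htdef
      have ht1 : α < t := by rw [htdef]; linarith
      have ht2 : t < β := by rw [htdef]; linarith
      have htmem := hmemE2 t ht1 (hβnotmem t ht2)
      have hle : I₂ ≤ ENNReal.ofReal t := by
        have h := iInf₂_le (f := fun z (_ : z ∈ ECset (complexCone Cr) x y) =>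
          (‖z‖₊ : ENNReal)) ((t:ℝ):ℂ) htmem
        rwa [hnormt t (by linarith)] at h
      rw [htop] at hle
      exact ENNReal.ofReal_ne_top (top_le_iff.mp hle)
    · have hlt : α < I₂.toReal := by
        have := (ENNReal.toReal_lt_toReal ENNReal.ofReal_ne_top hntop).mpr hcon
        rwa [ENNReal.toReal_ofReal hα0] at this
      have hmin : α < min β I₂.toReal := lt_min hαβ hlt
      set t := (α + min β I₂.toReal) / 2 with htdef
      have ht1 : α < t := by rw [htdef]; linarith
      have ht2 : t < β := by
        have := min_le_left β I₂.toReal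
        rw [htdef]; linarith
      have ht3 : t < I₂.toReal := by
        have := min_le_right β I₂.toReal
        rw [htdef]; linarith
      have htmem := hmemE2 t ht1 (hβnotmem t ht2)
      have hle : I₂ ≤ ENNReal.ofReal t := by
        have h := iInf₂_le (f := fun z (_ : z ∈ ECset (complexCone Cr) x y) =>
          (‖z‖₊ : ENNReal)) ((t:ℝ):ℂ) htmem
        rwa [hnormt t (by linarith)] at h
      have hcontr : I₂.toReal ≤ t := by
        have h := ENNReal.toReal_mono ENNReal.ofReal_ne_top hle
        rwa [ENNReal.toReal_ofReal (by linarith)] at h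
      linarith
  -- the key real inequality
  have hUL : U / L ≤ β / α := by
    have h1 : U / L = (d + (β - α) / 2) / (d - (β - α) / 2) := by
      rw [hUdef, hLdef, one_div, one_div, div_eq_mul_inv, inv_inv, mul_comm,
        ← div_eq_mul_inv]
    rw [h1, div_le_div_iff₀ hdmρ hαpos]
    nlinarith [mul_nonneg hρpos.le (sub_nonneg.mpr hdm)]
  -- conclusion
  calc elog (S₁ / I₁) ≤ elog (ENNReal.ofReal U / ENNReal.ofReal L) :=
        elog_mono' (ENNReal.div_le_div hS₁ hI₁)
    _ = elog (ENNReal.ofReal (U / L)) := by rw [ENNReal.ofReal_div_of_pos hLpos]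
    _ ≤ elog (ENNReal.ofReal (β / α)) := elog_mono' (ENNReal.ofReal_le_ofReal hUL)
    _ = elog (ENNReal.ofReal β / ENNReal.ofReal α) := by
        rw [ENNReal.ofReal_div_of_pos hαpos]
    _ ≤ elog (S₂ / I₂) := elog_mono' (ENNReal.div_le_div hS₂ hI₂le)
end

section
/- For all x, y ∈ C_ℝ \ {0}, δ_C(x, y) = h_{C_ℝ}(x, y); that is, the inclusion of (C_ℝ \ {0}, h_{C_ℝ}) into (C_ℂ \ {0}, δ_C) is an isometric embedding. -/
open Complex

open Filter
section AuxLemmas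

variable {V : Type*} [NormedAddCommGroup V] [NormedSpace ℂ V]

private lemma key_smul (p q : ℝ) (w1 w2 : V) :
    ((p:ℂ) + (q:ℂ)*I) • (w1 + I • w2) = ((p • w1 - q • w2) + I • (q • w1 + p • w2)) := by
  rw [← Complex.coe_smul p w1, ← Complex.coe_smul q w2, ← Complex.coe_smul q w1,
    ← Complex.coe_smul p w2]
  match_scalars
  · ring
  · linear_combination (q:ℂ) * Complex.I_sq

private lemma zsmul_decomp (z : ℂ) (x y : V) :
    z • x - y = (z.re • x - y) + I • (z.im • x) := by
  rw [← Complex.coe_smul z.re, ← Complex.coe_smul z.im]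
  conv_lhs => rw [← Complex.re_add_im z]
  match_scalars <;> ring

private lemma mem_cc_of (Cr : Set V) (p q : ℝ) (hpq : ¬(p = 0 ∧ q = 0)) (w1 w2 : V)
    (hu : p • w1 - q • w2 ∈ Cr) (hv : q • w1 + p • w2 ∈ Cr) (hne : w1 + I • w2 ≠ 0) :
    w1 + I • w2 ∈ complexCone Cr := by
  have hc0 : ((p:ℂ) + (q:ℂ)*I) ≠ 0 := by
    intro h
    apply hpq
    constructor
    · have := congrArg Complex.re h; simpa using this
    · have := congrArg Complex.im h; simpa using this
  refine ⟨hne, ((p:ℂ) + (q:ℂ)*I)⁻¹, inv_ne_zero hc0, _, hu, _, hv, ?_⟩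
  rw [← key_smul, smul_smul, inv_mul_cancel₀ hc0, one_smul]

private lemma decomp_eq (Vr : Submodule ℝ V)
    (hUniq : ∀ u ∈ Vr, ∀ v ∈ Vr, u + Complex.I • v = 0 → u = 0 ∧ v = 0)
    {w1 w2 w1' w2' : V} (h1 : w1 ∈ Vr) (h2 : w2 ∈ Vr) (h1' : w1' ∈ Vr) (h2' : w2' ∈ Vr)
    (h : w1 + I • w2 = w1' + I • w2') : w1 = w1' ∧ w2 = w2' := by
  have h0 : (w1 - w1') + I • (w2 - w2') = 0 := by
    rw [smul_sub, show w1 - w1' + (I • w2 - I • w2') = (w1 + I • w2) - (w1' + I • w2') from by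
      abel, h, sub_self]
  obtain ⟨e1, e2⟩ := hUniq _ (Submodule.sub_mem _ h1 h1') _ (Submodule.sub_mem _ h2 h2') h0
  exact ⟨sub_eq_zero.mp e1, sub_eq_zero.mp e2⟩

private lemma not_mem_cc (Vr : Submodule ℝ V) (Cr : Set V)
    (hCrSub : Cr ⊆ (Vr : Set V))
    (hUniq : ∀ u ∈ Vr, ∀ v ∈ Vr, u + Complex.I • v = 0 → u = 0 ∧ v = 0)
    (hCrSmul : ∀ t : ℝ, 0 ≤ t → ∀ u ∈ Cr, t • u ∈ Cr)
    (w : V) (hw : w ∈ Vr) (h1 : w ∉ Cr) (h2 : -w ∉ Cr) : w ∉ complexCone Cr := by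
  rintro ⟨hne, c, hc, u, hu, v, hv, heq⟩
  have hcinv : u + I • v = ((c⁻¹.re : ℂ) + (c⁻¹.im : ℂ)*I) • w := by
    rw [show ((c⁻¹.re : ℂ) + (c⁻¹.im : ℂ)*I) = c⁻¹ from Complex.re_add_im c⁻¹,
      heq, smul_smul, inv_mul_cancel₀ hc, one_smul]
  have hdec : u + I • v = c⁻¹.re • w + I • (c⁻¹.im • w) := by
    rw [hcinv]
    have := key_smul c⁻¹.re c⁻¹.im w (0 : V)
    simpa using this
  obtain ⟨e1, e2⟩ := decomp_eq Vr hUniq (hCrSub hu) (hCrSub hv)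
    (Vr.smul_mem c⁻¹.re hw) (Vr.smul_mem c⁻¹.im hw) hdec
  set p := c⁻¹.re with hp_def
  set q := c⁻¹.im with hq_def
  have hpq : ¬(p = 0 ∧ q = 0) := by
    rintro ⟨hp, hq⟩
    apply hc
    rw [← inv_eq_zero]
    exact Complex.ext hp hq
  rcases lt_trichotomy p 0 with hp | hp | hp
  · apply h2
    have hp0 : p ≠ 0 := ne_of_lt hp
    have hval : (-p)⁻¹ • u = -w := by
      rw [e1, smul_smul, inv_neg, neg_mul, inv_mul_cancel₀ hp0, neg_one_smul]
    rw [← hval]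
    exact hCrSmul _ (inv_nonneg.mpr (by linarith)) u hu
  · rcases lt_trichotomy q 0 with hq | hq | hq
    · apply h2
      have hq0 : q ≠ 0 := ne_of_lt hq
      have hval : (-q)⁻¹ • v = -w := by
        rw [e2, smul_smul, inv_neg, neg_mul, inv_mul_cancel₀ hq0, neg_one_smul]
      rw [← hval]
      exact hCrSmul _ (inv_nonneg.mpr (by linarith)) v hv
    · exact hpq ⟨hp, hq⟩
    · apply h1
      have hval : q⁻¹ • v = w := by
        rw [e2, smul_smul, inv_mul_cancel₀ (ne_of_gt hq), one_smul]
      rw [← hval]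
      exact hCrSmul _ (inv_nonneg.mpr hq.le) v hv
  · apply h1
    have hval : p⁻¹ • u = w := by
      rw [e1, smul_smul, inv_mul_cancel₀ (ne_of_gt hp), one_smul]
    rw [← hval]
    exact hCrSmul _ (inv_nonneg.mpr hp.le) u hu

end AuxLemmas

/-- the projective metric of the complexified cone restricts to the
Hilbert metric on the real cone; the inclusion is an isometric embedding. -/
theorem deltaC_eq_hilbertMetric
    {V : Type*} [NormedAddCommGroup V] [NormedSpace ℂ V]
    (Vr : Submodule ℝ V) (hVrClosed : IsClosed (Vr : Set V))
    (hSpan : ∀ x : V, ∃ u ∈ Vr, ∃ v ∈ Vr, x = u + Complex.I • v)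
    (hUniq : ∀ u ∈ Vr, ∀ v ∈ Vr, u + Complex.I • v = 0 → u = 0 ∧ v = 0)
    (Cr : Set V) (hCrSub : Cr ⊆ (Vr : Set V)) (hCrClosed : IsClosed Cr)
    (hCrAdd : ∀ u ∈ Cr, ∀ v ∈ Cr, u + v ∈ Cr)
    (hCrSmul : ∀ t : ℝ, 0 ≤ t → ∀ u ∈ Cr, t • u ∈ Cr)
    (hCrProper : ∀ u ∈ Cr, -u ∈ Cr → u = 0)
    (hCrNontriv : ∃ u ∈ Cr, ∃ v ∈ Cr, LinearIndependent ℝ ![u, v])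
    (x y : V) (hx : x ∈ Cr) (hx0 : x ≠ 0) (hy : y ∈ Cr) (hy0 : y ≠ 0) :
    deltaC (complexCone Cr) x y = hilbertMetric Cr x y := by
  have hxV : x ∈ Vr := hCrSub hx
  have hyV : y ∈ Vr := hCrSub hy
  -- exclusion of real points between the gauges
  have hEX : ∀ t : ℝ, t • x - y ∉ Cr → y - t • x ∉ Cr →
      (t:ℂ) ∈ ECset (complexCone Cr) x y := by
    intro t h1 h2
    show (t:ℂ) • x - y ∉ complexCone Cr
    rw [Complex.coe_smul]
    exact not_mem_cc Vr Cr hCrSub hUniq hCrSmul _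
      (Submodule.sub_mem _ (Vr.smul_mem t hxV) hyV) h1 (by rwa [neg_sub])
  -- z • x = y analysis
  have hzero : ∀ z : ℂ, z • x - y = 0 → z.im = 0 ∧ y = z.re • x ∧ 0 < z.re := by
    intro z h
    rw [zsmul_decomp] at h
    have h' : (z.re • x - y) + I • (z.im • x) = 0 + I • 0 := by
      rw [smul_zero, add_zero]; exact h
    obtain ⟨e1, e2⟩ := decomp_eq Vr hUniq
      (Submodule.sub_mem _ (Vr.smul_mem _ hxV) hyV) (Vr.smul_mem _ hxV)
      (Submodule.zero_mem _) (Submodule.zero_mem _) h'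
    have him : z.im = 0 := by
      rcases smul_eq_zero.mp e2 with h'' | h''
      · exact h''
      · exact absurd h'' hx0
    have hyx : y = z.re • x := (sub_eq_zero.mp e1).symm
    refine ⟨him, hyx, ?_⟩
    by_contra hre
    push_neg at hre
    have hmy : -y ∈ Cr := by
      have h3 := hCrSmul (-z.re) (by linarith) x hx
      rw [hyx, ← neg_smul]
      exact h3
    exact hy0 (hCrProper y hy hmy)
  have coneU : ∀ s t : ℝ, s ≤ t → s • x - y ∈ Cr → t • x - y ∈ Cr := by
    intro s t hst hs
    have e : t • x - y = (s • x - y) + (t - s) • x := by module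
    rw [e]; exact hCrAdd _ hs _ (hCrSmul _ (by linarith) x hx)
  have hproperx : ∀ c d : ℝ, c • x - y ∈ Cr → y - d • x ∈ Cr → d ≤ c := by
    intro c d h1 h2
    by_contra hc; push_neg at hc
    have h3 : (c • x - y) + (y - d • x) ∈ Cr := hCrAdd _ h1 _ h2
    have e : (c • x - y) + (y - d • x) = (c - d) • x := by module
    rw [e] at h3
    have h4 : (d - c) • x ∈ Cr := hCrSmul _ (by linarith) x hx
    have h5 := hCrProper _ h4 (by rw [← neg_smul, neg_sub]; exact h3)
    rcases smul_eq_zero.mp h5 with h | h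
    · linarith
    · exact hx0 h
  -- upper construction
  have hUP : ∀ s : ℝ, 0 < s → s • x - y ∈ Cr → ∀ z : ℂ, s < ‖z‖ →
      z • x - y ∈ complexCone Cr := by
    intro s hs hsm z hz
    have hsq : s^2 < z.re^2 + z.im^2 := by
      have h1 : ‖z‖^2 = z.re^2 + z.im^2 := by
        rw [Complex.sq_norm, Complex.normSq_apply]; ring
      nlinarith [norm_nonneg z]
    have hne : z • x - y ≠ 0 := by
      intro h0
      obtain ⟨him, hyx, hre⟩ := hzero z h0
      have hsa : s < z.re := by nlinarith
      have hm1 : (s - z.re) • x ∈ Cr := by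
        have e : (s - z.re) • x = s • x - y := by rw [hyx]; module
        rw [e]; exact hsm
      have hm2 : (z.re - s) • x ∈ Cr := hCrSmul _ (by linarith) x hx
      have h5 := hCrProper _ hm2 (by rw [← neg_smul, neg_sub]; exact hm1)
      rcases smul_eq_zero.mp h5 with h | h
      · linarith
      · exact hx0 h
    rw [zsmul_decomp]
    have hne' : (z.re • x - y) + I • (z.im • x) ≠ 0 := by
      rw [← zsmul_decomp]; exact hne
    set a := z.re with ha_def
    set b := z.im with hb_def
    rcases le_or_gt 0 b with hb | hb
    · rcases le_or_gt s a with hsa | hsa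
      · apply mem_cc_of Cr 1 0 (by norm_num) _ _ ?_ ?_ hne'
        · have e : (1:ℝ) • (a • x - y) - (0:ℝ) • (b • x) = a • x - y := by module
          rw [e]; exact coneU s a hsa hsm
        · have e : (0:ℝ) • (a • x - y) + (1:ℝ) • (b • x) = b • x := by module
          rw [e]; exact hCrSmul b hb x hx
      · rcases lt_or_ge 0 b with hbpos | hbz
        · have hbne : b ≠ 0 := ne_of_gt hbpos
          set t := (s - a)/b with ht_def
          have ht0 : 0 ≤ t := div_nonneg (by linarith) hbpos.le
          have htb : a + t * b = s := by
            rw [ht_def, div_mul_cancel₀ _ hbne]; ring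
          have hnn : 0 ≤ b - t * a := by
            rw [ht_def, show (s - a)/b * a = ((s-a)*a)/b from by ring,
              sub_nonneg, div_le_iff₀ hbpos]
            nlinarith [mul_nonneg hs.le (sub_nonneg.mpr hsa.le)]
          apply mem_cc_of Cr 1 (-t) (by simp) _ _ ?_ ?_ hne'
          · have e : (1:ℝ) • (a • x - y) - (-t) • (b • x) = (a + t*b) • x - y := by module
            rw [e, htb]; exact hsm
          · have e : (-t) • (a • x - y) + (1:ℝ) • (b • x) = (b - t*a) • x + t • y := by
              module
            rw [e]; exact hCrAdd _ (hCrSmul _ hnn x hx) _ (hCrSmul _ ht0 y hy)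
        · have hb0 : b = 0 := le_antisymm hbz hb
          have hneg : a < 0 := by nlinarith
          apply mem_cc_of Cr (-1) 0 (by norm_num) _ _ ?_ ?_ hne'
          · have e : (-1:ℝ) • (a • x - y) - (0:ℝ) • (b • x) = y + (-a) • x := by module
            rw [e]; exact hCrAdd _ hy _ (hCrSmul _ (by linarith) x hx)
          · have e : (0:ℝ) • (a • x - y) + (-1:ℝ) • (b • x) = (-b) • x := by module
            rw [e]; exact hCrSmul _ (by linarith) x hx
    · rcases le_or_gt s a with hsa | hsa
      · apply mem_cc_of Cr 0 1 (by norm_num) _ _ ?_ ?_ hne'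
        · have e : (0:ℝ) • (a • x - y) - (1:ℝ) • (b • x) = (-b) • x := by module
          rw [e]; exact hCrSmul _ (by linarith) x hx
        · have e : (1:ℝ) • (a • x - y) + (0:ℝ) • (b • x) = a • x - y := by module
          rw [e]; exact coneU s a hsa hsm
      · have hbpos : 0 < -b := by linarith
        have hbne : -b ≠ 0 := ne_of_gt hbpos
        set t := (s - a)/(-b) with ht_def
        have ht0 : 0 ≤ t := div_nonneg (by linarith) hbpos.le
        have htb : a + t * (-b) = s := by
          rw [ht_def, div_mul_cancel₀ _ hbne]; ring
        have hnn : 0 ≤ (-b) - t * a := by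
          rw [ht_def, show (s - a)/(-b) * a = ((s-a)*a)/(-b) from by ring,
            sub_nonneg, div_le_iff₀ hbpos]
          nlinarith [mul_nonneg hs.le (sub_nonneg.mpr hsa.le)]
        apply mem_cc_of Cr (-t) 1 (by simp) _ _ ?_ ?_ hne'
        · have e : (-t) • (a • x - y) - (1:ℝ) • (b • x) = ((-b) - t*a) • x + t • y := by
            module
          rw [e]; exact hCrAdd _ (hCrSmul _ hnn x hx) _ (hCrSmul _ ht0 y hy)
        · have e : (1:ℝ) • (a • x - y) + (-t) • (b • x) = (a + t * (-b)) • x - y := by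
            module
          rw [e, htb]; exact hsm
  -- lower construction
  have hLOW : ∀ s : ℝ, y - s • x ∈ Cr → ∀ z : ℂ, ‖z‖ < s →
      z • x - y ∈ complexCone Cr := by
    intro s hsm z hz
    have ha : z.re < s := lt_of_le_of_lt
      (by exact Complex.re_le_norm z) hz
    have hne : z • x - y ≠ 0 := by
      intro h0
      obtain ⟨him, hyx, hre⟩ := hzero z h0
      have hm1 : (z.re - s) • x ∈ Cr := by
        have e : (z.re - s) • x = y - s • x := by rw [hyx]; module
        rw [e]; exact hsm
      have hm2 : (s - z.re) • x ∈ Cr := hCrSmul _ (by linarith) x hx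
      have h5 := hCrProper _ hm2 (by rw [← neg_smul, neg_sub]; exact hm1)
      rcases smul_eq_zero.mp h5 with h | h
      · linarith
      · exact hx0 h
    rw [zsmul_decomp]
    have hne' : (z.re • x - y) + I • (z.im • x) ≠ 0 := by
      rw [← zsmul_decomp]; exact hne
    set a := z.re with ha_def
    set b := z.im with hb_def
    rcases le_or_gt b 0 with hb | hb
    · apply mem_cc_of Cr (-1) 0 (by norm_num) _ _ ?_ ?_ hne'
      · have e : (-1:ℝ) • (a • x - y) - (0:ℝ) • (b • x) = (y - s • x) + (s - a) • x := by
          module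
        rw [e]; exact hCrAdd _ hsm _ (hCrSmul _ (by linarith) x hx)
      · have e : (0:ℝ) • (a • x - y) + (-1:ℝ) • (b • x) = (-b) • x := by module
        rw [e]; exact hCrSmul _ (by linarith) x hx
    · apply mem_cc_of Cr 0 (-1) (by norm_num) _ _ ?_ ?_ hne'
      · have e : (0:ℝ) • (a • x - y) - (-1:ℝ) • (b • x) = b • x := by module
        rw [e]; exact hCrSmul _ hb.le x hx
      · have e : (-1:ℝ) • (a • x - y) + (0:ℝ) • (b • x) = (y - s • x) + (s - a) • x := by
          module
        rw [e]; exact hCrAdd _ hsm _ (hCrSmul _ (by linarith) x hx)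
  -- the real gauges
  set Sa : Set ℝ := {s : ℝ | 0 ≤ s ∧ y - s • x ∈ Cr} with hSa_def
  have hSa0 : (0:ℝ) ∈ Sa := ⟨le_rfl, by simpa using hy⟩
  have hSaC : IsClosed Sa := by
    have e : Sa = Set.Ici (0:ℝ) ∩ (fun s : ℝ => y - s • x) ⁻¹' Cr := by
      ext s; simp [hSa_def, Set.mem_Ici]
    rw [e]
    exact isClosed_Ici.inter (hCrClosed.preimage
      (continuous_const.sub (continuous_id.smul continuous_const)))
  have hSaB : BddAbove Sa := by
    by_contra hB
    choose f hf1 hf2 using fun n : ℕ => (not_bddAbove_iff.mp hB (n:ℝ))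
    have hfpos : ∀ n, 0 < f n := fun n => lt_of_le_of_lt (Nat.cast_nonneg n) (hf2 n)
    have htop : Tendsto f atTop atTop :=
      tendsto_atTop_mono (fun n => (hf2 n).le) tendsto_natCast_atTop_atTop
    have hinv : Tendsto (fun n => (f n)⁻¹) atTop (nhds 0) := htop.inv_tendsto_atTop
    have hlim : Tendsto (fun n => (f n)⁻¹ • y - x) atTop (nhds (-x)) := by
      have h1 : Tendsto (fun n => (f n)⁻¹ • y) atTop (nhds ((0:ℝ) • y)) :=
        hinv.smul_const y
      have h2 := h1.sub_const x
      simpa using h2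
    have hmem : ∀ n, (f n)⁻¹ • y - x ∈ Cr := by
      intro n
      have h3 := hCrSmul (f n)⁻¹ (inv_nonneg.mpr (hfpos n).le) _ (hf1 n).2
      have e : (f n)⁻¹ • (y - f n • x) = (f n)⁻¹ • y - x := by
        rw [smul_sub, smul_smul, inv_mul_cancel₀ (hfpos n).ne', one_smul]
      rwa [e] at h3
    have hmx : -x ∈ Cr := hCrClosed.mem_of_tendsto hlim (Filter.Eventually.of_forall hmem)
    exact hx0 (hCrProper x hx hmx)
  set al := sSup Sa with hal_def
  have halmem : al ∈ Sa := hSaC.csSup_mem ⟨0, hSa0⟩ hSaB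
  have hal0 : 0 ≤ al := halmem.1
  have haly : y - al • x ∈ Cr := halmem.2
  have halub : ∀ s, 0 ≤ s → y - s • x ∈ Cr → s ≤ al := fun s h1 h2 => le_csSup hSaB ⟨h1, h2⟩
  have halnot : ∀ t, al < t → y - t • x ∉ Cr := by
    intro t ht hmem
    exact absurd (halub t (le_trans hal0 ht.le) hmem) (not_le.mpr ht)
  set Sb : Set ℝ := {s : ℝ | 0 ≤ s ∧ s • x - y ∈ Cr} with hSb_def
  have hSbpos : ∀ s ∈ Sb, 0 < s := by
    rintro s ⟨h0, hm⟩
    rcases h0.lt_or_eq with h | h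
    · exact h
    · exfalso
      rw [← h] at hm
      exact hy0 (hCrProper y hy (by simpa using hm))
  have hSbC : IsClosed Sb := by
    have e : Sb = Set.Ici (0:ℝ) ∩ (fun s : ℝ => s • x - y) ⁻¹' Cr := by
      ext s; simp [hSb_def, Set.mem_Ici]
    rw [e]
    exact isClosed_Ici.inter (hCrClosed.preimage
      ((continuous_id.smul continuous_const).sub continuous_const))
  have hSbB : BddBelow Sb := ⟨0, fun s hs => hs.1⟩
  -- norm facts for real coercions
  have hnorm : ∀ t : ℝ, 0 ≤ t → (‖((t:ℝ):ℂ)‖₊ : ENNReal) = ENNReal.ofReal t := by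
    intro t ht
    rw [← enorm_eq_nnnorm, ← ofReal_norm, Complex.norm_real, Real.norm_eq_abs, _root_.abs_of_nonneg ht]
  -- the supremum equality
  have hsup : (⨆ z ∈ ECset (complexCone Cr) x y, (‖z‖₊ : ENNReal))
      = sInf {t : ENNReal | ∃ s : ℝ, 0 < s ∧ t = ENNReal.ofReal s ∧ s • x - y ∈ Cr} := by
    apply le_antisymm
    · apply le_sInf
      rintro t ⟨s, hs, rfl, hsm⟩
      apply iSup₂_le
      intro z hz
      by_contra hlt
      push_neg at hlt
      rw [← enorm_eq_nnnorm, ← ofReal_norm] at hlt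
      have hzs : s < ‖z‖ := (ENNReal.ofReal_lt_ofReal_iff_of_nonneg hs.le).mp hlt
      exact hz (hUP s hs hsm z hzs)
    · apply ENNReal.le_of_forall_nnreal_lt
      intro r hr
      by_cases hSbne : Sb.Nonempty
      · set be := sInf Sb with hbe_def
        have hbemem : be ∈ Sb := hSbC.csInf_mem hSbne hSbB
        have hbepos : 0 < be := hSbpos be hbemem
        have halbe : al ≤ be := hproperx be al hbemem.2 haly
        have hrbe : (r:ℝ) < be := by
          have h1 : (r : ENNReal) < ENNReal.ofReal be :=
            lt_of_lt_of_le hr (sInf_le ⟨be, hbepos, rfl, hbemem.2⟩)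
          rw [← ENNReal.ofReal_coe_nnreal] at h1
          exact (ENNReal.ofReal_lt_ofReal_iff_of_nonneg r.coe_nonneg).mp h1
        rcases eq_or_lt_of_le halbe with heq | hlt
        · have hyx : be • x - y = 0 := by
            apply hCrProper _ hbemem.2
            rw [neg_sub, ← heq]
            exact haly
          have hzE : ((be:ℝ):ℂ) ∈ ECset (complexCone Cr) x y := by
            show ((be:ℝ):ℂ) • x - y ∉ complexCone Cr
            rw [Complex.coe_smul, hyx]
            exact fun h => h.1 rfl
          refine le_trans ?_ (le_iSup₂ ((be:ℝ):ℂ) hzE)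
          rw [hnorm be hbepos.le, ← ENNReal.ofReal_coe_nnreal]
          exact ENNReal.ofReal_le_ofReal hrbe.le
        · set t := max ((al + be)/2) (r:ℝ) with ht_def
          have ht1 : al < t := lt_of_lt_of_le (by linarith) (le_max_left _ _)
          have ht2 : t < be := max_lt (by linarith) hrbe
          have ht0 : 0 ≤ t := le_trans hal0 ht1.le
          have hzE : ((t:ℝ):ℂ) ∈ ECset (complexCone Cr) x y := by
            apply hEX t ?_ (halnot t ht1)
            intro hmem
            exact absurd (csInf_le hSbB ⟨ht0, hmem⟩) (not_le.mpr ht2)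
          refine le_trans ?_ (le_iSup₂ ((t:ℝ):ℂ) hzE)
          rw [hnorm t ht0, ← ENNReal.ofReal_coe_nnreal]
          exact ENNReal.ofReal_le_ofReal (le_max_right _ _)
      · set t := max (al + 1) ((r:ℝ) + 1) with ht_def
        have ht1 : al < t := lt_of_lt_of_le (by linarith) (le_max_left _ _)
        have ht0 : 0 ≤ t := le_trans hal0 ht1.le
        have hzE : ((t:ℝ):ℂ) ∈ ECset (complexCone Cr) x y := by
          apply hEX t ?_ (halnot t ht1)
          intro hmem
          exact hSbne ⟨t, ht0, hmem⟩
        refine le_trans ?_ (le_iSup₂ ((t:ℝ):ℂ) hzE)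
        rw [hnorm t ht0, ← ENNReal.ofReal_coe_nnreal]
        refine ENNReal.ofReal_le_ofReal (le_trans (by linarith) (le_max_right _ _))
  -- the infimum equality
  have hinf : (⨅ z ∈ ECset (complexCone Cr) x y, (‖z‖₊ : ENNReal))
      = sSup {t : ENNReal | ∃ s : ℝ, 0 ≤ s ∧ t = ENNReal.ofReal s ∧ y - s • x ∈ Cr} := by
    apply le_antisymm
    · refine le_trans ?_ (le_sSup ⟨al, hal0, rfl, haly⟩)
      by_cases hSbne : Sb.Nonempty
      · set be := sInf Sb with hbe_def
        have hbemem : be ∈ Sb := hSbC.csInf_mem hSbne hSbB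
        have hbepos : 0 < be := hSbpos be hbemem
        have halbe : al ≤ be := hproperx be al hbemem.2 haly
        rcases eq_or_lt_of_le halbe with heq | hlt
        · have hyx : be • x - y = 0 := by
            apply hCrProper _ hbemem.2
            rw [neg_sub, ← heq]
            exact haly
          have hzE : ((be:ℝ):ℂ) ∈ ECset (complexCone Cr) x y := by
            show ((be:ℝ):ℂ) • x - y ∉ complexCone Cr
            rw [Complex.coe_smul, hyx]
            exact fun h => h.1 rfl
          refine le_trans (iInf₂_le ((be:ℝ):ℂ) hzE) ?_
          rw [hnorm be hbepos.le, heq]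
        · apply ENNReal.le_of_forall_pos_le_add
          intro ε hε _
          set t := min (al + (ε:ℝ)) ((al + be)/2) with ht_def
          have hε' : (0:ℝ) < ε := hε
          have ht1 : al < t := lt_min (by linarith) (by linarith)
          have ht2 : t < be := lt_of_le_of_lt (min_le_right _ _) (by linarith)
          have ht0 : 0 ≤ t := le_trans hal0 ht1.le
          have hzE : ((t:ℝ):ℂ) ∈ ECset (complexCone Cr) x y := by
            apply hEX t ?_ (halnot t ht1)
            intro hmem
            exact absurd (csInf_le hSbB ⟨ht0, hmem⟩) (not_le.mpr ht2)
          refine le_trans (iInf₂_le ((t:ℝ):ℂ) hzE) ?_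
          rw [hnorm t ht0]
          calc ENNReal.ofReal t ≤ ENNReal.ofReal (al + (ε:ℝ)) :=
                ENNReal.ofReal_le_ofReal (min_le_left _ _)
            _ = ENNReal.ofReal al + ENNReal.ofReal (ε:ℝ) :=
                ENNReal.ofReal_add hal0 hε'.le
            _ = ENNReal.ofReal al + (ε : ENNReal) := by rw [ENNReal.ofReal_coe_nnreal]
      · apply ENNReal.le_of_forall_pos_le_add
        intro ε hε _
        set t := al + (ε:ℝ) with ht_def
        have hε' : (0:ℝ) < ε := hε
        have ht1 : al < t := by rw [ht_def]; linarith
        have ht0 : 0 ≤ t := le_trans hal0 ht1.le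
        have hzE : ((t:ℝ):ℂ) ∈ ECset (complexCone Cr) x y := by
          apply hEX t ?_ (halnot t ht1)
          intro hmem
          exact hSbne ⟨t, ht0, hmem⟩
        refine le_trans (iInf₂_le ((t:ℝ):ℂ) hzE) ?_
        rw [hnorm t ht0, ht_def, ENNReal.ofReal_add hal0 hε'.le,
          ENNReal.ofReal_coe_nnreal]
    · apply sSup_le
      rintro t ⟨s, hs0, rfl, hsm⟩
      apply le_iInf₂
      intro z hz
      by_contra hlt
      push_neg at hlt
      rw [← enorm_eq_nnnorm, ← ofReal_norm] at hlt
      have hzs : ‖z‖ < s := (ENNReal.ofReal_lt_ofReal_iff_of_nonneg (norm_nonneg z)).mp hlt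
      exact hz (hLOW s hsm z hzs)
  unfold deltaC hilbertMetric
  rw [hsup, hinf]
end

section
/- Let x, y ∈ X with x ≠ y, let u ∈ C_ℝ \ {0}, and let z ∈ ℂ. Then ⟨l_{x,y}, L u⟩ > 0 and | ⟨l_{x,y}, L(z)u⟩ / ⟨l_{x,y}, L u⟩ − 1 | ≤ ε(z), where ε(z) = e^{|Re(z)|·‖f‖∞} · |z| · (‖f‖∞ + |f|_ℓ). -/
open Complex

lemma rexp_sub_le (a b : ℝ) : |Real.exp a - Real.exp b| ≤ |a - b| * Real.exp (max a b) := by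
  wlog h : b ≤ a generalizing a b
  · rw [abs_sub_comm, abs_sub_comm a b, max_comm]; exact this _ _ (le_of_not_ge h)
  rw [_root_.abs_of_nonneg (sub_nonneg.2 (Real.exp_le_exp.2 h)),
    _root_.abs_of_nonneg (sub_nonneg.2 h), max_eq_left h]
  have h1 : Real.exp (b - a) * Real.exp a = Real.exp b := by
    rw [← Real.exp_add]; ring_nf
  nlinarith [Real.add_one_le_exp (b - a), Real.exp_pos a]

lemma cexp_sub_le (w₁ w₂ : ℂ) :
    ‖Complex.exp w₁ - Complex.exp w₂‖ ≤
      ‖w₁ - w₂‖ * Real.exp (max w₁.re w₂.re) := by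
  have hsq : (‖Complex.exp w₁ - Complex.exp w₂‖)^2 ≤
      (‖w₁ - w₂‖ * Real.exp (max w₁.re w₂.re))^2 := by
    rw [mul_pow, Complex.sq_norm, Complex.sq_norm, Complex.normSq_apply, Complex.normSq_apply]
    simp only [Complex.sub_re, Complex.sub_im, Complex.exp_re, Complex.exp_im]
    set a1 := w₁.re; set b1 := w₁.im; set a2 := w₂.re; set b2 := w₂.im
    set E1 := Real.exp a1; set E2 := Real.exp a2; set EM := Real.exp (max a1 a2)
    have hp1 : Real.sin b1 ^ 2 + Real.cos b1 ^ 2 = 1 := Real.sin_sq_add_cos_sq b1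
    have hp2 : Real.sin b2 ^ 2 + Real.cos b2 ^ 2 = 1 := Real.sin_sq_add_cos_sq b2
    have hcs : Real.cos (b1 - b2) = Real.cos b1 * Real.cos b2 + Real.sin b1 * Real.sin b2 :=
      Real.cos_sub b1 b2
    have hcos1 : Real.cos (b1 - b2) ≤ 1 := Real.cos_le_one _
    have hcos2 : 1 - (b1 - b2) ^ 2 / 2 ≤ Real.cos (b1 - b2) := Real.one_sub_sq_div_two_le_cos
    have hE : |E1 - E2| ≤ |a1 - a2| * EM := rexp_sub_le a1 a2
    have hE2 : (E1 - E2) ^ 2 ≤ (a1 - a2) ^ 2 * EM ^ 2 := by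
      nlinarith [abs_nonneg (E1 - E2), abs_nonneg (a1 - a2), _root_.sq_abs (E1 - E2),
        _root_.sq_abs (a1 - a2), Real.exp_pos (max a1 a2)]
    have h1M : E1 ≤ EM := Real.exp_le_exp.2 (le_max_left _ _)
    have h2M : E2 ≤ EM := Real.exp_le_exp.2 (le_max_right _ _)
    have h1p : (0:ℝ) < E1 := Real.exp_pos _
    have h2p : (0:ℝ) < E2 := Real.exp_pos _
    have hEE : E1 * E2 ≤ EM ^ 2 := by nlinarith
    have expand : (E1 * Real.cos b1 - E2 * Real.cos b2) * (E1 * Real.cos b1 - E2 * Real.cos b2)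
        + (E1 * Real.sin b1 - E2 * Real.sin b2) * (E1 * Real.sin b1 - E2 * Real.sin b2)
        = (E1 - E2)^2 + 2*(E1*E2)*(1 - Real.cos (b1 - b2)) := by
      rw [hcs]; linear_combination E1^2 * hp1 + E2^2 * hp2
    rw [expand]
    have hk : 2*(E1*E2)*(1 - Real.cos (b1 - b2)) ≤ (b1 - b2)^2 * EM^2 := by
      nlinarith [mul_pos h1p h2p, sq_nonneg (b1 - b2)]
    nlinarith
  have h := Real.sqrt_le_sqrt hsq
  rwa [Real.sqrt_sq (norm_nonneg _), Real.sqrt_sq (by positivity)] at h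

/-- Sup norm of a real-valued function. -/
noncomputable def supN {X : Type*} (u : X → ℝ) : ℝ := sSup (Set.range fun x => |u x|)

/-- Best Lipschitz constant of a real-valued function with respect to the distance d. -/
noncomputable def lipN {X : Type*} (d : X → X → ℝ) (u : X → ℝ) : ℝ :=
  sInf {c : ℝ | 0 ≤ c ∧ ∀ x y, |u x - u y| ≤ c * d x y}

/-- Sup norm of a complex-valued function. -/
noncomputable def supNC {X : Type*} (u : X → ℂ) : ℝ :=
  sSup (Set.range fun x => ‖u x‖)

/-- Best Lipschitz constant of a complex-valued function with respect to the distance d. -/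
noncomputable def lipNC {X : Type*} (d : X → X → ℝ) (u : X → ℂ) : ℝ :=
  sInf {c : ℝ | 0 ≤ c ∧ ∀ x y, ‖u x - u y‖ ≤ c * d x y}

/-- Bounded Lipschitz complex-valued functions. -/
def lipBddC {X : Type*} (d : X → X → ℝ) (u : X → ℂ) : Prop :=
  (∃ c : ℝ, 0 ≤ c ∧ ∀ x y, ‖u x - u y‖ ≤ c * d x y) ∧
    ∃ M : ℝ, ∀ x, ‖u x‖ ≤ M

/-- The real Birkhoff cone of nonnegative bounded Lipschitz functions with
exp(B d(x,y)) u(y) ≥ u(x). -/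
def coneR {X : Type*} (d : X → X → ℝ) (B : ℝ) : Set (X → ℝ) :=
  {u | (∃ c : ℝ, 0 ≤ c ∧ ∀ x y, |u x - u y| ≤ c * d x y) ∧ (∃ M : ℝ, ∀ x, |u x| ≤ M) ∧
    ∀ x y, u x ≤ Real.exp (B * d x y) * u y}

/-- The real Birkhoff cone viewed inside complex-valued functions. -/
def coneRC {X : Type*} (d : X → X → ℝ) (B : ℝ) : Set (X → ℂ) :=
  {w | ∃ u ∈ coneR d B, w = fun x => ((u x : ℝ) : ℂ)}

/-- The (unperturbed) transfer operator on real-valued functions. -/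
noncomputable def transferR {X : Type*} {J : Type*} (g : J → X → ℝ) (σb : J → X → X)
    (u : X → ℝ) : X → ℝ :=
  fun x => ∑' j, Real.exp (g j x) * u (σb j x)

/-- The (unperturbed) transfer operator on complex-valued functions. -/
noncomputable def transferC {X : Type*} {J : Type*} (g : J → X → ℝ) (σb : J → X → X)
    (u : X → ℂ) : X → ℂ :=
  fun x => ∑' j, ((Real.exp (g j x) : ℝ) : ℂ) * u (σb j x)

/-- The perturbed transfer operator L(z). -/
noncomputable def transferZ {X : Type*} {J : Type*} (g : J → X → ℝ) (σb : J → X → X)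
    (f : X → ℝ) (z : ℂ) (u : X → ℂ) : X → ℂ :=
  fun x => ∑' j, Complex.exp (((g j x : ℝ) : ℂ) + z * ((f (σb j x) : ℝ) : ℂ)) * u (σb j x)

/-- Lemma 5.2 of the paper: positivity of the functional l_{x,y} applied
to L u, and the epsilon(z) estimate for the perturbed transfer operator. -/
theorem transfer_epsilon_estimate
    {J : Type*} [Countable J] [Nonempty J]
    (d : ↥(Set.Icc (0:ℝ) 1) → ↥(Set.Icc (0:ℝ) 1) → ℝ)
    (hd_eq : ∀ x y, d x y = 0 ↔ x = y)
    (hd_symm : ∀ x y, d x y = d y x)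
    (hd_tri : ∀ x y z, d x z ≤ d x y + d y z)
    (hd_le : ∀ x y, d x y ≤ 1)
    (hd_compat : ∀ (x : ↥(Set.Icc (0:ℝ) 1)) (ε : ℝ), 0 < ε →
      (∃ δ > 0, ∀ y, dist x y < δ → d x y < ε) ∧
      (∃ δ > 0, ∀ y, d x y < δ → dist x y < ε))
    (σb : J → ↥(Set.Icc (0:ℝ) 1) → ↥(Set.Icc (0:ℝ) 1)) (g : J → ↥(Set.Icc (0:ℝ) 1) → ℝ)
    (γ G : ℝ) (hγ : 1 < γ) (hG : 0 < G)
    (hA1 : ∀ j x y, d (σb j x) (σb j y) ≤ γ⁻¹ * d x y)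
    (hA2 : ∀ j x y, |g j x - g j y| ≤ G * d x y)
    (hA3 : ∃ M : ℝ, ∀ x, Summable (fun j => Real.exp (g j x)) ∧
      (∑' j, Real.exp (g j x)) ≤ M)
    (f : ↥(Set.Icc (0:ℝ) 1) → ℝ)
    (hfLip : ∃ c : ℝ, 0 ≤ c ∧ ∀ x y, |f x - f y| ≤ c * d x y)
    (hfBdd : ∃ M : ℝ, ∀ x, |f x| ≤ M)
    (B : ℝ) (hB : B = (γ * G + 1) / (γ - 1))
    (x y : ↥(Set.Icc (0:ℝ) 1)) (hxy : x ≠ y)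
    (u : ↥(Set.Icc (0:ℝ) 1) → ℝ) (hu : u ∈ coneR d B) (hu0 : u ≠ 0) (z : ℂ) :
    0 < Real.exp (B * d x y) * transferR g σb u y - transferR g σb u x ∧
    ‖(Real.exp (B * d x y) * transferZ g σb f z (fun t => ((u t : ℝ) : ℂ)) y
          - transferZ g σb f z (fun t => ((u t : ℝ) : ℂ)) x) /
        (((Real.exp (B * d x y) * transferR g σb u y - transferR g σb u x : ℝ)) : ℂ) - 1‖
      ≤ Real.exp (|z.re| * supN f) * ‖z‖ * (supN f + lipN d f) := by
  have hγ0 : (0:ℝ) < γ := lt_trans one_pos hγ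
  have hd0 : ∀ a b, 0 ≤ d a b := by
    intro a b
    have h1 := hd_tri a b a
    have h2 := (hd_eq a a).mpr rfl
    have h3 := hd_symm a b
    linarith
  have hdxy : 0 < d x y :=
    lt_of_le_of_ne (hd0 x y) (fun h => hxy ((hd_eq x y).mp h.symm))
  have hB0 : 0 < B := by
    rw [hB]; apply div_pos <;> nlinarith
  obtain ⟨hulip, ⟨Mu, hMu⟩, hcone⟩ := hu
  obtain ⟨Mg, hMg⟩ := hA3
  -- u is nonnegative
  have hu_nn : ∀ t, 0 ≤ u t := by
    intro t
    by_contra hneg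
    push_neg at hneg
    have hxneg : u x < 0 := by
      have h := hcone x t
      have h2 : Real.exp (B * d x t) * u t < 0 :=
        mul_neg_of_pos_of_neg (Real.exp_pos _) hneg
      linarith
    have hyneg : u y < 0 := by
      have h := hcone y t
      have h2 : Real.exp (B * d y t) * u t < 0 :=
        mul_neg_of_pos_of_neg (Real.exp_pos _) hneg
      linarith
    have h1 := hcone x y
    have h2 := hcone y x
    rw [hd_symm y x] at h2
    have hE1 : 1 < Real.exp (B * d x y) := by
      have := Real.exp_lt_exp.2 (show (0:ℝ) < B * d x y by positivity)
      rwa [Real.exp_zero] at this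
    have hxy1 : Real.exp (B * d x y) * u y < u y := by nlinarith
    have hxy2 : Real.exp (B * d x y) * u x < u x := by nlinarith
    linarith
  -- u is positive
  have hupos : ∀ t, 0 < u t := by
    have hex : ∃ t, 0 < u t := by
      by_contra h; push_neg at h
      exact hu0 (funext fun t => le_antisymm (h t) (hu_nn t))
    obtain ⟨t0, ht0⟩ := hex
    intro t
    by_contra hle; push_neg at hle
    have ht : u t = 0 := le_antisymm hle (hu_nn t)
    have h := hcone t0 t
    rw [ht, mul_zero] at h
    linarith
  -- summability of the real transfer sums
  have hsum : ∀ p, Summable (fun j => Real.exp (g j p) * u (σb j p)) := by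
    intro p
    apply Summable.of_nonneg_of_le
      (fun j => mul_nonneg (Real.exp_pos _).le (hu_nn _))
      (fun j => ?_) (((hMg p).1).mul_right Mu)
    exact mul_le_mul_of_nonneg_left ((le_abs_self _).trans (hMu _)) (Real.exp_pos _).le
  -- the key per-branch inequality
  have hstar : ∀ j, Real.exp (g j x) * u (σb j x) * Real.exp (d x y / γ)
      ≤ Real.exp (B * d x y) * (Real.exp (g j y) * u (σb j y)) := by
    intro j
    have hg' : g j x ≤ g j y + G * d x y := by
      have h := abs_le.1 (hA2 j x y); linarith [h.2]
    have hgE : Real.exp (g j x) ≤ Real.exp (g j y + G * d x y) := Real.exp_le_exp.2 hg'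
    have hu' : u (σb j x) ≤ Real.exp (B * (γ⁻¹ * d x y)) * u (σb j y) := by
      have h1 := hcone (σb j x) (σb j y)
      have h2 : Real.exp (B * d (σb j x) (σb j y)) ≤ Real.exp (B * (γ⁻¹ * d x y)) :=
        Real.exp_le_exp.2 (mul_le_mul_of_nonneg_left (hA1 j x y) hB0.le)
      exact h1.trans (mul_le_mul_of_nonneg_right h2 (hu_nn _))
    have hprod : Real.exp (g j x) * u (σb j x) ≤
        Real.exp (g j y + G * d x y) * (Real.exp (B * (γ⁻¹ * d x y)) * u (σb j y)) :=
      mul_le_mul hgE hu' (hu_nn _) (Real.exp_pos _).le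
    have hexp_eq : (g j y + G * d x y) + B * (γ⁻¹ * d x y) + d x y / γ = B * d x y + g j y := by
      have h1 : γ ≠ 0 := ne_of_gt hγ0
      have h2 : γ - 1 ≠ 0 := sub_ne_zero.2 (ne_of_gt hγ)
      rw [hB]; field_simp; ring
    calc Real.exp (g j x) * u (σb j x) * Real.exp (d x y / γ)
        ≤ Real.exp (g j y + G * d x y) * (Real.exp (B * (γ⁻¹ * d x y)) * u (σb j y))
            * Real.exp (d x y / γ) :=
          mul_le_mul_of_nonneg_right hprod (Real.exp_pos _).le
      _ = Real.exp ((g j y + G * d x y) + B * (γ⁻¹ * d x y) + d x y / γ) * u (σb j y) := by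
          simp only [Real.exp_add]; ring
      _ = Real.exp (B * d x y + g j y) * u (σb j y) := by rw [hexp_eq]
      _ = Real.exp (B * d x y) * (Real.exp (g j y) * u (σb j y)) := by
          rw [Real.exp_add]; ring
  -- positivity of the transfer sums
  have hLx_pos : 0 < transferR g σb u x :=
    Summable.tsum_pos (hsum x) (fun j => mul_nonneg (Real.exp_pos _).le (hu_nn _))
      (Classical.arbitrary J) (mul_pos (Real.exp_pos _) (hupos _))
  have hLy_pos : 0 < transferR g σb u y :=
    Summable.tsum_pos (hsum y) (fun j => mul_nonneg (Real.exp_pos _).le (hu_nn _))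
      (Classical.arbitrary J) (mul_pos (Real.exp_pos _) (hupos _))
  have hsums_le : transferR g σb u x * Real.exp (d x y / γ)
      ≤ Real.exp (B * d x y) * transferR g σb u y := by
    unfold transferR
    rw [← tsum_mul_right, ← tsum_mul_left]
    exact Summable.tsum_le_tsum hstar ((hsum x).mul_right _) ((hsum y).mul_left _)
  have hexp_gt1 : 1 < Real.exp (d x y / γ) := by
    have := Real.exp_lt_exp.2 (show (0:ℝ) < d x y / γ by positivity)
    rwa [Real.exp_zero] at this
  have part1 : 0 < Real.exp (B * d x y) * transferR g σb u y - transferR g σb u x := by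
    nlinarith
  refine ⟨part1, ?_⟩
  have hl0low : transferR g σb u x * (d x y / γ)
      ≤ Real.exp (B * d x y) * transferR g σb u y - transferR g σb u x := by
    nlinarith [Real.add_one_le_exp (d x y / γ)]
  -- sup norm and Lipschitz seminorm facts
  have hfS : ∀ t, |f t| ≤ supN f := by
    intro t
    apply le_csSup
    · obtain ⟨Mf, hMf⟩ := hfBdd
      exact ⟨Mf, by rintro v ⟨s, rfl⟩; exact hMf s⟩
    · exact ⟨t, rfl⟩
  have hS0 : 0 ≤ supN f := (abs_nonneg _).trans (hfS x)
  have hL0 : 0 ≤ lipN d f := by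
    obtain ⟨c, hc⟩ := hfLip
    exact le_csInf ⟨c, hc⟩ (fun b hb => hb.1)
  have hfL : ∀ a b, |f a - f b| ≤ lipN d f * d a b := by
    intro a b
    rcases eq_or_lt_of_le (hd0 a b) with h | h
    · have hab : a = b := (hd_eq a b).1 h.symm
      subst hab
      simp only [sub_self, abs_zero]
      rw [← h, mul_zero]
    · obtain ⟨c, hc⟩ := hfLip
      have hlow : |f a - f b| / d a b ≤ lipN d f :=
        le_csInf ⟨c, hc⟩ (fun e he => (div_le_iff₀ h).2 (he.2 a b))
      calc |f a - f b| = (|f a - f b| / d a b) * d a b := by field_simp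
        _ ≤ lipN d f * d a b := mul_le_mul_of_nonneg_right hlow (hd0 a b)
  have hK1 : 1 ≤ Real.exp (|z.re| * supN f) :=
    Real.one_le_exp (by positivity)
  have hre : ∀ t : ↥(Set.Icc (0:ℝ) 1), (z * ((f t : ℝ):ℂ)).re ≤ |z.re| * supN f := by
    intro t
    have h : (z * ((f t : ℝ):ℂ)).re = z.re * f t := by simp [Complex.mul_re]
    rw [h]
    calc z.re * f t ≤ |z.re * f t| := le_abs_self _
      _ = |z.re| * |f t| := abs_mul _ _
      _ ≤ |z.re| * supN f := mul_le_mul_of_nonneg_left (hfS t) (abs_nonneg _)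
  have hexp1 : ∀ t : ↥(Set.Icc (0:ℝ) 1), ‖Complex.exp (z * ((f t : ℝ):ℂ)) - 1‖
      ≤ ‖z‖ * supN f * Real.exp (|z.re| * supN f) := by
    intro t
    have h := cexp_sub_le (z * ((f t : ℝ):ℂ)) 0
    rw [Complex.exp_zero, sub_zero] at h
    refine h.trans ?_
    have h1 : ‖z * ((f t : ℝ):ℂ)‖ ≤ ‖z‖ * supN f := by
      rw [norm_mul, Complex.norm_real, Real.norm_eq_abs]
      exact mul_le_mul_of_nonneg_left (hfS t) (norm_nonneg z)
    have h2 : Real.exp (max (z * ((f t : ℝ):ℂ)).re (0:ℂ).re)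
        ≤ Real.exp (|z.re| * supN f) := by
      apply Real.exp_le_exp.2
      simp only [Complex.zero_re]
      exact max_le (hre t) (by positivity)
    exact mul_le_mul h1 h2 (Real.exp_pos _).le (by positivity)
  have hexp2 : ∀ j, ‖Complex.exp (z * ((f (σb j y) : ℝ):ℂ))
        - Complex.exp (z * ((f (σb j x) : ℝ):ℂ))‖
      ≤ ‖z‖ * (lipN d f * (γ⁻¹ * d x y)) * Real.exp (|z.re| * supN f) := by
    intro j
    refine (cexp_sub_le _ _).trans ?_
    have h1 : ‖z * ((f (σb j y) : ℝ):ℂ) - z * ((f (σb j x) : ℝ):ℂ)‖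
        ≤ ‖z‖ * (lipN d f * (γ⁻¹ * d x y)) := by
      rw [← mul_sub, norm_mul, ← Complex.ofReal_sub, Complex.norm_real, Real.norm_eq_abs]
      apply mul_le_mul_of_nonneg_left _ (norm_nonneg z)
      calc |f (σb j y) - f (σb j x)| ≤ lipN d f * d (σb j y) (σb j x) := hfL _ _
        _ ≤ lipN d f * (γ⁻¹ * d x y) := by
            apply mul_le_mul_of_nonneg_left _ hL0
            have h := hA1 j y x
            rwa [hd_symm x y]
    have h2 : Real.exp (max (z * ((f (σb j y) : ℝ):ℂ)).re (z * ((f (σb j x) : ℝ):ℂ)).re)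
        ≤ Real.exp (|z.re| * supN f) :=
      Real.exp_le_exp.2 (max_le (hre _) (hre _))
    exact mul_le_mul h1 h2 (Real.exp_pos _).le (by positivity)
  -- rewriting of the perturbed transfer operator
  have hZrw : ∀ p, transferZ g σb f z (fun t => ((u t : ℝ):ℂ)) p
      = ∑' j, ((Real.exp (g j p) * u (σb j p) : ℝ):ℂ)
          * Complex.exp (z * ((f (σb j p) : ℝ):ℂ)) := by
    intro p
    unfold transferZ
    congr 1; funext j
    rw [Complex.exp_add, ← Complex.ofReal_exp]
    push_cast
    ring
  have habsK : ∀ p j, ‖((Real.exp (g j p) * u (σb j p) : ℝ):ℂ)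
        * Complex.exp (z * ((f (σb j p) : ℝ):ℂ))‖
      ≤ Real.exp (g j p) * u (σb j p) * Real.exp (|z.re| * supN f) := by
    intro p j
    rw [norm_mul, Complex.norm_real, Real.norm_eq_abs,
      _root_.abs_of_nonneg (mul_nonneg (Real.exp_pos _).le (hu_nn _)), Complex.norm_exp]
    exact mul_le_mul_of_nonneg_left (Real.exp_le_exp.2 (hre _))
      (mul_nonneg (Real.exp_pos _).le (hu_nn _))
  have hsumC : ∀ p, Summable (fun j => ((Real.exp (g j p) * u (σb j p) : ℝ):ℂ)
      * Complex.exp (z * ((f (σb j p) : ℝ):ℂ))) := by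
    intro p
    apply Summable.of_norm
    apply Summable.of_nonneg_of_le (fun j => norm_nonneg _) (fun j => ?_)
      ((hsum p).mul_right (Real.exp (|z.re| * supN f)))
    simpa using habsK p j
  -- real coefficient sum
  have haR : Real.exp (B * d x y) * transferR g σb u y - transferR g σb u x
      = ∑' j, (Real.exp (B * d x y) * (Real.exp (g j y) * u (σb j y))
          - Real.exp (g j x) * u (σb j x)) := by
    unfold transferR
    rw [Summable.tsum_sub ((hsum y).mul_left _) (hsum x), tsum_mul_left]
  have ha_nn : ∀ j, 0 ≤ Real.exp (B * d x y) * (Real.exp (g j y) * u (σb j y))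
      - Real.exp (g j x) * u (σb j x) := by
    intro j
    nlinarith [hstar j, mul_nonneg (Real.exp_pos (g j x)).le (hu_nn (σb j x))]
  have ha_sum : Summable (fun j => Real.exp (B * d x y) * (Real.exp (g j y) * u (σb j y))
      - Real.exp (g j x) * u (σb j x)) := ((hsum y).mul_left _).sub (hsum x)
  -- key decomposition identity
  have key : (Real.exp (B * d x y) : ℂ) * transferZ g σb f z (fun t => ((u t : ℝ):ℂ)) y
        - transferZ g σb f z (fun t => ((u t : ℝ):ℂ)) x
        - ((Real.exp (B * d x y) * transferR g σb u y - transferR g σb u x : ℝ) : ℂ)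
      = ∑' j, (((Real.exp (B * d x y) * (Real.exp (g j y) * u (σb j y))
              - Real.exp (g j x) * u (σb j x) : ℝ):ℂ)
            * (Complex.exp (z * ((f (σb j y) : ℝ):ℂ)) - 1)
          + ((Real.exp (g j x) * u (σb j x) : ℝ):ℂ)
            * (Complex.exp (z * ((f (σb j y) : ℝ):ℂ))
              - Complex.exp (z * ((f (σb j x) : ℝ):ℂ)))) := by
    rw [hZrw y, hZrw x, haR, Complex.ofReal_tsum, ← tsum_mul_left,
      ← Summable.tsum_sub ((hsumC y).mul_left _) (hsumC x),
      ← Summable.tsum_sub (((hsumC y).mul_left _).sub (hsumC x)) (Complex.summable_ofReal.2 ha_sum)]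
    apply tsum_congr
    intro j
    push_cast
    ring
  -- termwise bound
  have hterm_bound : ∀ j, ‖
        ((Real.exp (B * d x y) * (Real.exp (g j y) * u (σb j y))
            - Real.exp (g j x) * u (σb j x) : ℝ):ℂ)
          * (Complex.exp (z * ((f (σb j y) : ℝ):ℂ)) - 1)
        + ((Real.exp (g j x) * u (σb j x) : ℝ):ℂ)
          * (Complex.exp (z * ((f (σb j y) : ℝ):ℂ))
            - Complex.exp (z * ((f (σb j x) : ℝ):ℂ)))‖
      ≤ (Real.exp (B * d x y) * (Real.exp (g j y) * u (σb j y))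
            - Real.exp (g j x) * u (σb j x))
          * (‖z‖ * supN f * Real.exp (|z.re| * supN f))
        + (Real.exp (g j x) * u (σb j x))
          * (‖z‖ * (lipN d f * (γ⁻¹ * d x y)) * Real.exp (|z.re| * supN f)) := by
    intro j
    refine (norm_add_le _ _).trans ?_
    rw [norm_mul, norm_mul, Complex.norm_real, Real.norm_eq_abs, Complex.norm_real, Real.norm_eq_abs,
      _root_.abs_of_nonneg (ha_nn j),
      _root_.abs_of_nonneg (mul_nonneg (Real.exp_pos _).le (hu_nn _))]
    exact add_le_add
      (mul_le_mul_of_nonneg_left (hexp1 _) (ha_nn j))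
      (mul_le_mul_of_nonneg_left (hexp2 j)
        (mul_nonneg (Real.exp_pos _).le (hu_nn _)))
  have hsum_bound : Summable (fun j =>
      (Real.exp (B * d x y) * (Real.exp (g j y) * u (σb j y))
          - Real.exp (g j x) * u (σb j x))
        * (‖z‖ * supN f * Real.exp (|z.re| * supN f))
      + (Real.exp (g j x) * u (σb j x))
        * (‖z‖ * (lipN d f * (γ⁻¹ * d x y)) * Real.exp (|z.re| * supN f))) :=
    (ha_sum.mul_right _).add ((hsum x).mul_right _)
  have hsum_norm : Summable (fun j => ‖((Real.exp (B * d x y) * (Real.exp (g j y) * u (σb j y))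
            - Real.exp (g j x) * u (σb j x) : ℝ):ℂ)
          * (Complex.exp (z * ((f (σb j y) : ℝ):ℂ)) - 1)
        + ((Real.exp (g j x) * u (σb j x) : ℝ):ℂ)
          * (Complex.exp (z * ((f (σb j y) : ℝ):ℂ))
            - Complex.exp (z * ((f (σb j x) : ℝ):ℂ)))‖) := by
    apply Summable.of_nonneg_of_le (fun j => norm_nonneg _) (fun j => ?_) hsum_bound
    simpa using hterm_bound j
  have habs : ‖(Real.exp (B * d x y) : ℂ)
        * transferZ g σb f z (fun t => ((u t : ℝ):ℂ)) y
        - transferZ g σb f z (fun t => ((u t : ℝ):ℂ)) x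
        - ((Real.exp (B * d x y) * transferR g σb u y - transferR g σb u x : ℝ) : ℂ)‖
      ≤ (Real.exp (B * d x y) * transferR g σb u y - transferR g σb u x)
          * (‖z‖ * supN f * Real.exp (|z.re| * supN f))
        + transferR g σb u x
          * (‖z‖ * (lipN d f * (γ⁻¹ * d x y)) * Real.exp (|z.re| * supN f)) := by
    rw [key]
    refine (norm_tsum_le_tsum_norm hsum_norm).trans ?_
    have h1 : ∑' j, ‖((Real.exp (B * d x y) * (Real.exp (g j y) * u (σb j y))
            - Real.exp (g j x) * u (σb j x) : ℝ):ℂ)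
          * (Complex.exp (z * ((f (σb j y) : ℝ):ℂ)) - 1)
        + ((Real.exp (g j x) * u (σb j x) : ℝ):ℂ)
          * (Complex.exp (z * ((f (σb j y) : ℝ):ℂ))
            - Complex.exp (z * ((f (σb j x) : ℝ):ℂ)))‖
        ≤ ∑' j, ((Real.exp (B * d x y) * (Real.exp (g j y) * u (σb j y))
              - Real.exp (g j x) * u (σb j x))
            * (‖z‖ * supN f * Real.exp (|z.re| * supN f))
          + (Real.exp (g j x) * u (σb j x))
            * (‖z‖ * (lipN d f * (γ⁻¹ * d x y)) * Real.exp (|z.re| * supN f))) := by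
      apply Summable.tsum_le_tsum (fun j => ?_) hsum_norm hsum_bound
      simpa using hterm_bound j
    refine h1.trans ?_
    rw [Summable.tsum_add (ha_sum.mul_right _) ((hsum x).mul_right _), tsum_mul_right, tsum_mul_right,
      ← haR]
    rfl
  -- conclusion
  have hne : ((Real.exp (B * d x y) * transferR g σb u y - transferR g σb u x : ℝ) : ℂ) ≠ 0 := by
    exact_mod_cast ne_of_gt part1
  have hrw : (↑(Real.exp (B * d x y)) * transferZ g σb f z (fun t => ((u t : ℝ):ℂ)) y
        - transferZ g σb f z (fun t => ((u t : ℝ):ℂ)) x)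
        / ((Real.exp (B * d x y) * transferR g σb u y - transferR g σb u x : ℝ) : ℂ) - 1
      = ((Real.exp (B * d x y) : ℂ) * transferZ g σb f z (fun t => ((u t : ℝ):ℂ)) y
        - transferZ g σb f z (fun t => ((u t : ℝ):ℂ)) x
        - ((Real.exp (B * d x y) * transferR g σb u y - transferR g σb u x : ℝ) : ℂ))
        / ((Real.exp (B * d x y) * transferR g σb u y - transferR g σb u x : ℝ) : ℂ) := by
    rw [div_sub_one hne]
  rw [hrw, norm_div, Complex.norm_real, Real.norm_eq_abs, _root_.abs_of_pos part1, div_le_iff₀ part1]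
  refine habs.trans ?_
  have hC2 : transferR g σb u x
        * (‖z‖ * (lipN d f * (γ⁻¹ * d x y)) * Real.exp (|z.re| * supN f))
      ≤ (Real.exp (B * d x y) * transferR g σb u y - transferR g σb u x)
        * (‖z‖ * lipN d f * Real.exp (|z.re| * supN f)) := by
    have h1 : transferR g σb u x * (γ⁻¹ * d x y)
        ≤ Real.exp (B * d x y) * transferR g σb u y - transferR g σb u x := by
      rw [inv_mul_eq_div]
      exact hl0low
    calc transferR g σb u x
          * (‖z‖ * (lipN d f * (γ⁻¹ * d x y)) * Real.exp (|z.re| * supN f))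
        = (transferR g σb u x * (γ⁻¹ * d x y))
          * (‖z‖ * lipN d f * Real.exp (|z.re| * supN f)) := by ring
      _ ≤ (Real.exp (B * d x y) * transferR g σb u y - transferR g σb u x)
          * (‖z‖ * lipN d f * Real.exp (|z.re| * supN f)) := by
          apply mul_le_mul_of_nonneg_right h1
          positivity
  have hfin : (Real.exp (B * d x y) * transferR g σb u y - transferR g σb u x)
        * (‖z‖ * supN f * Real.exp (|z.re| * supN f))
      + (Real.exp (B * d x y) * transferR g σb u y - transferR g σb u x)
        * (‖z‖ * lipN d f * Real.exp (|z.re| * supN f))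
      = Real.exp (|z.re| * supN f) * ‖z‖ * (supN f + lipN d f)
        * (Real.exp (B * d x y) * transferR g σb u y - transferR g σb u x) := by ring
  linarith [hC2]
end

section
/- The transfer operator L = L(0) maps C_ℝ \ {0} into itself, and the diameter of L(C_ℝ \ {0}) with respect to the Hilbert metric of C_ℝ is at most D_ℝ; that is, h_{C_ℝ}(L u, L v) ≤ D_ℝ for all u, v ∈ C_ℝ \ {0}. -/
open Complex

section AuxLemmas

lemma aux_exp_sub_one_le {t : ℝ} (_ht : 0 ≤ t) : Real.exp t - 1 ≤ t * Real.exp t := by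
  have h := Real.add_one_le_exp (-t)
  have h2 : (1 - t) * Real.exp t ≤ Real.exp (-t) * Real.exp t :=
    mul_le_mul_of_nonneg_right (by linarith) (Real.exp_pos t).le
  rw [← Real.exp_add] at h2
  simp at h2
  nlinarith

lemma aux_one_sub_exp_mono {x y : ℝ} (hy : 0 < y) (hxy : y ≤ x) :
    y * (1 - Real.exp (-x)) ≤ x * (1 - Real.exp (-y)) := by
  have h1 : Real.exp (-x) = Real.exp (-y) * Real.exp (-(x - y)) := by
    rw [← Real.exp_add]; ring_nf
  have h2 : 1 - (x - y) ≤ Real.exp (-(x-y)) := by have := Real.add_one_le_exp (-(x-y)); linarith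
  have h3 : (1 + y) * Real.exp (-y) ≤ 1 := by
    have := Real.add_one_le_exp y
    have := mul_le_mul_of_nonneg_right (by linarith : (1:ℝ) + y ≤ Real.exp y) (Real.exp_pos (-y)).le
    rw [← Real.exp_add] at this; simp at this; linarith
  have hey := (Real.exp_pos (-y)).le
  nlinarith [mul_le_mul_of_nonneg_left h2 hey, Real.exp_pos (-(x-y))]

lemma aux_key_ratio {B B' dd : ℝ} (hB' : 0 < B') (hlt : B' < B) (hd : 0 < dd) :
    Real.exp (B*dd) - Real.exp (-(B'*dd)) ≤
      ((B+B')/(B-B')) * (Real.exp (B*dd) - Real.exp (B'*dd)) := by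
  have hy : 0 < (B - B') * dd := by have : 0 < B - B' := by linarith
                                    positivity
  have h2 := mul_le_mul_of_nonneg_left
    (aux_one_sub_exp_mono hy (by nlinarith : (B - B') * dd ≤ (B + B') * dd))
    (Real.exp_pos (B * dd)).le
  have e1 : Real.exp (B*dd) * Real.exp (-((B+B')*dd)) = Real.exp (-(B'*dd)) := by
    rw [← Real.exp_add]; ring_nf
  have e2 : Real.exp (B*dd) * Real.exp (-((B-B')*dd)) = Real.exp (B'*dd) := by
    rw [← Real.exp_add]; ring_nf
  have hBB : 0 < B - B' := by linarith
  have l1 : Real.exp (B*dd) * ((B - B') * dd * (1 - Real.exp (-((B+B')*dd))))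
      = dd * ((B - B') * (Real.exp (B*dd) - Real.exp (-(B'*dd)))) := by rw [← e1]; ring
  have l2 : Real.exp (B*dd) * ((B + B') * dd * (1 - Real.exp (-((B-B')*dd))))
      = dd * ((B + B') * (Real.exp (B*dd) - Real.exp (B'*dd))) := by rw [← e2]; ring
  rw [l1, l2] at h2
  have h4 := (mul_le_mul_iff_right₀ hd).mp h2
  rw [div_mul_eq_mul_div, le_div_iff₀ hBB]
  linarith [h4]

lemma aux_elog_le {x : ENNReal} {r : ℝ} (hr : 0 < r) (hx : x ≤ ENNReal.ofReal r) :
    elog x ≤ (Real.log r : EReal) := by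
  unfold elog
  split_ifs with h0 hT
  · exact bot_le
  · exact absurd hT (hx.trans_lt ENNReal.ofReal_lt_top).ne
  · exact EReal.coe_le_coe_iff.mpr
      (Real.log_le_log (ENNReal.toReal_pos h0 hT) (ENNReal.toReal_le_of_le_ofReal hr.le hx))

lemma aux_hilbert_le {W : Type*} [AddCommGroup W] [Module ℝ W]
    (Cr : Set W) (U V : W) {t s Dr : ℝ}
    (hs : 0 < s) (hst : s ≤ t) (h1 : t • U - V ∈ Cr) (h2 : V - s • U ∈ Cr)
    (hD : Real.log (t / s) ≤ Dr) :
    hilbertMetric Cr U V ≤ (Dr : EReal) := by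
  unfold hilbertMetric
  have hI : sInf {t' : ENNReal | ∃ s', 0 < s' ∧ t' = ENNReal.ofReal s' ∧ s' • U - V ∈ Cr}
      ≤ ENNReal.ofReal t := sInf_le ⟨t, lt_of_lt_of_le hs hst, rfl, h1⟩
  have hS : ENNReal.ofReal s
      ≤ sSup {t' : ENNReal | ∃ s', 0 ≤ s' ∧ t' = ENNReal.ofReal s' ∧ V - s' • U ∈ Cr} :=
    le_sSup ⟨s, hs.le, rfl, h2⟩
  have hq := ENNReal.div_le_div hI hS
  rw [← ENNReal.ofReal_div_of_pos hs] at hq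
  exact le_trans (aux_elog_le (div_pos (hs.trans_le hst) hs) hq) (EReal.coe_le_coe_iff.mpr hD)

lemma aux_transfer_cone {X J : Type*} [Countable J] [Nonempty X]
    (d : X → X → ℝ) (σb : J → X → X) (g : J → X → ℝ)
    (γ G B B' MS : ℝ) (hγ : 1 < γ) (hG : 0 < G) (hB : 0 ≤ B) (hB' : G + B / γ ≤ B')
    (hd0 : ∀ x y, 0 ≤ d x y) (hd_symm : ∀ x y, d x y = d y x) (hd_le : ∀ x y, d x y ≤ 1)
    (hA1 : ∀ j x y, d (σb j x) (σb j y) ≤ γ⁻¹ * d x y)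
    (hA2 : ∀ j x y, |g j x - g j y| ≤ G * d x y)
    (hsum : ∀ x, Summable (fun j => Real.exp (g j x)))
    (hMS : ∀ x, (∑' j, Real.exp (g j x)) ≤ MS)
    (u : X → ℝ) (hu : u ∈ coneR d B) (unn : ∀ x, 0 ≤ u x) :
    transferR g σb u ∈ coneR d B' := by
  obtain ⟨⟨cu, hcu0, hcu⟩, ⟨Mu, hMu⟩, hcone⟩ := hu
  have hγ0 : (0:ℝ) < γ := by linarith
  have hMu0 : 0 ≤ Mu := le_trans (abs_nonneg _) (hMu (Classical.arbitrary X))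
  have huMu : ∀ x, u x ≤ Mu := fun x => (abs_le.mp (hMu x)).2
  have hMS0 : 0 ≤ MS := le_trans (tsum_nonneg (fun j => (Real.exp_pos _).le))
    (hMS (Classical.arbitrary X))
  have Su : ∀ x, Summable (fun j => Real.exp (g j x) * u (σb j x)) := fun x =>
    Summable.of_nonneg_of_le (fun j => mul_nonneg (Real.exp_pos _).le (unn _))
      (fun j => mul_le_mul_of_nonneg_left (huMu _) (Real.exp_pos _).le)
      ((hsum x).mul_right Mu)
  set Cc := Real.exp G * (G * Mu + cu / γ) with hCc
  have hCc0 : 0 ≤ Cc :=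
    mul_nonneg (Real.exp_pos G).le
      (add_nonneg (mul_nonneg hG.le hMu0) (div_nonneg hcu0 hγ0.le))
  have key : ∀ x y, transferR g σb u x ≤ transferR g σb u y + (MS * Cc) * d x y := by
    intro x y
    have hdd0 : 0 ≤ d x y := hd0 x y
    have term : ∀ j, Real.exp (g j x) * u (σb j x)
        ≤ Real.exp (g j y) * u (σb j y) + Real.exp (g j y) * (Cc * d x y) := by
      intro j
      have hgd : g j x ≤ g j y + G * d x y := by have := abs_le.mp (hA2 j x y); linarith
      have ea : Real.exp (g j x) ≤ Real.exp (g j y) * Real.exp (G * d x y) := by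
        rw [← Real.exp_add]; exact Real.exp_le_exp.mpr hgd
      have hu2 : u (σb j x) ≤ u (σb j y) + cu * (γ⁻¹ * d x y) := by
        have h1 := (abs_le.mp (hcu (σb j x) (σb j y))).2
        have h2 := mul_le_mul_of_nonneg_left (hA1 j x y) hcu0
        linarith
      have hE1 : Real.exp (G * d x y) - 1 ≤ (G * d x y) * Real.exp (G * d x y) :=
        aux_exp_sub_one_le (mul_nonneg hG.le hdd0)
      have hEG : Real.exp (G * d x y) ≤ Real.exp G :=
        Real.exp_le_exp.mpr (by nlinarith [hd_le x y])
      have hb := (Real.exp_pos (g j y)).le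
      have hE0 := (Real.exp_pos (G * d x y)).le
      have s1 : Real.exp (g j x) * u (σb j x)
          ≤ (Real.exp (g j y) * Real.exp (G * d x y)) * (u (σb j y) + cu * (γ⁻¹ * d x y)) :=
        le_trans (mul_le_mul_of_nonneg_right ea (unn _))
          (mul_le_mul_of_nonneg_left hu2 (mul_nonneg hb hE0))
      have s2 : Real.exp (G * d x y) * u (σb j y)
          ≤ u (σb j y) + (G * d x y) * Real.exp G * Mu := by
        have t1 : (Real.exp (G * d x y) - 1) * u (σb j y)
            ≤ ((G * d x y) * Real.exp (G * d x y)) * u (σb j y) :=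
          mul_le_mul_of_nonneg_right hE1 (unn _)
        have t2 : ((G * d x y) * Real.exp (G * d x y)) * u (σb j y)
            ≤ ((G * d x y) * Real.exp G) * Mu :=
          mul_le_mul (mul_le_mul_of_nonneg_left hEG (mul_nonneg hG.le hdd0)) (huMu _) (unn _)
            (mul_nonneg (mul_nonneg hG.le hdd0) (Real.exp_pos G).le)
        nlinarith [t1, t2]
      have s3 : Real.exp (G * d x y) * (cu * (γ⁻¹ * d x y))
          ≤ Real.exp G * (cu * (γ⁻¹ * d x y)) :=
        mul_le_mul_of_nonneg_right hEG (by positivity)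
      have s4 : Real.exp (G * d x y) * u (σb j y) + Real.exp (G * d x y) * (cu * (γ⁻¹ * d x y))
          ≤ u (σb j y) + Cc * d x y := by
        have hCcd : Cc * d x y
            = (G * d x y) * Real.exp G * Mu + Real.exp G * (cu * (γ⁻¹ * d x y)) := by
          rw [hCc, div_eq_mul_inv]; ring
        rw [hCcd]
        linarith [s2, s3]
      calc Real.exp (g j x) * u (σb j x) ≤ _ := s1
        _ = Real.exp (g j y) * (Real.exp (G * d x y) * u (σb j y)
              + Real.exp (G * d x y) * (cu * (γ⁻¹ * d x y))) := by ring
        _ ≤ Real.exp (g j y) * (u (σb j y) + Cc * d x y) := mul_le_mul_of_nonneg_left s4 hb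
        _ = Real.exp (g j y) * u (σb j y) + Real.exp (g j y) * (Cc * d x y) := by ring
    have sumR : Summable (fun j => Real.exp (g j y) * u (σb j y)
        + Real.exp (g j y) * (Cc * d x y)) := (Su y).add ((hsum y).mul_right _)
    have h := Summable.tsum_le_tsum term (Su x) sumR
    rw [Summable.tsum_add (Su y) ((hsum y).mul_right _), tsum_mul_right] at h
    have h2 : (∑' j, Real.exp (g j y)) * (Cc * d x y) ≤ MS * (Cc * d x y) :=
      mul_le_mul_of_nonneg_right (hMS y) (mul_nonneg hCc0 hdd0)
    simp only [transferR] at h ⊢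
    nlinarith [h, h2]
  refine ⟨⟨MS * Cc, mul_nonneg hMS0 hCc0, ?_⟩, ⟨MS * Mu, ?_⟩, ?_⟩
  · intro x y
    rw [abs_sub_le_iff]
    constructor
    · have := key x y; linarith
    · have := key y x; rw [hd_symm y x] at this; linarith
  · intro x
    have hnn : 0 ≤ transferR g σb u x :=
      tsum_nonneg (fun j => mul_nonneg (Real.exp_pos _).le (unn _))
    rw [_root_.abs_of_nonneg hnn]
    have h := Summable.tsum_le_tsum
      (fun j => mul_le_mul_of_nonneg_left (huMu (σb j x)) (Real.exp_pos (g j x)).le)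
      (Su x) ((hsum x).mul_right Mu)
    rw [tsum_mul_right] at h
    exact h.trans (mul_le_mul_of_nonneg_right (hMS x) hMu0)
  · intro x y
    have hdd0 : 0 ≤ d x y := hd0 x y
    have term2 : ∀ j, Real.exp (g j x) * u (σb j x)
        ≤ Real.exp (B' * d x y) * (Real.exp (g j y) * u (σb j y)) := by
      intro j
      have hgd : g j x ≤ g j y + G * d x y := by have := abs_le.mp (hA2 j x y); linarith
      have ea : Real.exp (g j x) ≤ Real.exp (g j y) * Real.exp (G * d x y) := by
        rw [← Real.exp_add]; exact Real.exp_le_exp.mpr hgd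
      have c2 : Real.exp (B * d (σb j x) (σb j y)) ≤ Real.exp (B / γ * d x y) := by
        apply Real.exp_le_exp.mpr
        have := mul_le_mul_of_nonneg_left (hA1 j x y) hB
        calc B * d (σb j x) (σb j y) ≤ B * (γ⁻¹ * d x y) := this
          _ = B / γ * d x y := by field_simp
      have hu2 : u (σb j x) ≤ Real.exp (B / γ * d x y) * u (σb j y) :=
        (hcone (σb j x) (σb j y)).trans (mul_le_mul_of_nonneg_right c2 (unn _))
      have s1 : Real.exp (g j x) * u (σb j x)
          ≤ (Real.exp (g j y) * Real.exp (G * d x y))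
            * (Real.exp (B / γ * d x y) * u (σb j y)) :=
        mul_le_mul ea hu2 (unn _) (mul_nonneg (Real.exp_pos _).le (Real.exp_pos _).le)
      have e3 : Real.exp (G * d x y) * Real.exp (B / γ * d x y) ≤ Real.exp (B' * d x y) := by
        rw [← Real.exp_add]
        apply Real.exp_le_exp.mpr
        nlinarith [hB', hdd0]
      calc Real.exp (g j x) * u (σb j x) ≤ _ := s1
        _ = (Real.exp (G * d x y) * Real.exp (B / γ * d x y))
            * (Real.exp (g j y) * u (σb j y)) := by ring
        _ ≤ Real.exp (B' * d x y) * (Real.exp (g j y) * u (σb j y)) :=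
          mul_le_mul_of_nonneg_right e3 (mul_nonneg (Real.exp_pos _).le (unn _))
    have h := Summable.tsum_le_tsum term2 (Su x) ((Su y).mul_left _)
    rw [tsum_mul_left] at h
    exact h

end AuxLemmas

set_option maxHeartbeats 2000000 in
/-- Lemma 5.1(1): the transfer operator maps the real cone minus zero into
itself, and the Hilbert diameter of the image is at most D_R. -/
theorem transfer_real_cone_contraction
    {J : Type*} [Countable J] [Nonempty J]
    (d : ↥(Set.Icc (0:ℝ) 1) → ↥(Set.Icc (0:ℝ) 1) → ℝ)
    (hd_eq : ∀ x y, d x y = 0 ↔ x = y)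
    (hd_symm : ∀ x y, d x y = d y x)
    (hd_tri : ∀ x y z, d x z ≤ d x y + d y z)
    (hd_le : ∀ x y, d x y ≤ 1)
    (hd_compat : ∀ (x : ↥(Set.Icc (0:ℝ) 1)) (ε : ℝ), 0 < ε →
      (∃ δ > 0, ∀ y, dist x y < δ → d x y < ε) ∧
      (∃ δ > 0, ∀ y, d x y < δ → dist x y < ε))
    (σb : J → ↥(Set.Icc (0:ℝ) 1) → ↥(Set.Icc (0:ℝ) 1)) (g : J → ↥(Set.Icc (0:ℝ) 1) → ℝ)
    (γ G : ℝ) (hγ : 1 < γ) (hG : 0 < G)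
    (hA1 : ∀ j x y, d (σb j x) (σb j y) ≤ γ⁻¹ * d x y)
    (hA2 : ∀ j x y, |g j x - g j y| ≤ G * d x y)
    (hA3 : ∃ M : ℝ, ∀ x, Summable (fun j => Real.exp (g j x)) ∧
      (∑' j, Real.exp (g j x)) ≤ M)
    (f : ↥(Set.Icc (0:ℝ) 1) → ℝ)
    (hfLip : ∃ c : ℝ, 0 ≤ c ∧ ∀ x y, |f x - f y| ≤ c * d x y)
    (hfBdd : ∃ M : ℝ, ∀ x, |f x| ≤ M)
    (B Dr : ℝ) (hB : B = (γ * G + 1) / (γ - 1))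
    (hDr : Dr = 2 * (γ ^ 2 * G + 1) / (γ * (γ - 1)) +
      2 * Real.log ((2 * γ ^ 2 * G + γ + 1) / (γ - 1))) :
    (∀ u ∈ coneR d B, u ≠ 0 → transferR g σb u ∈ coneR d B ∧ transferR g σb u ≠ 0) ∧
    ∀ u ∈ coneR d B, u ≠ 0 → ∀ v ∈ coneR d B, v ≠ 0 →
      hilbertMetric (coneR d B) (transferR g σb u) (transferR g σb v) ≤ (Dr : EReal) := by
  classical
  obtain ⟨MS, hA3'⟩ := hA3
  have hsum : ∀ x, Summable (fun j => Real.exp (g j x)) := fun x => (hA3' x).1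
  have hMS : ∀ x, (∑' j, Real.exp (g j x)) ≤ MS := fun x => (hA3' x).2
  have hγ0 : (0:ℝ) < γ := by linarith
  have hγ1 : (0:ℝ) < γ - 1 := by linarith
  have hγne : γ ≠ 0 := hγ0.ne'
  have hγ1ne : γ - 1 ≠ 0 := hγ1.ne'
  have hdxx : ∀ x, d x x = 0 := fun x => (hd_eq x x).2 rfl
  have hd0 : ∀ x y, 0 ≤ d x y := by
    intro x y
    have h1 := hd_tri x y x
    have h2 := hdxx x
    have h3 := hd_symm x y
    linarith
  have hdpos : ∀ x y, x ≠ y → 0 < d x y := fun x y h =>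
    lt_of_le_of_ne (hd0 x y) (fun h0 => h ((hd_eq x y).1 h0.symm))
  obtain ⟨x0, x1, hx01⟩ : ∃ a b : ↥(Set.Icc (0:ℝ) 1), a ≠ b :=
    ⟨⟨0, by norm_num⟩, ⟨1, by norm_num⟩, by
      intro h; rw [Subtype.ext_iff] at h; norm_num at h⟩
  haveI : Nonempty ↥(Set.Icc (0:ℝ) 1) := ⟨x0⟩
  have hB0 : 0 < B := by
    rw [hB]; apply div_pos (by nlinarith) hγ1
  obtain ⟨B', hB'def⟩ : ∃ b : ℝ, b = G + B / γ := ⟨_, rfl⟩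
  have hB'0 : 0 < B' := by rw [hB'def]; exact add_pos hG (div_pos hB0 hγ0)
  have hBB' : B - B' = 1/γ := by rw [hB'def, hB]; field_simp; ring
  have hB'B : B' < B := by
    have : (0:ℝ) < 1/γ := by positivity
    linarith [hBB']
  have hB'eq : B' = (γ^2*G+1)/(γ*(γ-1)) := by rw [hB'def, hB]; field_simp; ring
  obtain ⟨K, hKdef⟩ : ∃ k : ℝ, k = (2*γ^2*G+γ+1)/(γ-1) := ⟨_, rfl⟩
  have hK : (B + B')/(B - B') = K := by
    rw [hBB', hKdef, hB'def, hB]; field_simp; ring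
  have hK1 : 1 ≤ K := by
    rw [← hK, le_div_iff₀ (by linarith : (0:ℝ) < B - B')]; linarith
  have hK0 : 0 < K := lt_of_lt_of_le one_pos hK1
  have hDr2 : Dr = 2*B' + 2*Real.log K := by rw [hDr, hB'eq, hKdef]; ring
  -- cone elements are nonnegative
  have cone_nonneg : ∀ (A : ℝ), 0 < A → ∀ w ∈ coneR d A, ∀ y, 0 ≤ w y := by
    intro A hA w hw y
    by_contra hneg
    push_neg at hneg
    obtain ⟨-, -, hc⟩ := hw
    obtain ⟨z, hzy⟩ : ∃ z, z ≠ y := by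
      rcases eq_or_ne y x0 with h | h
      · exact ⟨x1, by rw [h]; exact fun hh => hx01 hh.symm⟩
      · exact ⟨x0, fun hh => h hh.symm⟩
    have hdp : 0 < d y z := hdpos y z (Ne.symm hzy)
    have h1 := hc y z
    have h2 := hc z y
    rw [hd_symm z y] at h2
    have hE1 : 1 < Real.exp (A * d y z) := by
      rw [show (1:ℝ) = Real.exp 0 by simp]
      exact Real.exp_lt_exp.mpr (by positivity)
    have h3 : w y ≤ Real.exp (A * d y z) * (Real.exp (A * d y z) * w y) :=
      le_trans h1 (mul_le_mul_of_nonneg_left h2 (Real.exp_pos _).le)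
    have hs : Real.exp (A * d y z) * w y < w y := by nlinarith [hE1, hneg]
    have hs2 := mul_lt_mul_of_pos_left hs (Real.exp_pos (A * d y z))
    linarith [h3, hs, hs2]
  have cone_pos : ∀ (A : ℝ), 0 < A → ∀ w ∈ coneR d A, w ≠ 0 → ∀ y, 0 < w y := by
    intro A hA w hw hw0 y
    have hnn := cone_nonneg A hA w hw
    obtain ⟨xw, hxw⟩ := Function.ne_iff.mp hw0
    have hposx : 0 < w xw := lt_of_le_of_ne (hnn xw) (Ne.symm (by simpa using hxw))
    obtain ⟨-, -, hc⟩ := hw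
    have h1 := hc xw y
    nlinarith [h1, hnn y, Real.exp_pos (A * d xw y), hposx]
  have hsub : ∀ w ∈ coneR d B', (∀ y, 0 ≤ w y) → w ∈ coneR d B := by
    intro w hw hnn
    obtain ⟨hl, hbd, hc⟩ := hw
    refine ⟨hl, hbd, fun x y => (hc x y).trans ?_⟩
    exact mul_le_mul_of_nonneg_right
      (Real.exp_le_exp.mpr (by nlinarith [hd0 x y, hB'B.le])) (hnn y)
  have hmap : ∀ u ∈ coneR d B, u ≠ 0 →
      (transferR g σb u ∈ coneR d B' ∧ ∀ x, 0 < transferR g σb u x) := by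
    intro u hu hu0
    have unn := cone_nonneg B hB0 u hu
    have upos := cone_pos B hB0 u hu hu0
    constructor
    · exact aux_transfer_cone d σb g γ G B B' MS hγ hG hB0.le hB'def.ge hd0 hd_symm hd_le
        hA1 hA2 hsum hMS u hu unn
    · intro x
      obtain ⟨-, ⟨Mu, hMu⟩, -⟩ := id hu
      have Su : Summable (fun j => Real.exp (g j x) * u (σb j x)) :=
        Summable.of_nonneg_of_le (fun j => mul_nonneg (Real.exp_pos _).le (unn _))
          (fun j => mul_le_mul_of_nonneg_left ((abs_le.mp (hMu _)).2) (Real.exp_pos _).le)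
          ((hsum x).mul_right Mu)
      have j0 : J := Classical.arbitrary J
      calc (0:ℝ) < Real.exp (g j0 x) * u (σb j0 x) := mul_pos (Real.exp_pos _) (upos _)
        _ ≤ transferR g σb u x := by
            simp only [transferR]
            exact Summable.le_tsum Su j0 (fun j _ => mul_nonneg (Real.exp_pos _).le (unn _))
  refine ⟨?_, ?_⟩
  · intro u hu hu0
    obtain ⟨hmem, hpos⟩ := hmap u hu hu0
    refine ⟨hsub _ hmem (fun y => (hpos y).le), ?_⟩
    intro h
    have := hpos x0
    rw [h] at this
    simp at this
  · intro u hu hu0 v hv hv0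
    obtain ⟨hU, hUpos⟩ := hmap u hu hu0
    obtain ⟨hV, hVpos⟩ := hmap v hv hv0
    obtain ⟨U, hUdef⟩ : ∃ w, w = transferR g σb u := ⟨_, rfl⟩
    obtain ⟨V, hVdef⟩ : ∃ w, w = transferR g σb v := ⟨_, rfl⟩
    rw [← hUdef] at hU hUpos
    rw [← hVdef] at hV hVpos
    rw [← hUdef, ← hVdef]
    obtain ⟨⟨cU, hcU0, hcU⟩, ⟨MU, hMU⟩, hconeU⟩ := hU
    obtain ⟨⟨cV, hcV0, hcV⟩, ⟨MV, hMV⟩, hconeV⟩ := hV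
    obtain ⟨r, hr_apply⟩ : ∃ w : ↥(Set.Icc (0:ℝ) 1) → ℝ, ∀ x, w x = V x / U x :=
      ⟨fun x => V x / U x, fun _ => rfl⟩
    obtain ⟨E2B, hE2Bdef⟩ : ∃ e : ℝ, e = Real.exp (2*B') := ⟨_, rfl⟩
    have hE2B0 : 0 < E2B := by rw [hE2Bdef]; exact Real.exp_pos _
    have rprop : ∀ x y, r x ≤ E2B * r y := by
      intro x y
      have h1 := hconeV x y
      have h2 := hconeU y x
      have e1 : Real.exp (B' * d x y) ≤ Real.exp B' :=
        Real.exp_le_exp.mpr (by nlinarith [hd_le x y, hd0 x y])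
      have e2 : Real.exp (B' * d y x) ≤ Real.exp B' :=
        Real.exp_le_exp.mpr (by nlinarith [hd_le y x, hd0 y x])
      have p : V x * U y ≤ (Real.exp (B' * d x y) * V y) * (Real.exp (B' * d y x) * U x) :=
        mul_le_mul h1 h2 (hUpos y).le (mul_nonneg (Real.exp_pos _).le (hVpos y).le)
      have q : (Real.exp (B' * d x y) * V y) * (Real.exp (B' * d y x) * U x)
          ≤ (Real.exp B' * V y) * (Real.exp B' * U x) :=
        mul_le_mul (mul_le_mul_of_nonneg_right e1 (hVpos y).le)
          (mul_le_mul_of_nonneg_right e2 (hUpos x).le)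
          (mul_nonneg (Real.exp_pos _).le (hUpos x).le)
          (mul_nonneg (Real.exp_pos _).le (hVpos y).le)
      have q2 : (Real.exp B' * V y) * (Real.exp B' * U x) = E2B * (V y * U x) := by
        rw [hE2Bdef, show (2:ℝ)*B' = B' + B' by ring, Real.exp_add]; ring
      have main : V x * U y ≤ E2B * (V y * U x) := by linarith [p, q, q2]
      rw [hr_apply, hr_apply, ← mul_div_assoc, div_le_div_iff₀ (hUpos x) (hUpos y)]
      linarith [main]
    have hbddA : BddAbove (Set.range r) := ⟨E2B * r x0, by rintro _ ⟨x, rfl⟩; exact rprop x x0⟩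
    have hbddB : BddBelow (Set.range r) :=
      ⟨0, by rintro _ ⟨x, rfl⟩; rw [hr_apply]; exact div_nonneg (hVpos x).le (hUpos x).le⟩
    have hne : (Set.range r).Nonempty := ⟨r x0, ⟨x0, rfl⟩⟩
    obtain ⟨m, hmdef⟩ : ∃ z : ℝ, z = sInf (Set.range r) := ⟨_, rfl⟩
    obtain ⟨Mr, hMrdef⟩ : ∃ z : ℝ, z = sSup (Set.range r) := ⟨_, rfl⟩
    have hm_le : ∀ x, m ≤ r x := fun x => by rw [hmdef]; exact csInf_le hbddB ⟨x, rfl⟩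
    have hM_ge : ∀ x, r x ≤ Mr := fun x => by rw [hMrdef]; exact le_csSup hbddA ⟨x, rfl⟩
    have hrx0 : 0 < r x0 := by rw [hr_apply]; exact div_pos (hVpos x0) (hUpos x0)
    have hm_pos : 0 < m := by
      have h1 : r x0 / E2B ≤ m := by
        rw [hmdef]
        exact le_csInf hne (by rintro _ ⟨y, rfl⟩; rw [div_le_iff₀ hE2B0]; nlinarith [rprop x0 y])
      have h2 : 0 < r x0 / E2B := div_pos hrx0 hE2B0
      linarith
    have hMm : Mr ≤ E2B * m := by
      rw [hMrdef]
      apply csSup_le hne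
      rintro _ ⟨x, rfl⟩
      have hx : r x / E2B ≤ m := by
        rw [hmdef]
        exact le_csInf hne (by rintro _ ⟨y, rfl⟩; rw [div_le_iff₀ hE2B0]; nlinarith [rprop x y])
      rw [div_le_iff₀ hE2B0] at hx
      linarith
    have hMr_pos : 0 < Mr := lt_of_lt_of_le hm_pos ((hm_le x0).trans (hM_ge x0))
    obtain ⟨t, htdef⟩ : ∃ z : ℝ, z = K * Mr := ⟨_, rfl⟩
    obtain ⟨s, hsdef⟩ : ∃ z : ℝ, z = m / K := ⟨_, rfl⟩
    have hs0 : 0 < s := by rw [hsdef]; exact div_pos hm_pos hK0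
    have ht0 : 0 < t := by rw [htdef]; exact mul_pos hK0 hMr_pos
    have hst : s ≤ t := by
      rw [htdef, hsdef]
      calc m / K ≤ m := div_le_self hm_pos.le hK1
        _ ≤ Mr := (hm_le x0).trans (hM_ge x0)
        _ ≤ K * Mr := le_mul_of_one_le_left hMr_pos.le hK1
    have hsK : s * K = m := by rw [hsdef]; exact div_mul_cancel₀ m hK0.ne'
    have hVleM : ∀ y, V y ≤ Mr * U y := by
      intro y
      have := hM_ge y
      rw [hr_apply, div_le_iff₀ (hUpos y)] at this
      linarith
    have hmleV : ∀ y, m * U y ≤ V y := by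
      intro y
      have := hm_le y
      rw [hr_apply, le_div_iff₀ (hUpos y)] at this
      linarith
    have hVlow : ∀ x y, Real.exp (-(B' * d x y)) * V y ≤ V x := by
      intro x y
      have h := hconeV y x
      rw [hd_symm y x] at h
      rw [Real.exp_neg, ← div_eq_inv_mul]
      exact (div_le_iff₀ (Real.exp_pos _)).mpr (by linarith)
    have hUlow : ∀ x y, Real.exp (-(B' * d x y)) * U y ≤ U x := by
      intro x y
      have h := hconeU y x
      rw [hd_symm y x] at h
      rw [Real.exp_neg, ← div_eq_inv_mul]
      exact (div_le_iff₀ (Real.exp_pos _)).mpr (by linarith)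
    have hEE : ∀ x y, 0 ≤ Real.exp (B * d x y) - Real.exp (B' * d x y) := by
      intro x y
      have := Real.exp_le_exp.mpr
        (show B' * d x y ≤ B * d x y by nlinarith [hd0 x y, hB'B.le])
      linarith
    have mem1 : t • U - V ∈ coneR d B := by
      refine ⟨⟨t*cU + cV, add_nonneg (mul_nonneg ht0.le hcU0) hcV0, ?_⟩,
        ⟨t*MU + MV, ?_⟩, ?_⟩
      · intro x y
        simp only [Pi.sub_apply, Pi.smul_apply, smul_eq_mul]
        have h3 : t * U x - V x - (t * U y - V y) = t*(U x - U y) - (V x - V y) := by ring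
        rw [h3]
        calc |t*(U x - U y) - (V x - V y)| ≤ |t*(U x - U y)| + |V x - V y| := by
              rw [sub_eq_add_neg]
              exact (abs_add_le _ _).trans_eq (by rw [abs_neg])
          _ ≤ t*(cU * d x y) + cV * d x y := by
              refine add_le_add ?_ (hcV x y)
              rw [abs_mul, _root_.abs_of_nonneg ht0.le]
              exact mul_le_mul_of_nonneg_left (hcU x y) ht0.le
          _ = (t*cU + cV) * d x y := by ring
      · intro x
        simp only [Pi.sub_apply, Pi.smul_apply, smul_eq_mul]
        calc |t * U x - V x| ≤ |t * U x| + |V x| := by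
              rw [sub_eq_add_neg]
              exact (abs_add_le _ _).trans_eq (by rw [abs_neg])
          _ ≤ t * MU + MV := by
              refine add_le_add ?_ (hMV x)
              rw [abs_mul, _root_.abs_of_nonneg ht0.le]
              exact mul_le_mul_of_nonneg_left (hMU x) ht0.le
      · intro x y
        simp only [Pi.sub_apply, Pi.smul_apply, smul_eq_mul]
        rcases eq_or_ne x y with rfl | hxy
        · rw [hdxx]; simp
        · have hdp := hdpos x y hxy
          have kA : Real.exp (B * d x y) - Real.exp (-(B' * d x y))
              ≤ K * (Real.exp (B * d x y) - Real.exp (B' * d x y)) := by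
            rw [← hK]; exact aux_key_ratio hB'0 hB'B hdp
          have c1 : Real.exp (B * d x y) * V y - V x
              ≤ (Real.exp (B * d x y) - Real.exp (-(B' * d x y))) * V y := by
            have := hVlow x y; nlinarith [this]
          have c2 : (Real.exp (B * d x y) - Real.exp (-(B' * d x y))) * V y
              ≤ (K * (Real.exp (B * d x y) - Real.exp (B' * d x y))) * V y :=
            mul_le_mul_of_nonneg_right kA (hVpos y).le
          have c3 : (K * (Real.exp (B * d x y) - Real.exp (B' * d x y))) * V y
              ≤ (K * (Real.exp (B * d x y) - Real.exp (B' * d x y))) * (Mr * U y) :=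
            mul_le_mul_of_nonneg_left (hVleM y) (mul_nonneg hK0.le (hEE x y))
          have c4 : (K * (Real.exp (B * d x y) - Real.exp (B' * d x y))) * (Mr * U y)
              = t * (Real.exp (B * d x y) * U y - Real.exp (B' * d x y) * U y) := by
            rw [htdef]; ring
          have c5 : t * (Real.exp (B * d x y) * U y - Real.exp (B' * d x y) * U y)
              ≤ t * (Real.exp (B * d x y) * U y - U x) := by
            have := hconeU x y
            nlinarith [ht0.le, this]
          nlinarith [c1, c2, c3, c4, c5]
    have mem2 : V - s • U ∈ coneR d B := by
      refine ⟨⟨cV + s*cU, add_nonneg hcV0 (mul_nonneg hs0.le hcU0), ?_⟩,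
        ⟨MV + s*MU, ?_⟩, ?_⟩
      · intro x y
        simp only [Pi.sub_apply, Pi.smul_apply, smul_eq_mul]
        have h3 : V x - s * U x - (V y - s * U y) = (V x - V y) - s*(U x - U y) := by ring
        rw [h3]
        calc |(V x - V y) - s*(U x - U y)| ≤ |V x - V y| + |s*(U x - U y)| := by
              rw [sub_eq_add_neg]
              exact (abs_add_le _ _).trans_eq (by rw [abs_neg])
          _ ≤ cV * d x y + s*(cU * d x y) := by
              refine add_le_add (hcV x y) ?_
              rw [abs_mul, _root_.abs_of_nonneg hs0.le]
              exact mul_le_mul_of_nonneg_left (hcU x y) hs0.le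
          _ = (cV + s*cU) * d x y := by ring
      · intro x
        simp only [Pi.sub_apply, Pi.smul_apply, smul_eq_mul]
        calc |V x - s * U x| ≤ |V x| + |s * U x| := by
              rw [sub_eq_add_neg]
              exact (abs_add_le _ _).trans_eq (by rw [abs_neg])
          _ ≤ MV + s * MU := by
              refine add_le_add (hMV x) ?_
              rw [abs_mul, _root_.abs_of_nonneg hs0.le]
              exact mul_le_mul_of_nonneg_left (hMU x) hs0.le
      · intro x y
        simp only [Pi.sub_apply, Pi.smul_apply, smul_eq_mul]
        rcases eq_or_ne x y with rfl | hxy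
        · rw [hdxx]; simp
        · have hdp := hdpos x y hxy
          have kA : Real.exp (B * d x y) - Real.exp (-(B' * d x y))
              ≤ K * (Real.exp (B * d x y) - Real.exp (B' * d x y)) := by
            rw [← hK]; exact aux_key_ratio hB'0 hB'B hdp
          have d1 : s * (Real.exp (B * d x y) * U y - U x)
              ≤ s * ((Real.exp (B * d x y) - Real.exp (-(B' * d x y))) * U y) := by
            have := hUlow x y
            apply mul_le_mul_of_nonneg_left _ hs0.le
            nlinarith [this]
          have d2 : s * ((Real.exp (B * d x y) - Real.exp (-(B' * d x y))) * U y)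
              ≤ s * ((K * (Real.exp (B * d x y) - Real.exp (B' * d x y))) * U y) :=
            mul_le_mul_of_nonneg_left (mul_le_mul_of_nonneg_right kA (hUpos y).le) hs0.le
          have d3 : s * ((K * (Real.exp (B * d x y) - Real.exp (B' * d x y))) * U y)
              = m * ((Real.exp (B * d x y) - Real.exp (B' * d x y)) * U y) := by
            rw [← hsK]; ring
          have d4 : m * ((Real.exp (B * d x y) - Real.exp (B' * d x y)) * U y)
              ≤ (Real.exp (B * d x y) - Real.exp (B' * d x y)) * V y := by
            have h := mul_le_mul_of_nonneg_left (hmleV y) (hEE x y)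
            nlinarith [h]
          have d5 : (Real.exp (B * d x y) - Real.exp (B' * d x y)) * V y
              ≤ Real.exp (B * d x y) * V y - V x := by
            have := hconeV x y
            nlinarith [this]
          nlinarith [d1, d2, d3, d4, d5]
    have hts2 : t ≤ (K^2 * E2B) * s := by
      have h1 : t ≤ K * (E2B * m) := by
        rw [htdef]; exact mul_le_mul_of_nonneg_left hMm hK0.le
      have h2 : (K^2 * E2B) * s = K * (E2B * m) := by
        rw [hsdef]; field_simp
      linarith
    have hlog : Real.log (t/s) ≤ Dr := by
      have hts0 : 0 < t/s := div_pos ht0 hs0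
      have h1 : t/s ≤ K^2 * E2B := by
        rw [div_le_iff₀ hs0]; linarith [hts2]
      have h2 := Real.log_le_log hts0 h1
      rw [hE2Bdef, Real.log_mul (by positivity) (Real.exp_ne_zero _), Real.log_exp,
        Real.log_pow] at h2
      rw [hDr2]
      push_cast at h2
      linarith
    exact aux_hilbert_le (coneR d B) U V hs0 hst mem1 mem2 hlog
end

section
/- Suppose in addition that λ₀ > 0 and h₀ : X → ℝ is a bounded Lipschitz function with inf_X h₀ > 0 and L(0)h₀ = λ₀·h₀. Let z ∈ ℂ, and let h : X → ℂ be a bounded function with h not identically 0 such that L(z)h = λ·h for some λ ∈ ℂ. Then |λ| ≤ λ₀·exp(|Re(z)|·‖f‖∞). -/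
open Complex

/-- Lemma 6.6: any eigenvalue of the perturbed transfer operator L(z) on
bounded functions is bounded by lambda_0 exp(|Re z| sup|f|), where lambda_0 is the leading
eigenvalue of L(0) with positive eigenfunction h_0. -/
theorem perturbed_eigenvalue_bound
    {J : Type*} [Countable J] [Nonempty J]
    (d : ↥(Set.Icc (0:ℝ) 1) → ↥(Set.Icc (0:ℝ) 1) → ℝ)
    (hd_eq : ∀ x y, d x y = 0 ↔ x = y)
    (hd_symm : ∀ x y, d x y = d y x)
    (hd_tri : ∀ x y z, d x z ≤ d x y + d y z)
    (hd_le : ∀ x y, d x y ≤ 1)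
    (hd_compat : ∀ (x : ↥(Set.Icc (0:ℝ) 1)) (ε : ℝ), 0 < ε →
      (∃ δ > 0, ∀ y, dist x y < δ → d x y < ε) ∧
      (∃ δ > 0, ∀ y, d x y < δ → dist x y < ε))
    (σb : J → ↥(Set.Icc (0:ℝ) 1) → ↥(Set.Icc (0:ℝ) 1)) (g : J → ↥(Set.Icc (0:ℝ) 1) → ℝ)
    (γ G : ℝ) (hγ : 1 < γ) (hG : 0 < G)
    (hA1 : ∀ j x y, d (σb j x) (σb j y) ≤ γ⁻¹ * d x y)
    (hA2 : ∀ j x y, |g j x - g j y| ≤ G * d x y)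
    (hA3 : ∃ M : ℝ, ∀ x, Summable (fun j => Real.exp (g j x)) ∧
      (∑' j, Real.exp (g j x)) ≤ M)
    (f : ↥(Set.Icc (0:ℝ) 1) → ℝ)
    (hfLip : ∃ c : ℝ, 0 ≤ c ∧ ∀ x y, |f x - f y| ≤ c * d x y)
    (hfBdd : ∃ M : ℝ, ∀ x, |f x| ≤ M)
    (lam0 : ℝ) (hlam0 : 0 < lam0)
    (h0 : ↥(Set.Icc (0:ℝ) 1) → ℝ)
    (hh0Lip : ∃ c : ℝ, 0 ≤ c ∧ ∀ x y, |h0 x - h0 y| ≤ c * d x y)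
    (hh0pos : ∃ c : ℝ, 0 < c ∧ ∀ x, c ≤ h0 x)
    (hh0eig : ∀ x, transferR g σb h0 x = lam0 * h0 x)
    (z : ℂ) (lam : ℂ) (h : ↥(Set.Icc (0:ℝ) 1) → ℂ)
    (hhB : ∃ M : ℝ, ∀ x, ‖h x‖ ≤ M) (hh0' : h ≠ 0)
    (heig : ∀ x, transferZ g σb f z h x = lam * h x) :
    ‖lam‖ ≤ lam0 * Real.exp (|z.re| * supN f) := by
  classical
  obtain ⟨Mg, hMg⟩ := hA3
  obtain ⟨Mh, hMh⟩ := hhB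
  obtain ⟨c0, hc0, hc0le⟩ := hh0pos
  obtain ⟨c1, hc10, hc1⟩ := hh0Lip
  obtain ⟨Mf, hMf⟩ := hfBdd
  set K : ℝ := |z.re| * supN f with hKdef
  have hX : Nonempty ↥(Set.Icc (0:ℝ) 1) := ⟨⟨0, by norm_num⟩⟩
  obtain ⟨x1⟩ := hX
  -- supN f bounds |f|
  have hfsup : ∀ x, |f x| ≤ supN f := by
    intro x
    have hbdd : BddAbove (Set.range fun y => |f y|) := by
      refine ⟨Mf, ?_⟩
      rintro r ⟨y, rfl⟩; exact hMf y
    exact le_csSup hbdd ⟨x, rfl⟩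
  have hKb : ∀ x, z.re * f x ≤ K := by
    intro x
    calc z.re * f x ≤ |z.re * f x| := le_abs_self _
      _ = |z.re| * |f x| := abs_mul _ _
      _ ≤ |z.re| * supN f := by
          exact mul_le_mul_of_nonneg_left (hfsup x) (abs_nonneg _)
  -- Mh is nonnegative
  have hMh0 : 0 ≤ Mh := le_trans (norm_nonneg _) (hMh x1)
  -- h0 is bounded
  have hh0bdd : ∀ x, |h0 x| ≤ |h0 x1| + c1 := by
    intro x
    have := hc1 x x1
    have hd1 := hd_le x x1
    have : |h0 x - h0 x1| ≤ c1 := le_trans this (by nlinarith)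
    calc |h0 x| = |(h0 x - h0 x1) + h0 x1| := by ring_nf
      _ ≤ |h0 x - h0 x1| + |h0 x1| := abs_add_le _ _
      _ ≤ |h0 x1| + c1 := by linarith
  set Mh0 : ℝ := |h0 x1| + c1 with hMh0def
  -- the comparison function
  set ψ : ↥(Set.Icc (0:ℝ) 1) → ℝ := fun x => (Mh / c0) * h0 x with hψdef
  have hdiv0 : 0 ≤ Mh / c0 := div_nonneg hMh0 hc0.le
  have hψbdd : ∀ x, |ψ x| ≤ (Mh / c0) * Mh0 := by
    intro x
    rw [hψdef]; simp only
    rw [abs_mul, _root_.abs_of_nonneg hdiv0]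
    exact mul_le_mul_of_nonneg_left (hh0bdd x) hdiv0
  have hφψ : ∀ x, ‖h x‖ ≤ ψ x := by
    intro x
    have h1 : (Mh / c0) * c0 = Mh := div_mul_cancel₀ _ (ne_of_gt hc0)
    calc ‖h x‖ ≤ Mh := hMh x
      _ = (Mh / c0) * c0 := h1.symm
      _ ≤ (Mh / c0) * h0 x := mul_le_mul_of_nonneg_left (hc0le x) hdiv0
  -- summability helper
  have hsum : ∀ (u : ↥(Set.Icc (0:ℝ) 1) → ℝ) (Mu : ℝ), (∀ y, |u y| ≤ Mu) →
      ∀ x, Summable fun j => Real.exp (g j x) * u (σb j x) := by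
    intro u Mu hMu x
    apply Summable.of_norm_bounded ((hMg x).1.mul_right Mu)
    intro j
    rw [Real.norm_eq_abs, abs_mul, _root_.abs_of_pos (Real.exp_pos _)]
    exact mul_le_mul_of_nonneg_left (hMu _) (Real.exp_pos _).le
  have hsumφ : ∀ x, Summable fun j => Real.exp (g j x) * ‖h (σb j x)‖ := by
    intro x
    refine hsum (fun y => ‖h y‖) Mh (fun y => ?_) x
    rw [_root_.abs_of_nonneg (norm_nonneg _)]; exact hMh y
  -- eigenvalue equation for ψ
  have hψeig : ∀ x, ∑' j, Real.exp (g j x) * ψ (σb j x) = lam0 * ψ x := by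
    intro x
    have he : ∀ j, Real.exp (g j x) * ψ (σb j x)
        = (Mh / c0) * (Real.exp (g j x) * h0 (σb j x)) := by
      intro j; rw [hψdef]; ring
    rw [tsum_congr he, tsum_mul_left]
    have := hh0eig x
    rw [transferR] at this
    rw [this, hψdef]; ring
  -- one-step inequality
  have hstep : ∀ x, ‖lam‖ * ‖h x‖
      ≤ Real.exp K * ∑' j, Real.exp (g j x) * ‖h (σb j x)‖ := by
    intro x
    set F : J → ℂ := fun j =>
      Complex.exp (((g j x : ℝ) : ℂ) + z * ((f (σb j x) : ℝ) : ℂ)) * h (σb j x) with hF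
    have hterm : ∀ j, ‖F j‖ ≤ Real.exp K * (Real.exp (g j x) * ‖h (σb j x)‖) := by
      intro j
      rw [hF]; simp only
      rw [norm_mul, Complex.norm_exp]
      have hre : (((g j x : ℝ) : ℂ) + z * ((f (σb j x) : ℝ) : ℂ)).re
          = g j x + z.re * f (σb j x) := by
        simp [Complex.add_re, Complex.mul_re]
      rw [hre, Real.exp_add]
      have h1 : Real.exp (z.re * f (σb j x)) ≤ Real.exp K := Real.exp_le_exp.mpr (hKb _)
      have h2 : (0:ℝ) ≤ ‖h (σb j x)‖ := norm_nonneg _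
      have h3 : (0:ℝ) < Real.exp (g j x) := Real.exp_pos _
      calc Real.exp (g j x) * Real.exp (z.re * f (σb j x)) * ‖h (σb j x)‖
          ≤ Real.exp (g j x) * Real.exp K * ‖h (σb j x)‖ := by
            apply mul_le_mul_of_nonneg_right _ h2
            exact mul_le_mul_of_nonneg_left h1 h3.le
        _ = Real.exp K * (Real.exp (g j x) * ‖h (σb j x)‖) := by ring
    have hsumB : Summable fun j => Real.exp K * (Real.exp (g j x) * ‖h (σb j x)‖) :=
      (hsumφ x).mul_left _
    have hsumn : Summable fun j => ‖F j‖ :=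
      Summable.of_nonneg_of_le (fun _ => norm_nonneg _) hterm hsumB
    calc ‖lam‖ * ‖h x‖ = ‖lam * h x‖ := (norm_mul _ _).symm
      _ = ‖transferZ g σb f z h x‖ := by rw [heig x]
      _ = ‖∑' j, F j‖ := by rw [transferZ]
      _ ≤ ∑' j, ‖F j‖ := norm_tsum_le_tsum_norm hsumn
      _ ≤ ∑' j, Real.exp K * (Real.exp (g j x) * ‖h (σb j x)‖) :=
          Summable.tsum_le_tsum hterm hsumn hsumB
      _ = Real.exp K * ∑' j, Real.exp (g j x) * ‖h (σb j x)‖ := tsum_mul_left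
  set r : ℝ := lam0 * Real.exp K with hrdef
  have hr : 0 < r := mul_pos hlam0 (Real.exp_pos _)
  -- main induction
  have key : ∀ n x, (‖lam‖) ^ n * ‖h x‖ ≤ r ^ n * ψ x := by
    intro n
    induction n with
    | zero => intro x; simpa using hφψ x
    | succ n ih =>
      intro x
      have hpn : (0:ℝ) ≤ (‖lam‖) ^ n := pow_nonneg (norm_nonneg _) n
      have hs1 : Summable fun j => Real.exp (g j x)
          * ((‖lam‖) ^ n * ‖h (σb j x)‖) := by
        apply hsum (fun y => (‖lam‖) ^ n * ‖h y‖) ((‖lam‖) ^ n * Mh)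
        intro y
        rw [_root_.abs_of_nonneg (mul_nonneg hpn (norm_nonneg _))]
        exact mul_le_mul_of_nonneg_left (hMh y) hpn
      have hs2 : Summable fun j => Real.exp (g j x) * (r ^ n * ψ (σb j x)) := by
        apply hsum (fun y => r ^ n * ψ y) (r ^ n * ((Mh / c0) * Mh0))
        intro y
        rw [abs_mul, _root_.abs_of_nonneg (pow_nonneg hr.le n)]
        exact mul_le_mul_of_nonneg_left (hψbdd y) (pow_nonneg hr.le n)
      calc (‖lam‖) ^ (n+1) * ‖h x‖
          = (‖lam‖) ^ n * (‖lam‖ * ‖h x‖) := by ring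
        _ ≤ (‖lam‖) ^ n
            * (Real.exp K * ∑' j, Real.exp (g j x) * ‖h (σb j x)‖) :=
            mul_le_mul_of_nonneg_left (hstep x) hpn
        _ = Real.exp K * ∑' j, Real.exp (g j x)
            * ((‖lam‖) ^ n * ‖h (σb j x)‖) := by
            rw [tsum_congr (fun j => by ring :
              ∀ j, Real.exp (g j x) * ((‖lam‖) ^ n * ‖h (σb j x)‖)
                = (‖lam‖) ^ n * (Real.exp (g j x) * ‖h (σb j x)‖)),
              tsum_mul_left]
            ring
        _ ≤ Real.exp K * ∑' j, Real.exp (g j x) * (r ^ n * ψ (σb j x)) := by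
            apply mul_le_mul_of_nonneg_left _ (Real.exp_pos K).le
            apply Summable.tsum_le_tsum _ hs1 hs2
            intro j
            exact mul_le_mul_of_nonneg_left
              (ih (σb j x)) (Real.exp_pos _).le
        _ = Real.exp K * (r ^ n * (lam0 * ψ x)) := by
            rw [tsum_congr (fun j => by ring :
              ∀ j, Real.exp (g j x) * (r ^ n * ψ (σb j x))
                = r ^ n * (Real.exp (g j x) * ψ (σb j x))),
              tsum_mul_left, hψeig x]
        _ = r ^ (n+1) * ψ x := by rw [hrdef]; ring
  -- conclude
  obtain ⟨x0, hx0⟩ : ∃ x, h x ≠ 0 := by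
    by_contra hcon
    push_neg at hcon
    exact hh0' (funext hcon)
  have hφ0 : 0 < ‖h x0‖ := norm_pos_iff.mpr hx0
  by_contra hcon
  push_neg at hcon
  have hgt : 1 < ‖lam‖ / r := (one_lt_div hr).mpr hcon
  obtain ⟨n, hn⟩ := pow_unbounded_of_one_lt (ψ x0 / ‖h x0‖) hgt
  have h1 : (‖lam‖ / r) ^ n ≤ ψ x0 / ‖h x0‖ := by
    rw [div_pow, div_le_div_iff₀ (pow_pos hr n) hφ0]
    calc ‖lam‖ ^ n * ‖h x0‖ ≤ r ^ n * ψ x0 := key n x0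
      _ = ψ x0 * r ^ n := by ring
  exact absurd h1 (not_le.mpr hn)
end

section
/- Let δ₀ > 0, Δ > 0, and let φ be a holomorphic function on the open disk {z ∈ ℂ : |z| < δ₀} with values in the annulus {ζ ∈ ℂ : e^{−Δ} < |ζ| < e^{Δ}}, such that φ(0) = 1 and φ'(0) = 0. Let 0 < α < 1 and set C(α) = (2/π)·log((1+α)/(1−α)). Then for every z ∈ ℂ with |z| ≤ α·δ₀, |φ(z) − 1| ≤ ((exp(C(α)·Δ) − 1)/(α²·δ₀²))·|z|². -/
open Complex Metric Set MeasureTheory intervalIntegral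

lemma aux_exp_sub_one (w : ℂ) : ‖Complex.exp w - 1‖ ≤ Real.exp (‖w‖) - 1 := by
  have hC : HasSum (fun n : ℕ => w ^ (n+1) / ((n+1).factorial)) (Complex.exp w - 1) := by
    have h := NormedSpace.expSeries_div_hasSum_exp w
    rw [← Complex.exp_eq_exp_ℂ] at h
    have := (hasSum_nat_add_iff' (f := fun n : ℕ => w ^ n / (n.factorial)) 1).2 h
    simpa using this
  have hR : HasSum (fun n : ℕ => ‖w‖ ^ (n+1) / ((n+1).factorial)) (Real.exp (‖w‖) - 1) := by
    have h := NormedSpace.expSeries_div_hasSum_exp (‖w‖)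
    rw [← Real.exp_eq_exp_ℝ] at h
    have := (hasSum_nat_add_iff' (f := fun n : ℕ => ‖w‖ ^ n / (n.factorial)) 1).2 h
    simpa using this
  calc ‖Complex.exp w - 1‖ = ‖∑' n : ℕ, w ^ (n+1) / ((n+1).factorial)‖ := by
        rw [hC.tsum_eq]
    _ ≤ ∑' n : ℕ, ‖w ^ (n+1) / (((n+1).factorial) : ℂ)‖ := by
        apply norm_tsum_le_tsum_norm
        convert hR.summable using 2 with n
        simp [norm_div, norm_pow, Complex.norm_natCast]
    _ = Real.exp (‖w‖) - 1 := by
        rw [← hR.tsum_eq]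
        congr 1; funext n
        simp [norm_div, norm_pow, Complex.norm_natCast]

lemma aux_convex {M t : ℝ} (hM : 0 ≤ M) (ht0 : 0 ≤ t) (ht1 : t ≤ 1) :
    Real.exp (t * M) - 1 ≤ t * (Real.exp M - 1) := by
  have h := convexOn_exp.2 (mem_univ (0:ℝ)) (mem_univ M) (by linarith : (0:ℝ) ≤ 1 - t) ht0 (by ring)
  simp only [smul_eq_mul, mul_zero, zero_add, Real.exp_zero, mul_one] at h
  nlinarith [h]

lemma aux_schwarz_sq {f : ℂ → ℂ} {R M : ℝ} (hM : 0 < M)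
    (hd : DifferentiableOn ℂ f (ball 0 R)) (hm : MapsTo f (ball 0 R) (ball 0 M))
    (h0 : f 0 = 0) (h1 : deriv f 0 = 0) {z : ℂ} (hz : z ∈ ball (0:ℂ) R) :
    ‖f z‖ ≤ M / R ^ 2 * ‖z‖ ^ 2 := by
  have hR : 0 < R := nonempty_ball.1 ⟨z, hz⟩
  have hm' : MapsTo f (ball 0 R) (ball (f 0) M) := by rwa [h0]
  set g := dslope f 0 with hg
  have hgball : ∀ w ∈ ball (0:ℂ) R, ‖g w‖ ≤ M / R := fun w hw =>
    Complex.norm_dslope_le_div_of_mapsTo_ball hd (hm'.mono_right ball_subset_closedBall) hw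
  have hg0 : g 0 = 0 := by rw [hg, dslope_same]; exact h1
  have hgd : DifferentiableOn ℂ g (ball 0 R) :=
    (differentiableOn_dslope (ball_mem_nhds _ hR)).2 hd
  -- second Schwarz with ε
  have key : ∀ w ∈ ball (0:ℂ) R, ‖g w‖ ≤ M / R ^ 2 * ‖w‖ := by
    intro w hw
    rcases eq_or_ne w 0 with rfl | hw0
    · simp [hg0]
    have hwpos : 0 < ‖w‖ := norm_pos_iff.2 hw0
    refine le_of_forall_pos_le_add fun ε hε => ?_
    have hε' : 0 < ε * R / ‖w‖ := by positivity
    have hmg : MapsTo g (ball 0 R) (ball (g 0) (M / R + ε * R / ‖w‖)) := by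
      intro x hx
      rw [hg0, mem_ball, dist_zero_right]
      exact lt_of_le_of_lt (hgball x hx) (by linarith)
    have := Complex.dist_le_div_mul_dist_of_mapsTo_ball hgd (hmg.mono_right ball_subset_closedBall) hw
    rw [hg0, dist_zero_right, dist_zero_right] at this
    calc ‖g w‖ ≤ (M / R + ε * R / ‖w‖) / R * ‖w‖ := this
      _ = M / R ^ 2 * ‖w‖ + ε := by
          have hwne : ‖w‖ ≠ 0 := by positivity
          field_simp
  rcases eq_or_ne z 0 with rfl | hz0
  · simp [h0]
  have : f z = z * g z := by
    rw [hg, dslope_of_ne _ hz0, slope_def_field, h0]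
    field_simp
    ring
  rw [this, norm_mul]
  calc ‖z‖ * ‖g z‖ ≤ ‖z‖ * (M / R ^ 2 * ‖z‖) := by
        exact mul_le_mul_of_nonneg_left (key z hz) (norm_nonneg z)
    _ = M / R ^ 2 * ‖z‖ ^ 2 := by ring

lemma aux_log_bound {u : ℂ} (hu : ‖u‖ < 1) :
    ‖Complex.log (1 + u) - Complex.log (1 - u)‖
      ≤ Real.log ((1 + ‖u‖) / (1 - ‖u‖)) := by
  set r := ‖u‖ with hrdef
  have hr0 : 0 ≤ r := norm_nonneg u
  have hr1 : r < 1 := hu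
  set tU : ℕ → ℂ := fun n => (-1 : ℂ) ^ (n+1) * u ^ n / n + u ^ n / n with htU
  set tR : ℕ → ℝ := fun n => (-1 : ℝ) ^ (n+1) * r ^ n / n + r ^ n / n with htR
  have hC : HasSum tU (Complex.log (1 + u) - Complex.log (1 - u)) := by
    rw [sub_eq_add_neg]
    exact (Complex.hasSum_taylorSeries_log hu).add (Complex.hasSum_taylorSeries_neg_log hu)
  have hCr : HasSum (fun n => ((tR n : ℝ) : ℂ))
      (Complex.log (1 + (r:ℂ)) - Complex.log (1 - (r:ℂ))) := by
    have hrc : ‖(r:ℂ)‖ < 1 := by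
      rw [Complex.norm_real, Real.norm_eq_abs, _root_.abs_of_nonneg hr0]; exact hr1
    have := (Complex.hasSum_taylorSeries_log hrc).add (Complex.hasSum_taylorSeries_neg_log hrc)
    rw [← sub_eq_add_neg] at this
    convert this using 2 with n
    simp only [htR]
    push_cast
    ring
  have hR : HasSum tR (Real.log (1 + r) - Real.log (1 - r)) := by
    have h1 : Complex.log (1 + (r:ℂ)) = ((Real.log (1 + r) : ℝ) : ℂ) := by
      rw [show (1 + (r:ℂ)) = (((1 + r : ℝ)) : ℂ) by push_cast; ring]
      exact (Complex.ofReal_log (by linarith)).symm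
    have h2 : Complex.log (1 - (r:ℂ)) = ((Real.log (1 - r) : ℝ) : ℂ) := by
      rw [show (1 - (r:ℂ)) = (((1 - r : ℝ)) : ℂ) by push_cast; ring]
      exact (Complex.ofReal_log (by linarith)).symm
    rw [h1, h2, ← Complex.ofReal_sub] at hCr
    have := Complex.hasSum_re hCr
    simpa using this
  have hterm : ∀ n, ‖tU n‖ ≤ tR n := by
    intro n
    rcases Nat.even_or_odd n with he | ho
    · have h1 : ((-1 : ℂ)) ^ (n+1) = -1 := (he.add_one).neg_one_pow
      have h2 : ((-1 : ℝ)) ^ (n+1) = -1 := (he.add_one).neg_one_pow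
      simp [htU, htR, h1, h2, neg_div]
    · have h1 : ((-1 : ℂ)) ^ (n+1) = 1 := (ho.add_one).neg_one_pow
      have h2 : ((-1 : ℝ)) ^ (n+1) = 1 := (ho.add_one).neg_one_pow
      simp only [htU, htR, h1, h2, one_mul, ← add_div]
      rw [norm_div]
      rcases Nat.eq_zero_or_pos n with rfl | hn
      · simp
      have hne : (0:ℝ) < (n:ℝ) := by exact_mod_cast hn
      rw [show ((u ^ n + u ^ n) : ℂ) = 2 * u ^ n by ring]
      rw [show (r ^ n + r ^ n) = 2 * r ^ n by ring]
      rw [norm_mul, norm_pow, Complex.norm_natCast, ← hrdef]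
      simp [Real.norm_ofNat]
  have hnorm_summable : Summable (fun n => ‖tU n‖) :=
    Summable.of_nonneg_of_le (fun n => norm_nonneg _) hterm hR.summable
  calc ‖Complex.log (1 + u) - Complex.log (1 - u)‖ = ‖∑' n, tU n‖ := by rw [hC.tsum_eq]
    _ ≤ ∑' n, ‖tU n‖ := norm_tsum_le_tsum_norm hnorm_summable
    _ ≤ ∑' n, tR n := Summable.tsum_le_tsum hterm hnorm_summable hR.summable
    _ = Real.log (1 + r) - Real.log (1 - r) := hR.tsum_eq
    _ = Real.log ((1 + r) / (1 - r)) := (Real.log_div (by linarith) (by linarith)).symm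

lemma aux_strip_inv {Δ : ℝ} (hΔ : 0 < Δ) {w u : ℂ} (hw : |w.re| < Δ) (hu : ‖u‖ < 1)
    (heq : Complex.exp (Complex.I * ((Real.pi / (2*Δ) : ℝ) : ℂ) * w) = (1 + u) / (1 - u)) :
    ‖w‖ ≤ 2 * Δ / Real.pi * Real.log ((1 + ‖u‖) / (1 - ‖u‖)) := by
  have hπ := Real.pi_pos
  set a : ℂ := Complex.I * ((Real.pi / (2*Δ) : ℝ) : ℂ) with ha
  have hure : |u.re| ≤ ‖u‖ := Complex.abs_re_le_norm u
  have h1p : (0:ℝ) < (1 + u).re := by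
    simp only [Complex.add_re, Complex.one_re]
    cases abs_lt.1 (lt_of_le_of_lt hure hu); linarith
  have h1m : (0:ℝ) < (1 - u).re := by
    simp only [Complex.sub_re, Complex.one_re]
    cases abs_lt.1 (lt_of_le_of_lt hure hu); linarith
  have h1pne : (1 + u) ≠ 0 := fun h => by simp [h] at h1p
  have h1mne : (1 - u) ≠ 0 := fun h => by simp [h] at h1m
  set L : ℂ := Complex.log (1 + u) - Complex.log (1 - u) with hL
  have hexpL : Complex.exp L = (1 + u) / (1 - u) := by
    rw [hL, Complex.exp_sub, Complex.exp_log h1pne, Complex.exp_log h1mne]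
  -- a * w = L
  have haw_im : (a * w).im = Real.pi / (2*Δ) * w.re := by
    simp [ha, Complex.mul_im, Complex.mul_re, ← Complex.ofReal_ofNat,
      ← Complex.ofReal_mul, ← Complex.ofReal_div]
  have haw_im_lt : |(a * w).im| < Real.pi / 2 := by
    rw [haw_im, abs_mul, abs_of_pos (by positivity : (0:ℝ) < Real.pi / (2*Δ))]
    calc Real.pi / (2*Δ) * |w.re| < Real.pi / (2*Δ) * Δ := by
          apply mul_lt_mul_of_pos_left hw (by positivity)
      _ = Real.pi / 2 := by field_simp
  have hLim : |L.im| < Real.pi := by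
    rw [hL]
    have h1 : |(Complex.log (1+u)).im| < Real.pi / 2 := by
      rw [Complex.log_im]
      exact Complex.abs_arg_lt_pi_div_two_iff.2 (Or.inl h1p)
    have h2 : |(Complex.log (1-u)).im| < Real.pi / 2 := by
      rw [Complex.log_im]
      exact Complex.abs_arg_lt_pi_div_two_iff.2 (Or.inl h1m)
    calc |(Complex.log (1+u) - Complex.log (1-u)).im|
        = |(Complex.log (1+u)).im - (Complex.log (1-u)).im| := by rw [Complex.sub_im]
      _ ≤ |(Complex.log (1+u)).im| + |(Complex.log (1-u)).im| := abs_sub _ _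
      _ < Real.pi := by linarith
  have hone : Complex.exp (a * w - L) = 1 := by
    rw [Complex.exp_sub, hexpL, heq, div_self]
    rw [div_ne_zero_iff]; exact ⟨h1pne, h1mne⟩
  obtain ⟨n, hn⟩ := Complex.exp_eq_one_iff.1 hone
  have him : (a * w).im - L.im = (n : ℝ) * (2 * Real.pi) := by
    have := congrArg Complex.im hn
    simpa [Complex.sub_im, Complex.mul_im] using this
  have hn0 : n = 0 := by
    by_contra h
    have h1 : (1:ℝ) ≤ |(n:ℝ)| := by
      rw [← Int.cast_abs]; exact_mod_cast Int.one_le_abs h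
    have h2 : |(a * w).im - L.im| < 2 * Real.pi := by
      calc |(a * w).im - L.im| ≤ |(a * w).im| + |L.im| := abs_sub _ _
        _ < Real.pi / 2 + Real.pi := by linarith
        _ < 2 * Real.pi := by linarith
    rw [him, abs_mul, abs_of_pos (by positivity : (0:ℝ) < 2 * Real.pi)] at h2
    nlinarith
  have haw : a * w = L := by
    rw [hn0] at hn; simpa [sub_eq_zero] using hn
  have hna : ‖a‖ = Real.pi / (2*Δ) := by
    simp only [ha, norm_mul, Complex.norm_I, one_mul, Complex.norm_real, Real.norm_eq_abs]
    rw [_root_.abs_of_pos (by positivity : (0:ℝ) < Real.pi / (2*Δ))]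
  have hnw : ‖a‖ * ‖w‖ = ‖L‖ := by rw [← norm_mul, haw]
  have hLbound := aux_log_bound hu
  rw [hna] at hnw
  have : ‖w‖ = 2 * Δ / Real.pi * ‖L‖ := by
    field_simp at hnw ⊢
    linarith
  rw [this]
  apply mul_le_mul_of_nonneg_left hLbound (by positivity)

lemma aux_prim {δ : ℝ} {g : ℂ → ℂ}
    (hg : DifferentiableOn ℂ g (ball 0 δ)) {z₀ : ℂ} (hz₀ : z₀ ∈ ball (0:ℂ) δ) :
    HasDerivAt (fun z : ℂ => ∫ t in (0:ℝ)..1, z * g ((t:ℂ) * z)) (g z₀) z₀ := by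
  have hz₀n : ‖z₀‖ < δ := mem_ball_zero_iff.1 hz₀
  have hδ : 0 < δ := lt_of_le_of_lt (norm_nonneg z₀) hz₀n
  have hA : AnalyticOnNhd ℂ g (ball 0 δ) := hg.analyticOnNhd isOpen_ball
  have hgc : ContinuousOn g (ball 0 δ) := hg.continuousOn
  have hg'c : ContinuousOn (deriv g) (ball 0 δ) := hA.deriv.continuousOn
  set r : ℝ := (‖z₀‖ + δ) / 2 with hrdef
  have hr1 : ‖z₀‖ < r := by rw [hrdef]; linarith
  have hr2 : r < δ := by rw [hrdef]; linarith
  have hrpos : 0 < r := lt_of_le_of_lt (norm_nonneg z₀) hr1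
  have hKsub : closedBall (0:ℂ) r ⊆ ball 0 δ := closedBall_subset_ball hr2
  obtain ⟨C₁, hC₁⟩ := (isCompact_closedBall (0:ℂ) r).exists_bound_of_continuousOn
    (hgc.mono hKsub)
  obtain ⟨C₂, hC₂⟩ := (isCompact_closedBall (0:ℂ) r).exists_bound_of_continuousOn
    (hg'c.mono hKsub)
  set ε : ℝ := r - ‖z₀‖ with hεdef
  have hε : 0 < ε := by rw [hεdef]; linarith
  have hmem : ∀ x ∈ ball z₀ ε, ∀ t : ℝ, t ∈ Set.Icc (0:ℝ) 1 → (t:ℂ) * x ∈ closedBall (0:ℂ) r := by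
    intro x hx t ht
    have h1 : ‖x - z₀‖ < ε := mem_ball_iff_norm.1 hx
    have hxn : ‖x‖ ≤ r := by
      have h2 : ‖x‖ ≤ ‖x - z₀‖ + ‖z₀‖ := by simpa using norm_add_le (x - z₀) z₀
      rw [hεdef] at h1; linarith
    rw [mem_closedBall_zero_iff, norm_mul, Complex.norm_real, Real.norm_eq_abs,
      _root_.abs_of_nonneg ht.1]
    calc t * ‖x‖ ≤ 1 * ‖x‖ := mul_le_mul_of_nonneg_right ht.2 (norm_nonneg x)
      _ ≤ r := by rw [one_mul]; exact hxn
  have hz₀mem := mem_ball_self hε (x := z₀)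
  -- the two functions
  set F : ℂ → ℝ → ℂ := fun x t => x * g ((t:ℂ) * x) with hF
  set F' : ℂ → ℝ → ℂ := fun x t => g ((t:ℂ) * x) + x * (deriv g ((t:ℂ) * x) * (t:ℂ)) with hF'
  have huIoc : Set.uIoc (0:ℝ) 1 ⊆ Set.Icc (0:ℝ) 1 := by
    rw [Set.uIoc_of_le (by norm_num : (0:ℝ) ≤ 1)]
    exact Set.Ioc_subset_Icc_self
  have huIcc : Set.uIcc (0:ℝ) 1 = Set.Icc 0 1 := Set.uIcc_of_le (by norm_num)
  -- continuity in t for x fixed in the ball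
  have hcont : ∀ x ∈ ball z₀ ε, ContinuousOn (F x) (Set.Icc (0:ℝ) 1) := by
    intro x hx
    apply ContinuousOn.mul continuousOn_const
    apply hgc.comp (by fun_prop) fun t ht => hKsub (hmem x hx t ht)
  have hcont' : ∀ x ∈ ball z₀ ε, ContinuousOn (F' x) (Set.Icc (0:ℝ) 1) := by
    intro x hx
    have hsub : ∀ t ∈ Set.Icc (0:ℝ) 1, (t:ℂ) * x ∈ ball (0:ℂ) δ :=
      fun t ht => hKsub (hmem x hx t ht)
    apply ContinuousOn.add
    · exact hgc.comp (by fun_prop) hsub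
    · apply ContinuousOn.mul continuousOn_const
      apply ContinuousOn.mul (hg'c.comp (by fun_prop) hsub) (by fun_prop)
  have key := hasDerivAt_integral_of_dominated_loc_of_deriv_le (μ := volume)
      (F := F) (F' := F') (x₀ := z₀) (a := 0) (b := 1) (bound := fun _ => C₁ + r * C₂) (ball_mem_nhds z₀ hε)
      ?_ ?_ ?_ ?_ ?_ ?_
  · -- conclude
    have hval : (∫ t in (0:ℝ)..1, F' z₀ t) = g z₀ := by
      set u : ℝ → ℂ := fun t => (t:ℂ) * g ((t:ℂ) * z₀) with hu
      have hderiv : ∀ t ∈ Set.uIcc (0:ℝ) 1, HasDerivAt u (F' z₀ t) t := by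
        intro t ht
        rw [huIcc] at ht
        have htz : (t:ℂ) * z₀ ∈ ball (0:ℂ) δ := hKsub (hmem z₀ hz₀mem t ht)
        have hgd : HasDerivAt g (deriv g ((t:ℂ) * z₀)) ((t:ℂ) * z₀) :=
          (hg.differentiableAt (isOpen_ball.mem_nhds htz)).hasDerivAt
        have hinner : HasDerivAt (fun s : ℂ => g (s * z₀)) (deriv g ((t:ℂ) * z₀) * z₀) (t:ℂ) := by
          have hlin : HasDerivAt (fun s : ℂ => s * z₀) z₀ (t:ℂ) := by
            simpa using (hasDerivAt_id (t:ℂ)).mul_const z₀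
          exact hgd.comp (t:ℂ) hlin
        have hcomp : HasDerivAt (fun s : ℝ => g ((s:ℂ) * z₀)) (deriv g ((t:ℂ) * z₀) * z₀) t :=
          hinner.comp_ofReal
        have hid : HasDerivAt (fun s : ℝ => ((s:ℝ):ℂ)) 1 t := by
          exact (hasDerivAt_id t).ofReal_comp
        have := hid.mul hcomp
        refine this.congr_deriv ?_
        simp [hF', hu]
        ring
      have hint : IntervalIntegrable (F' z₀) volume 0 1 := by
        apply ContinuousOn.intervalIntegrable
        rw [huIcc]; exact hcont' z₀ hz₀mem
      rw [integral_eq_sub_of_hasDerivAt hderiv hint]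
      simp [hu]
    rw [← hval]
    exact key.2
  · -- hF_meas
    filter_upwards [isOpen_ball.mem_nhds hz₀mem] with x hx
    exact ((hcont x hx).mono huIoc).aestronglyMeasurable measurableSet_uIoc
  · -- hF_int
    apply ContinuousOn.intervalIntegrable
    rw [huIcc]; exact hcont z₀ hz₀mem
  · -- hF'_meas
    exact ((hcont' z₀ hz₀mem).mono huIoc).aestronglyMeasurable measurableSet_uIoc
  · -- h_bound
    apply MeasureTheory.ae_of_all
    intro t ht x hx
    have ht' := huIoc ht
    have htx := hmem x hx t ht'
    have hxr : ‖x‖ ≤ r := by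
      have h1 : ‖x - z₀‖ < ε := mem_ball_iff_norm.1 hx
      have h2 : ‖x‖ ≤ ‖x - z₀‖ + ‖z₀‖ := by simpa using norm_add_le (x - z₀) z₀
      rw [hεdef] at h1; linarith
    calc ‖F' x t‖ ≤ ‖g ((t:ℂ) * x)‖ + ‖x * (deriv g ((t:ℂ) * x) * (t:ℂ))‖ := norm_add_le _ _
      _ ≤ C₁ + r * C₂ := by
        gcongr
        · exact hC₁ _ htx
        · rw [norm_mul, norm_mul]
          have h3 : ‖deriv g ((t:ℂ) * x)‖ ≤ C₂ := hC₂ _ htx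
          have h4 : ‖(t:ℂ)‖ ≤ 1 := by
            rw [Complex.norm_real, Real.norm_eq_abs, _root_.abs_of_nonneg ht'.1]
            exact ht'.2
          calc ‖x‖ * (‖deriv g ((t:ℂ) * x)‖ * ‖(t:ℂ)‖) ≤ r * (C₂ * 1) := by
                gcongr; exact le_trans (norm_nonneg _) h3
            _ = r * C₂ := by ring
  · -- bound integrable
    exact intervalIntegrable_const
  · -- h_diff
    apply MeasureTheory.ae_of_all
    intro t ht x hx
    have ht' := huIoc ht
    have htx : (t:ℂ) * x ∈ ball (0:ℂ) δ := hKsub (hmem x hx t ht')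
    have hgd : HasDerivAt g (deriv g ((t:ℂ) * x)) ((t:ℂ) * x) :=
      (hg.differentiableAt (isOpen_ball.mem_nhds htx)).hasDerivAt
    have hlin : HasDerivAt (fun y : ℂ => (t:ℂ) * y) (t:ℂ) x := by
      simpa using (hasDerivAt_id x).const_mul (t:ℂ)
    have hcomp : HasDerivAt (fun y : ℂ => g ((t:ℂ) * y)) (deriv g ((t:ℂ) * x) * (t:ℂ)) x :=
      hgd.comp x hlin
    have := (hasDerivAt_id x).mul hcomp
    refine this.congr_deriv ?_
    simp [hF']

lemma aux_log {δ : ℝ} {φ : ℂ → ℂ} (hφ : DifferentiableOn ℂ φ (ball 0 δ))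
    (hne : ∀ z ∈ ball (0:ℂ) δ, φ z ≠ 0) (h0 : φ 0 = 1) (hδ : 0 < δ) :
    ∃ ψ : ℂ → ℂ, (∀ z ∈ ball (0:ℂ) δ, HasDerivAt ψ (deriv φ z / φ z) z) ∧ ψ 0 = 0 ∧
      ∀ z ∈ ball (0:ℂ) δ, Complex.exp (ψ z) = φ z := by
  set g : ℂ → ℂ := fun z => deriv φ z / φ z with hgdef
  have hgd : DifferentiableOn ℂ g (ball 0 δ) := by
    apply DifferentiableOn.div
    · exact ((hφ.analyticOnNhd isOpen_ball).deriv).differentiableOn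
    · exact hφ
    · exact hne
  set ψ : ℂ → ℂ := fun z => ∫ t in (0:ℝ)..1, z * g ((t:ℂ) * z) with hψdef
  have hψd : ∀ z ∈ ball (0:ℂ) δ, HasDerivAt ψ (g z) z := fun z hz => aux_prim hgd hz
  have hψ0 : ψ 0 = 0 := by simp [hψdef]
  refine ⟨ψ, hψd, hψ0, ?_⟩
  -- E = exp(-ψ) * φ is constant
  set E : ℂ → ℂ := fun z => Complex.exp (-ψ z) * φ z with hEdef
  have hEd : ∀ z ∈ ball (0:ℂ) δ, HasDerivAt E 0 z := by
    intro z hz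
    have h1 : HasDerivAt (fun w => Complex.exp (-ψ w)) (Complex.exp (-ψ z) * (-g z)) z :=
      ((hψd z hz).neg).cexp
    have h2 : HasDerivAt φ (deriv φ z) z :=
      (hφ.differentiableAt (isOpen_ball.mem_nhds hz)).hasDerivAt
    have := h1.mul h2
    refine this.congr_deriv ?_
    rw [hgdef]
    field_simp [hne z hz]
    ring
  have hEconst : ∀ z ∈ ball (0:ℂ) δ, E z = E 0 := by
    intro z hz
    apply (convex_ball (0:ℂ) δ).is_const_of_fderivWithin_eq_zero
      (fun w hw => ((hEd w hw).differentiableAt).differentiableWithinAt) ?_ hz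
      (mem_ball_self hδ)
    intro w hw
    rw [fderivWithin_of_isOpen isOpen_ball hw, (hEd w hw).hasFDerivAt.fderiv]
    ext v
    simp
  intro z hz
  have h3 := hEconst z hz
  rw [hEdef] at h3
  simp only [hψ0, neg_zero, Complex.exp_zero, one_mul, h0, mul_one] at h3
  have h4 : Complex.exp (ψ z) ≠ 0 := Complex.exp_ne_zero _
  rw [Complex.exp_neg] at h3
  field_simp at h3
  exact h3.symm


/-- Lemma 6.4: a holomorphic function from a disk to an annulus
A(Δ) = {e^{-Δ} < |ζ| < e^{Δ}} with φ(0) = 1 and φ'(0) = 0 satisfies an explicit quadratic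
estimate |φ(z) − 1| ≤ ((e^{C(α)Δ} − 1)/(α²δ₀²))·|z|² on the smaller disk |z| ≤ αδ₀. -/
theorem annulus_valued_holomorphic_estimate
    (δ₀ Δ : ℝ) (hδ₀ : 0 < δ₀) (hΔ : 0 < Δ) (φ : ℂ → ℂ)
    (hφ : ∀ z ∈ Metric.ball (0 : ℂ) δ₀, DifferentiableAt ℂ φ z)
    (hann : ∀ z ∈ Metric.ball (0 : ℂ) δ₀,
      Real.exp (-Δ) < ‖φ z‖ ∧ ‖φ z‖ < Real.exp Δ)
    (h0 : φ 0 = 1) (h1 : deriv φ 0 = 0)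
    (α : ℝ) (hα0 : 0 < α) (hα1 : α < 1) :
    ∀ z : ℂ, ‖z‖ ≤ α * δ₀ →
      ‖φ z - 1‖ ≤
        ((Real.exp (((2 / Real.pi) * Real.log ((1 + α) / (1 - α))) * Δ) - 1)
            / (α ^ 2 * δ₀ ^ 2)) * ‖z‖ ^ 2 := by
  have hπ := Real.pi_pos
  have hd : DifferentiableOn ℂ φ (ball 0 δ₀) :=
    fun z hz => (hφ z hz).differentiableWithinAt
  have hne : ∀ z ∈ ball (0:ℂ) δ₀, φ z ≠ 0 := by
    intro z hz h
    have := (hann z hz).1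
    rw [h] at this
    simp at this
    linarith [Real.exp_pos (-Δ)]
  obtain ⟨ψ, hψd, hψ0, hψexp⟩ := aux_log hd hne h0 hδ₀
  have hψdiff : DifferentiableOn ℂ ψ (ball 0 δ₀) :=
    fun z hz => ((hψd z hz).differentiableAt).differentiableWithinAt
  -- real part bound
  have hre : ∀ z ∈ ball (0:ℂ) δ₀, |(ψ z).re| < Δ := by
    intro z hz
    have habs : ‖φ z‖ = Real.exp ((ψ z).re) := by
      rw [← hψexp z hz, Complex.norm_exp]
    obtain ⟨hl, hr⟩ := hann z hz
    rw [habs] at hl hr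
    rw [abs_lt]
    constructor
    · exact Real.exp_lt_exp.1 hl
    · exact Real.exp_lt_exp.1 hr
  set a : ℂ := Complex.I * ((Real.pi / (2*Δ) : ℝ) : ℂ) with ha
  set h : ℂ → ℂ := fun z =>
    (Complex.exp (a * ψ z) - 1) / (Complex.exp (a * ψ z) + 1) with hhdef
  -- positivity of the real part of exp (a * ψ z)
  have hvre : ∀ z ∈ ball (0:ℂ) δ₀, 0 < (Complex.exp (a * ψ z)).re := by
    intro z hz
    have him : (a * ψ z).im = Real.pi / (2*Δ) * (ψ z).re := by
      simp [ha, Complex.mul_im, Complex.mul_re, ← Complex.ofReal_ofNat,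
        ← Complex.ofReal_mul, ← Complex.ofReal_div]
    have hlt : |(a * ψ z).im| < Real.pi / 2 := by
      rw [him, abs_mul, _root_.abs_of_pos (by positivity : (0:ℝ) < Real.pi / (2*Δ))]
      calc Real.pi / (2*Δ) * |(ψ z).re| < Real.pi / (2*Δ) * Δ :=
            mul_lt_mul_of_pos_left (hre z hz) (by positivity)
        _ = Real.pi / 2 := by field_simp
    rw [Complex.exp_re]
    apply mul_pos (Real.exp_pos _)
    apply Real.cos_pos_of_mem_Ioo
    rw [Set.mem_Ioo]
    constructor
    · have := (abs_lt.1 hlt).1; linarith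
    · exact (abs_lt.1 hlt).2
  have hvne : ∀ z ∈ ball (0:ℂ) δ₀, Complex.exp (a * ψ z) + 1 ≠ 0 := by
    intro z hz hcon
    have h2 : (Complex.exp (a * ψ z) + 1).re = 0 := by rw [hcon]; simp
    rw [Complex.add_re, Complex.one_re] at h2
    linarith [hvre z hz]
  have hmaps : MapsTo h (ball 0 δ₀) (ball (0:ℂ) 1) := by
    intro z hz
    rw [mem_ball_zero_iff, hhdef]
    set v := Complex.exp (a * ψ z) with hv
    have h2 : ‖v - 1‖ < ‖v + 1‖ := by
      have h3 : Complex.normSq (v - 1) < Complex.normSq (v + 1) := by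
        simp only [Complex.normSq_apply, Complex.sub_re, Complex.sub_im,
          Complex.add_re, Complex.add_im, Complex.one_re, Complex.one_im]
        nlinarith [hvre z hz]
      rw [Complex.norm_def, Complex.norm_def]
      exact Real.sqrt_lt_sqrt (Complex.normSq_nonneg _) h3
    rw [norm_div, div_lt_one (norm_pos_iff.2 (hvne z hz))]
    exact h2
  have hdiffh : DifferentiableOn ℂ h (ball 0 δ₀) := by
    apply DifferentiableOn.div
    · apply DifferentiableOn.sub _ (differentiableOn_const 1)
      exact (DifferentiableOn.cexp ((differentiableOn_const a).mul hψdiff))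
    · apply DifferentiableOn.add _ (differentiableOn_const 1)
      exact (DifferentiableOn.cexp ((differentiableOn_const a).mul hψdiff))
    · exact hvne
  have hh0 : h 0 = 0 := by
    simp [hhdef, hψ0]
  -- Schwarz I
  have hSchwarz1 : ∀ z ∈ ball (0:ℂ) δ₀, ‖h z‖ ≤ ‖z‖ / δ₀ := by
    intro z hz
    have hmaps' : MapsTo h (ball 0 δ₀) (ball (h 0) 1) := by rwa [hh0]
    have := Complex.dist_le_div_mul_dist_of_mapsTo_ball hdiffh (hmaps'.mono_right ball_subset_closedBall) hz
    rw [hh0, dist_zero_right, dist_zero_right] at this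
    calc ‖h z‖ = ‖h z‖ := rfl
      _ ≤ 1 / δ₀ * ‖z‖ := this
      _ = ‖z‖ / δ₀ := by ring
  set M : ℝ := 2 * Δ / Real.pi * Real.log ((1 + α) / (1 - α)) with hM
  have hMpos : 0 < M := by
    rw [hM]
    apply mul_pos (by positivity)
    apply Real.log_pos
    rw [lt_div_iff₀ (by linarith)]
    linarith
  -- bound ψ on smaller ball
  have hsub : ball (0:ℂ) (α * δ₀) ⊆ ball 0 δ₀ := by
    apply ball_subset_ball
    nlinarith
  have hψbound : MapsTo ψ (ball 0 (α * δ₀)) (ball (0:ℂ) M) := by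
    intro z hz
    have hz' : z ∈ ball (0:ℂ) δ₀ := hsub hz
    set u := h z with hu
    have hun : ‖u‖ < α := by
      calc ‖u‖ ≤ ‖z‖ / δ₀ := hSchwarz1 z hz'
        _ < α := by
            rw [div_lt_iff₀ hδ₀]
            exact mem_ball_zero_iff.1 hz
    have hu1 : ‖u‖ < 1 := lt_trans hun hα1
    have h1mu : (1:ℂ) - u ≠ 0 := by
      intro hcon
      have : u = 1 := by linear_combination -hcon
      rw [this] at hu1
      simp at hu1
    have heq : Complex.exp (a * ψ z) = (1 + u) / (1 - u) := by
      set v := Complex.exp (a * ψ z) with hv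
      have hv1 : v + 1 ≠ 0 := hvne z hz'
      rw [eq_div_iff h1mu]
      rw [hu, hhdef]
      simp only [← hv]
      field_simp
      ring
    have := aux_strip_inv hΔ (hre z hz') hu1 heq
    rw [mem_ball_zero_iff]
    apply lt_of_le_of_lt this
    rw [hM]
    apply mul_lt_mul_of_pos_left _ (by positivity)
    apply Real.log_lt_log
    · apply div_pos (by linarith [norm_nonneg u]) (by linarith)
    · rw [div_lt_div_iff₀ (by linarith) (by linarith)]
      nlinarith [norm_nonneg u]
  -- Schwarz II on ψ
  have hψdiff2 : DifferentiableOn ℂ ψ (ball 0 (α * δ₀)) := hψdiff.mono hsub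
  have hderiv0 : deriv ψ 0 = 0 := by
    have := (hψd 0 (mem_ball_self hδ₀)).deriv
    rw [this, h1, h0]
    simp
  have hquad : ∀ z ∈ ball (0:ℂ) (α * δ₀), ‖ψ z‖ ≤ M / (α * δ₀) ^ 2 * ‖z‖ ^ 2 :=
    fun z hz => aux_schwarz_sq hMpos hψdiff2 hψbound hψ0 hderiv0 hz
  -- main estimate on the open ball
  have hopen : ∀ z : ℂ, ‖z‖ < α * δ₀ →
      ‖φ z - 1‖ ≤
        ((Real.exp (((2 / Real.pi) * Real.log ((1 + α) / (1 - α))) * Δ) - 1)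
            / (α ^ 2 * δ₀ ^ 2)) * ‖z‖ ^ 2 := by
    intro z hzlt
    have hz : z ∈ ball (0:ℂ) (α * δ₀) := mem_ball_zero_iff.2 hzlt
    have hz' : z ∈ ball (0:ℂ) δ₀ := hsub hz
    set t : ℝ := ‖z‖ ^ 2 / (α * δ₀) ^ 2 with ht
    have ht0 : 0 ≤ t := by positivity
    have ht1 : t ≤ 1 := by
      rw [ht, div_le_one (by positivity)]
      have hh : ‖z‖ ≤ α * δ₀ := le_of_lt hzlt
      nlinarith [norm_nonneg z]
    have hψz : ‖ψ z‖ ≤ M * t := by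
      have := hquad z hz
      rw [ht]
      calc ‖ψ z‖ ≤ M / (α * δ₀) ^ 2 * ‖z‖ ^ 2 := this
        _ = M * (‖z‖ ^ 2 / (α * δ₀) ^ 2) := by ring
    have hMexp : Real.exp (((2 / Real.pi) * Real.log ((1 + α) / (1 - α))) * Δ)
        = Real.exp M := by
      congr 1
      rw [hM]; ring
    calc ‖φ z - 1‖ = ‖Complex.exp (ψ z) - 1‖ := by
          rw [hψexp z hz']
      _ ≤ Real.exp (‖ψ z‖) - 1 := aux_exp_sub_one _
      _ ≤ Real.exp (M * t) - 1 := by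
          have : ‖ψ z‖ ≤ M * t := hψz
          have := Real.exp_le_exp.2 this
          linarith
      _ = Real.exp (t * M) - 1 := by rw [mul_comm]
      _ ≤ t * (Real.exp M - 1) := aux_convex hMpos.le ht0 ht1
      _ = ((Real.exp M - 1) / (α ^ 2 * δ₀ ^ 2)) * ‖z‖ ^ 2 := by
          rw [ht]
          have : ((α * δ₀) ^ 2 : ℝ) = α ^ 2 * δ₀ ^ 2 := by ring
          rw [this]
          field_simp
      _ = ((Real.exp (((2 / Real.pi) * Real.log ((1 + α) / (1 - α))) * Δ) - 1)
            / (α ^ 2 * δ₀ ^ 2)) * ‖z‖ ^ 2 := by rw [hMexp]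
  -- extend to the closed ball by continuity
  intro z hzle
  rcases lt_or_eq_of_le hzle with hlt | heq
  · exact hopen z hlt
  · -- boundary case via limits
    have hzpos : 0 < ‖z‖ := by rw [heq]; positivity
    have hz' : z ∈ ball (0:ℂ) δ₀ := by
      rw [mem_ball_zero_iff]
      show ‖z‖ < δ₀
      calc (‖z‖ : ℝ) = α * δ₀ := heq
        _ < δ₀ := by nlinarith
    set c : ℝ := (Real.exp (((2 / Real.pi) * Real.log ((1 + α) / (1 - α))) * Δ) - 1)
        / (α ^ 2 * δ₀ ^ 2) with hc
    have hmulc : Continuous (fun s : ℝ => (s:ℂ) * z) := by continuity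
    have G1 : ContinuousAt (fun s : ℝ => ‖φ ((s:ℂ) * z) - 1‖) 1 := by
      apply continuous_norm.continuousAt.comp
      apply ContinuousAt.sub _ continuousAt_const
      apply ContinuousAt.comp _ hmulc.continuousAt
      simpa using (hφ z hz').continuousAt
    have G2 : ContinuousAt (fun s : ℝ => c * ‖(s:ℂ) * z‖ ^ 2) 1 := by
      apply ContinuousAt.mul continuousAt_const
      exact ((continuous_norm.comp hmulc).pow 2).continuousAt
    have T1 : Filter.Tendsto (fun s : ℝ => ‖φ ((s:ℂ) * z) - 1‖)
        (nhdsWithin 1 (Set.Iio (1:ℝ))) (nhds (‖φ z - 1‖)) := by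
      have := G1.tendsto.mono_left (nhdsWithin_le_nhds (s := Set.Iio (1:ℝ)))
      simpa using this
    have T2 : Filter.Tendsto (fun s : ℝ => c * ‖(s:ℂ) * z‖ ^ 2)
        (nhdsWithin 1 (Set.Iio (1:ℝ))) (nhds (c * ‖z‖ ^ 2)) := by
      have := G2.tendsto.mono_left (nhdsWithin_le_nhds (s := Set.Iio (1:ℝ)))
      simpa using this
    have hev : ∀ᶠ s : ℝ in nhdsWithin (1:ℝ) (Set.Iio (1:ℝ)),
        ‖φ ((s:ℂ) * z) - 1‖ ≤ c * ‖(s:ℂ) * z‖ ^ 2 := by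
      filter_upwards [Ioo_mem_nhdsLT_of_mem
        (show (1:ℝ) ∈ Set.Ioc 0 1 from ⟨zero_lt_one, le_rfl⟩)] with s hs
      apply hopen
      rw [norm_mul]
      have h5 : ‖((s:ℝ):ℂ)‖ = s := by
        rw [Complex.norm_real, Real.norm_eq_abs, _root_.abs_of_pos hs.1]
      rw [h5, heq]
      calc s * (α * δ₀) < 1 * (α * δ₀) :=
            mul_lt_mul_of_pos_right hs.2 (by positivity)
        _ = α * δ₀ := one_mul _
    exact le_of_tendsto_of_tendsto T1 T2 hev
end

section
/- For every real x with 0 < x < π/2 and every y ∈ ℝ, cos(x)·cosh(√(x² + y²)) ≤ cosh(y). Equivalently, cos(x)·cosh(|x + i·y|) ≤ cosh(y), where |x + i·y| is the modulus of the complex number x + i·y. -/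
open Real Set

-- sinh u ≤ u cosh u for u ≥ 0
lemma aux_sinh_le (u : ℝ) (hu : 0 ≤ u) : Real.sinh u ≤ u * Real.cosh u := by
  have h : MonotoneOn (fun u : ℝ => u * Real.cosh u - Real.sinh u) (Ici 0) := by
    apply monotoneOn_of_deriv_nonneg (convex_Ici 0)
    · fun_prop
    · fun_prop
    · intro t ht
      rw [interior_Ici, mem_Ioi] at ht
      have : deriv (fun u : ℝ => u * Real.cosh u - Real.sinh u) t = t * Real.sinh t := by
        rw [deriv_fun_sub (by fun_prop) (by fun_prop), Real.deriv_sinh,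
          deriv_fun_mul (by fun_prop) (by fun_prop), Real.deriv_cosh]
        simp [mul_comm]
      rw [this]
      exact mul_nonneg ht.le (Real.sinh_nonneg_iff.2 ht.le)
  have := h (self_mem_Ici) (mem_Ici.2 hu) hu
  simp at this
  linarith

-- sinh u / u monotone on (0, ∞)
lemma aux_mono : MonotoneOn (fun u : ℝ => Real.sinh u / u) (Ioi 0) := by
  apply monotoneOn_of_deriv_nonneg (convex_Ioi 0)
  · exact ContinuousOn.div (by fun_prop) (by fun_prop) (fun t ht => ne_of_gt ht)
  · rw [interior_Ioi]
    intro t ht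
    exact (((Real.differentiable_sinh t).div (differentiableAt_fun_id) (ne_of_gt ht))).differentiableWithinAt
  · rw [interior_Ioi]
    intro t ht
    rw [deriv_fun_div (by fun_prop) (by fun_prop) (ne_of_gt ht), Real.deriv_sinh]
    simp only [deriv_id'']
    have := aux_sinh_le t ht.le
    have ht' : (0:ℝ) < t := ht
    have h2 : (0:ℝ) < t ^ 2 := by positivity
    apply div_nonneg _ h2.le
    nlinarith [Real.cosh_pos t]

-- convexity of t ↦ cosh √t on [0, ∞)
lemma aux_convex_s16 : ConvexOn ℝ (Ici 0) (fun t : ℝ => Real.cosh (Real.sqrt t)) := by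
  apply MonotoneOn.convexOn_of_deriv (convex_Ici 0)
  · fun_prop
  · rw [interior_Ici]
    intro t ht
    have h1 := Real.hasDerivAt_sqrt (ne_of_gt ht)
    have h2 := (Real.hasDerivAt_cosh (Real.sqrt t)).comp t h1
    exact h2.differentiableAt.differentiableWithinAt
  · rw [interior_Ici]
    have hderiv : ∀ t ∈ Ioi (0:ℝ), deriv (fun t : ℝ => Real.cosh (Real.sqrt t)) t
        = Real.sinh (Real.sqrt t) / (2 * Real.sqrt t) := by
      intro t ht
      have h1 := Real.hasDerivAt_sqrt (ne_of_gt (mem_Ioi.1 ht))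
      have h2 := (Real.hasDerivAt_cosh (Real.sqrt t)).comp t h1
      rw [show (fun t : ℝ => Real.cosh (Real.sqrt t)) = Real.cosh ∘ Real.sqrt from rfl, h2.deriv]
      ring
    intro a ha b hb hab
    rw [hderiv a ha, hderiv b hb]
    have hsa : 0 < Real.sqrt a := Real.sqrt_pos.2 (mem_Ioi.1 ha)
    have hsb : 0 < Real.sqrt b := Real.sqrt_pos.2 (mem_Ioi.1 hb)
    have := aux_mono (mem_Ioi.2 hsa) (mem_Ioi.2 hsb) (Real.sqrt_le_sqrt hab)
    simp only at this
    rw [div_le_div_iff₀ (by positivity) (by positivity)] at this ⊢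
    nlinarith

lemma aux_cosh_sqrt_le (a b : ℝ) :
    Real.cosh (Real.sqrt (a ^ 2 + b ^ 2)) ≤ Real.cosh a * Real.cosh b := by
  have key := aux_convex_s16.2 (mem_Ici.2 (sq_nonneg (a + b))) (mem_Ici.2 (sq_nonneg (a - b)))
    (by norm_num : (0:ℝ) ≤ 1/2) (by norm_num : (0:ℝ) ≤ 1/2) (by norm_num)
  simp only [smul_eq_mul] at key
  have e1 : 1/2 * (a+b)^2 + 1/2 * (a-b)^2 = a^2 + b^2 := by ring
  rw [e1] at key
  rw [Real.sqrt_sq_eq_abs, Real.sqrt_sq_eq_abs, Real.cosh_abs, Real.cosh_abs,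
    Real.cosh_add, Real.cosh_sub] at key
  linarith

lemma aux_cos_cosh_le (x : ℝ) (h0 : 0 ≤ x) (h2 : x ≤ Real.pi / 2) :
    Real.cos x * Real.cosh x ≤ 1 := by
  have h : AntitoneOn (fun x : ℝ => Real.cos x * Real.cosh x) (Icc 0 (Real.pi / 2)) := by
    apply antitoneOn_of_deriv_nonpos (convex_Icc _ _)
    · fun_prop
    · fun_prop
    · intro t ht
      rw [interior_Icc, mem_Ioo] at ht
      rw [deriv_fun_mul (by fun_prop) (by fun_prop), Real.deriv_cos, Real.deriv_cosh]
      have hcos : 0 < Real.cos t := Real.cos_pos_of_mem_Ioo ⟨by linarith [Real.pi_pos], ht.2⟩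
      have htan := Real.lt_tan ht.1 ht.2
      rw [Real.tan_eq_sin_div_cos, lt_div_iff₀ hcos] at htan
      have hs := aux_sinh_le t ht.1.le
      nlinarith [Real.cosh_pos t, Real.sinh_nonneg_iff.2 ht.1.le]
  have := h (mem_Icc.2 ⟨le_refl 0, by linarith [Real.pi_pos]⟩) (mem_Icc.2 ⟨h0, h2⟩) h0
  simpa using this

/-- for 0 < x < π/2 and y real,
cos(x)·cosh(√(x²+y²)) ≤ cosh(y); equivalently cos(x)·cosh(|x+iy|) ≤ cosh(y). -/
theorem cos_mul_cosh_norm_le_cosh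
    (x y : ℝ) (hx0 : 0 < x) (hx : x < Real.pi / 2) :
    Real.cos x * Real.cosh (Real.sqrt (x ^ 2 + y ^ 2)) ≤ Real.cosh y ∧
    Real.cos x * Real.cosh (‖(x : ℂ) + (y : ℂ) * Complex.I‖) ≤ Real.cosh y := by
  have h1 : Real.cos x * Real.cosh (Real.sqrt (x ^ 2 + y ^ 2)) ≤ Real.cosh y := by
    have hcos : 0 < Real.cos x := Real.cos_pos_of_mem_Ioo ⟨by linarith [Real.pi_pos], hx⟩
    calc Real.cos x * Real.cosh (Real.sqrt (x ^ 2 + y ^ 2))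
        ≤ Real.cos x * (Real.cosh x * Real.cosh y) := by
          exact mul_le_mul_of_nonneg_left (aux_cosh_sqrt_le x y) hcos.le
      _ = (Real.cos x * Real.cosh x) * Real.cosh y := by ring
      _ ≤ 1 * Real.cosh y := by
          exact mul_le_mul_of_nonneg_right (aux_cos_cosh_le x hx0.le hx.le) (Real.cosh_pos y).le
      _ = Real.cosh y := one_mul _
  refine ⟨h1, ?_⟩
  rwa [Complex.norm_add_mul_I]
end
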